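/- arXiv:2412.12787 — 4 statements merged into one kernel-verified Lean document; each statement's English description precedes it below -/
import Mathlib

section
/- Let b ≥ 2 and r ≥ 1 be integers, and let T = AF(b,r) be the almost fork graph with leaves as boundary. Then the Steklov eigenvalues of T are σ_1 = 0, σ_2 = b/(b(r+1)−1), and σ_k = 1/r for all 3 ≤ k ≤ b. -/
open scoped BigOperators
open Classical

/-- The Dirichlet energy of a function on a finite graph: `∑_{edges xy} (f x - f y)^2`. -/
noncomputable def dirichletEnergy {V : Type*} [Fintype V] (G : SimpleGraph V) (f : V → ℝ) : ℝ :=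
  (∑ x : V, ∑ y : V, if G.Adj x y then (f x - f y) ^ 2 else 0) / 2

/-- The `k`-th Steklov (Dirichlet-to-Neumann) eigenvalue (1-indexed, in increasing order
with multiplicity) of a finite graph `G` with boundary `B`, via the variational
(Courant–Fischer) characterization. -/
noncomputable def steklovEig {V : Type*} [Fintype V] (G : SimpleGraph V) (B : Finset V)
    (k : ℕ) : ℝ :=
  sInf { t : ℝ | ∃ F : Submodule ℝ (V → ℝ),
    Module.finrank ℝ (F.map (LinearMap.funLeft ℝ ℝ (fun x : {v // v ∈ B} => (x : V)))) = k ∧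
    ∀ f ∈ F, dirichletEnergy G f ≤ t * ∑ x ∈ B, (f x) ^ 2 }

/-- The set of leaves (vertices of degree 1) of a finite graph, as a `Finset`. -/
noncomputable def leavesFinset {V : Type*} [Fintype V] (G : SimpleGraph V) : Finset V :=
  Finset.univ.filter fun v => G.degree v = 1

/-- `σ_{k,max}(b,n)`: the maximum of the `k`-th Steklov eigenvalue over all trees with
`b` leaves (as boundary) and `n` vertices. -/
noncomputable def sigmaMax (k b n : ℕ) : ℝ :=
  sSup { s : ℝ | ∃ G : SimpleGraph (Fin n), G.IsTree ∧ (leavesFinset G).card = b ∧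
    s = steklovEig G (leavesFinset G) k }

/-- `σ̃_{2,max}(D,n)`: the maximum of the first nontrivial Steklov eigenvalue over all
trees with diameter `D` and `n` vertices. -/
noncomputable def sigmaTildeMax (D n : ℕ) : ℝ :=
  sSup { s : ℝ | ∃ G : SimpleGraph (Fin n), G.IsTree ∧ G.diam = D ∧
    s = steklovEig G (leavesFinset G) 2 }

/-- The almost fork graph `AF(b,r)`: `b` paths glued at a common endpoint (`Sum.inr false`),
one of length `r+1` (path `0`, with extra tip `Sum.inr true`) and `b-1` of length `r`.
Vertex `Sum.inl (ℓ, i)` is the vertex of the `ℓ`-th path at distance `i+1` from the center. -/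
def almostFork (b r : ℕ) : SimpleGraph ((Fin b × Fin r) ⊕ Bool) :=
  SimpleGraph.fromRel fun x y =>
    match x, y with
    | Sum.inr false, Sum.inl (_, i) => (i : ℕ) = 0
    | Sum.inl (ℓ, i), Sum.inl (m, j) => ℓ = m ∧ (j : ℕ) = (i : ℕ) + 1
    | Sum.inl (ℓ, i), Sum.inr true => (ℓ : ℕ) = 0 ∧ (i : ℕ) = r - 1
    | _, _ => False

open Sum

-- base relation
def afR (b r : ℕ) : ((Fin b × Fin r) ⊕ Bool) → ((Fin b × Fin r) ⊕ Bool) → Prop := fun x y =>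
  match x, y with
  | Sum.inr false, Sum.inl (_, i) => (i : ℕ) = 0
  | Sum.inl (ℓ, i), Sum.inl (m, j) => ℓ = m ∧ (j : ℕ) = (i : ℕ) + 1
  | Sum.inl (ℓ, i), Sum.inr true => (ℓ : ℕ) = 0 ∧ (i : ℕ) = r - 1
  | _, _ => False

lemma almostFork_eq (b r : ℕ) : almostFork b r = SimpleGraph.fromRel (afR b r) := rfl

lemma afR_ne {b r : ℕ} {x y : (Fin b × Fin r) ⊕ Bool} (h : afR b r x y) : x ≠ y := by
  rcases x with ⟨ℓ, i⟩ | bx <;> rcases y with ⟨m, j⟩ | by_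
  · intro he
    obtain ⟨h1, h2⟩ := h
    rw [Sum.inl.injEq, Prod.mk.injEq] at he
    have : (j : ℕ) = (i : ℕ) := by rw [he.2]
    omega
  · cases by_ <;> simp [afR] at h ⊢
  · simp
  · cases bx <;> cases by_ <;> simp [afR] at h ⊢

lemma afR_asymm {b r : ℕ} {x y : (Fin b × Fin r) ⊕ Bool} (h : afR b r x y) : ¬ afR b r y x := by
  rcases x with ⟨ℓ, i⟩ | bx <;> rcases y with ⟨m, j⟩ | by_
  · intro h2; exact absurd (h.2.trans (by rw [h2.2])) (by omega)
  · cases by_ <;> simp [afR] at h ⊢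
  · rcases bx <;> simp [afR] at h ⊢
  · cases bx <;> cases by_ <;> simp [afR] at h ⊢

lemma adj_iff {b r : ℕ} {x y : (Fin b × Fin r) ⊕ Bool} :
    (almostFork b r).Adj x y ↔ (afR b r x y ∨ afR b r y x) := by
  rw [almostFork_eq, SimpleGraph.fromRel_adj]
  constructor
  · exact fun h => h.2
  · intro h; refine ⟨?_, h⟩
    rcases h with h | h
    · exact afR_ne h
    · exact (afR_ne h).symm

-- symmetrization: sum over ordered pairs of an asymmetric relation
lemma dirichlet_asym {V : Type*} [Fintype V] (G : SimpleGraph V) (R : V → V → Prop)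
    (hiff : ∀ x y, G.Adj x y ↔ (R x y ∨ R y x)) (hasym : ∀ x y, R x y → ¬ R y x)
    (f : V → ℝ) :
    dirichletEnergy G f = ∑ x : V, ∑ y : V, if R x y then (f x - f y) ^ 2 else 0 := by
  unfold dirichletEnergy
  have key : ∀ x y : V, (if G.Adj x y then (f x - f y) ^ 2 else 0)
      = (if R x y then (f x - f y) ^ 2 else 0) + (if R y x then (f x - f y) ^ 2 else 0) := by
    intro x y
    by_cases h1 : R x y
    · rw [if_pos h1, if_pos ((hiff x y).2 (Or.inl h1)), if_neg (hasym x y h1), add_zero]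
    · by_cases h2 : R y x
      · rw [if_pos ((hiff x y).2 (Or.inr h2)), if_neg h1, if_pos h2, zero_add]
      · rw [if_neg, if_neg h1, if_neg h2, add_zero]
        rw [hiff]; tauto
  simp only [key, Finset.sum_add_distrib]
  have swap : ∑ x : V, ∑ y : V, (if R y x then (f x - f y) ^ 2 else 0)
      = ∑ x : V, ∑ y : V, (if R x y then (f x - f y) ^ 2 else 0) := by
    rw [Finset.sum_comm]
    congr 1; ext x; congr 1; ext y
    congr 1; ring
  rw [swap]; ring

lemma afR_inl_inr_true {b r : ℕ} (ℓ : Fin b) (i : Fin r) :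
    afR b r (Sum.inl (ℓ,i)) (Sum.inr true) = ((ℓ:ℕ) = 0 ∧ (i:ℕ) = r-1) := rfl

lemma afR_inl_inl {b r : ℕ} (ℓ m : Fin b) (i j : Fin r) :
    afR b r (Sum.inl (ℓ,i)) (Sum.inl (m,j)) = (ℓ = m ∧ (j:ℕ) = (i:ℕ)+1) := rfl

noncomputable def pE (b r : ℕ) (hr : 0 < r) (f : (Fin b × Fin r) ⊕ Bool → ℝ) (ℓ : Fin b) : ℝ :=
  (f (inl (ℓ, ⟨0, hr⟩)) - f (inr false))^2
  + ∑ i : Fin r, (if h : (i:ℕ)+1 < r then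
      (f (inl (ℓ, ⟨(i:ℕ)+1, h⟩)) - f (inl (ℓ, i)))^2 else 0)
  + (if (ℓ:ℕ) = 0 then (f (inr true) - f (inl (ℓ, ⟨r-1, by omega⟩)))^2 else 0)

lemma energy_eq (b r : ℕ) (hr : 0 < r) (f : (Fin b × Fin r) ⊕ Bool → ℝ) :
    dirichletEnergy (almostFork b r) f = ∑ ℓ : Fin b, pE b r hr f ℓ := by
  have flip : ∀ u v : ℝ, (u - v)^2 = (v - u)^2 := fun u v => by ring
  rw [dirichlet_asym (almostFork b r) (afR b r) (fun x y => adj_iff)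
      (fun x y => afR_asymm) f]
  rw [Fintype.sum_sum_type]
  -- the Bool part
  have hbool : ∑ x : Bool, ∑ y : (Fin b × Fin r) ⊕ Bool,
      (if afR b r (inr x) y then (f (inr x) - f y) ^ 2 else 0)
      = ∑ m : Fin b, (f (inl (m, ⟨0, hr⟩)) - f (inr false))^2 := by
    rw [Fintype.sum_bool]
    have htrue : ∑ y : (Fin b × Fin r) ⊕ Bool,
        (if afR b r (inr true) y then (f (inr true) - f y) ^ 2 else 0) = 0 := by
      apply Finset.sum_eq_zero
      intro y _
      rcases y with ⟨m, j⟩ | c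
      · simp [afR]
      · cases c <;> simp [afR]
    have hfalse : ∑ y : (Fin b × Fin r) ⊕ Bool,
        (if afR b r (inr false) y then (f (inr false) - f y) ^ 2 else 0)
        = ∑ m : Fin b, (f (inl (m, ⟨0, hr⟩)) - f (inr false))^2 := by
      rw [Fintype.sum_sum_type]
      have h2 : ∑ x : Bool, (if afR b r (inr false) (inr x) then (f (inr false) - f (inr x)) ^ 2 else 0) = 0 := by
        rw [Fintype.sum_bool]; simp [afR]
      rw [h2, add_zero, Fintype.sum_prod_type]
      apply Finset.sum_congr rfl
      intro m _
      have : ∀ j : Fin r, (if afR b r (inr false) (inl (m, j)) then (f (inr false) - f (inl (m,j))) ^ 2 else 0)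
          = (if j = (⟨0, hr⟩ : Fin r) then (f (inr false) - f (inl (m,j))) ^ 2 else 0) := by
        intro j
        apply if_congr _ rfl rfl
        show ((j:ℕ) = 0) ↔ _
        rw [Fin.ext_iff]
      simp only [this]
      rw [Finset.sum_ite_eq' Finset.univ (⟨0,hr⟩ : Fin r)
        (fun j => (f (inr false) - f (inl (m,j))) ^ 2)]
      simp [flip]
    rw [htrue, hfalse, zero_add]
  rw [hbool, Fintype.sum_prod_type]
  -- the path part
  have hpath : ∀ (ℓ : Fin b) (i : Fin r), ∑ y : (Fin b × Fin r) ⊕ Bool,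
      (if afR b r (inl (ℓ, i)) y then (f (inl (ℓ,i)) - f y) ^ 2 else 0)
      = (if h : (i:ℕ)+1 < r then (f (inl (ℓ, ⟨(i:ℕ)+1, h⟩)) - f (inl (ℓ, i)))^2 else 0)
        + (if (ℓ:ℕ) = 0 ∧ (i:ℕ) = r - 1 then (f (inr true) - f (inl (ℓ, i)))^2 else 0) := by
    intro ℓ i
    rw [Fintype.sum_sum_type, Fintype.sum_bool]
    have hb2 : (if afR b r (inl (ℓ,i)) (inr true) then (f (inl (ℓ,i)) - f (inr true)) ^ 2 else 0)
        + (if afR b r (inl (ℓ,i)) (inr false) then (f (inl (ℓ,i)) - f (inr false)) ^ 2 else 0)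
        = (if (ℓ:ℕ) = 0 ∧ (i:ℕ) = r - 1 then (f (inr true) - f (inl (ℓ, i)))^2 else 0) := by
      have h0 : (if afR b r (inl (ℓ,i)) (inr false) then (f (inl (ℓ,i)) - f (inr false)) ^ 2 else 0) = 0 := by
        simp [afR]
      rw [h0, add_zero]
      rw [afR_inl_inr_true]
      by_cases hc : (ℓ:ℕ) = 0 ∧ (i:ℕ) = r - 1
      · rw [if_pos hc, if_pos hc, flip]
      · rw [if_neg hc, if_neg hc]
    rw [hb2]
    congr 1
    by_cases h : (i:ℕ)+1 < r
    · rw [dif_pos h]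
      have key : ∀ (q : Fin b × Fin r),
          (if afR b r (inl (ℓ,i)) (inl q) then (f (inl (ℓ,i)) - f (inl q)) ^ 2 else 0)
          = (if q = (ℓ, (⟨(i:ℕ)+1, h⟩ : Fin r)) then (f (inl (ℓ,i)) - f (inl q)) ^ 2 else 0) := by
        rintro ⟨m, j⟩
        rw [afR_inl_inl]
        by_cases hc : ℓ = m ∧ (j:ℕ) = (i:ℕ)+1
        · rw [if_pos hc, if_pos]
          rw [Prod.ext_iff]
          exact ⟨hc.1.symm, Fin.ext hc.2⟩
        · rw [if_neg hc, if_neg]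
          rw [Prod.ext_iff]
          rintro ⟨h1, h2⟩
          exact hc ⟨h1.symm, congrArg Fin.val h2⟩
      simp only [key]
      rw [Finset.sum_ite_eq' Finset.univ ((ℓ, (⟨(i:ℕ)+1, h⟩ : Fin r)) : Fin b × Fin r)
          (fun q => (f (inl (ℓ,i)) - f (inl q)) ^ 2)]
      simp [flip]
    · rw [dif_neg h]
      apply Finset.sum_eq_zero
      rintro ⟨m, j⟩ _
      rw [if_neg]
      show ¬ (ℓ = m ∧ (j:ℕ) = (i:ℕ)+1)
      rintro ⟨-, h2⟩
      exact h (h2 ▸ j.isLt)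
  have : ∀ ℓ : Fin b, ∑ i : Fin r, ∑ y : (Fin b × Fin r) ⊕ Bool,
      (if afR b r (inl (ℓ, i)) y then (f (inl (ℓ,i)) - f y) ^ 2 else 0)
      = (∑ i : Fin r, (if h : (i:ℕ)+1 < r then
          (f (inl (ℓ, ⟨(i:ℕ)+1, h⟩)) - f (inl (ℓ, i)))^2 else 0))
        + (if (ℓ:ℕ) = 0 then (f (inr true) - f (inl (ℓ, ⟨r-1, by omega⟩)))^2 else 0) := by
    intro ℓ
    simp only [hpath]
    rw [Finset.sum_add_distrib]
    congr 1
    have key : ∀ i : Fin r, (if (ℓ:ℕ) = 0 ∧ (i:ℕ) = r - 1 then (f (inr true) - f (inl (ℓ, i)))^2 else 0)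
        = (if i = (⟨r-1, by omega⟩ : Fin r) then (if (ℓ:ℕ) = 0 then (f (inr true) - f (inl (ℓ, i)))^2 else 0) else 0) := by
      intro i
      by_cases hi : i = (⟨r-1, by omega⟩ : Fin r)
      · rw [if_pos hi]
        apply if_congr _ rfl rfl
        have : (i:ℕ) = r - 1 := by rw [hi]
        tauto
      · rw [if_neg hi, if_neg]
        rintro ⟨-, h2⟩
        exact hi (Fin.ext h2)
    simp only [key]
    rw [Finset.sum_ite_eq' Finset.univ (⟨r-1, by omega⟩ : Fin r)]
    simp
  simp only [this]
  unfold pE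
  simp only [Finset.sum_add_distrib]
  ring

noncomputable def pv (b r : ℕ) (f : (Fin b × Fin r) ⊕ Bool → ℝ) (ℓ : Fin b) : ℕ → ℝ :=
  fun n => if n = 0 then f (inr false) else if h : n - 1 < r then f (inl (ℓ, ⟨n-1, h⟩)) else f (inr true)

lemma pE_eq_pv (hr : 0 < r) (f : (Fin b × Fin r) ⊕ Bool → ℝ) (ℓ : Fin b) :
    pE b r hr f ℓ = (∑ i ∈ Finset.range r, (pv b r f ℓ (i+1) - pv b r f ℓ i)^2)
      + (if (ℓ:ℕ) = 0 then (pv b r f ℓ (r+1) - pv b r f ℓ r)^2 else 0) := by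
  obtain ⟨r', rfl⟩ : ∃ r'', r = r'' + 1 := ⟨r - 1, by omega⟩
  unfold pE
  congr 1
  · -- diffs sum
    rw [Finset.sum_range_succ']
    have hsum : (∑ i : Fin (r'+1), (if h : (i:ℕ)+1 < r'+1 then
          (f (inl (ℓ, ⟨(i:ℕ)+1, h⟩)) - f (inl (ℓ, i)))^2 else 0))
        = ∑ n ∈ Finset.range (r'+1), (fun n : ℕ => if n+1 < r'+1 then
            (pv b (r'+1) f ℓ (n+2) - pv b (r'+1) f ℓ (n+1))^2 else 0) n := by
      rw [← Fin.sum_univ_eq_sum_range]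
      apply Finset.sum_congr rfl
      intro i _
      show _ = if (i:ℕ)+1 < r'+1 then
            (pv b (r'+1) f ℓ ((i:ℕ)+2) - pv b (r'+1) f ℓ ((i:ℕ)+1))^2 else 0
      by_cases h : (i:ℕ)+1 < r'+1
      · rw [dif_pos h, if_pos h]
        unfold pv
        rw [if_neg (by omega), if_neg (by omega), dif_pos (show (i:ℕ)+2-1 < r'+1 by omega),
          dif_pos (show (i:ℕ)+1-1 < r'+1 by omega)]
        simp
      · rw [dif_neg h, if_neg h]
    rw [hsum]
    simp only []
    rw [Finset.sum_range_succ, if_neg (by omega), add_zero, add_comm]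
    congr 1
    · apply Finset.sum_congr rfl
      intro n hn
      have hn' : n < r' := Finset.mem_range.1 hn
      rw [if_pos (by omega)]
  · by_cases hz : (ℓ:ℕ) = 0
    · rw [if_pos hz, if_pos hz]
      unfold pv
      rw [if_neg (by omega), if_neg (by omega),
        dif_neg (by omega), dif_pos (show r'+1-1 < r'+1 by omega)]
    · rw [if_neg hz, if_neg hz]

lemma telescope_sq (g : ℕ → ℝ) (n : ℕ) :
    (g n - g 0)^2 ≤ n * ∑ i ∈ Finset.range n, (g (i+1) - g i)^2 := by
  have h1 : g n - g 0 = ∑ i ∈ Finset.range n, (g (i+1) - g i) := (Finset.sum_range_sub g n).symm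
  rw [h1]
  have := Finset.sum_mul_sq_le_sq_mul_sq (Finset.range n) (fun i => g (i+1) - g i) (fun _ => 1)
  simp only [mul_one, one_pow, Finset.sum_const, Finset.card_range, nsmul_eq_mul] at this
  calc (∑ i ∈ Finset.range n, (g (i+1) - g i))^2
      ≤ (∑ i ∈ Finset.range n, (g (i+1) - g i)^2) * n := this
    _ = n * ∑ i ∈ Finset.range n, (g (i+1) - g i)^2 := by ring

lemma pE_nonneg (hr : 0 < r) (f : (Fin b × Fin r) ⊕ Bool → ℝ) (ℓ : Fin b) :
    0 ≤ pE b r hr f ℓ := by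
  unfold pE
  have : (0:ℝ) ≤ ∑ i : Fin r, (if h : (i:ℕ)+1 < r then
      (f (inl (ℓ, ⟨(i:ℕ)+1, h⟩)) - f (inl (ℓ, i)))^2 else 0) := by
    apply Finset.sum_nonneg; intro i _
    by_cases h : (i:ℕ)+1 < r
    · rw [dif_pos h]; positivity
    · rw [dif_neg h]
  by_cases hz : (ℓ:ℕ) = 0
  · rw [if_pos hz]; positivity
  · rw [if_neg hz]; rw [add_zero]; positivity

lemma pE_lower_short (hr : 0 < r) (f : (Fin b × Fin r) ⊕ Bool → ℝ) (ℓ : Fin b)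
    (hℓ : (ℓ:ℕ) ≠ 0) :
    (f (inl (ℓ, ⟨r-1, by omega⟩)) - f (inr false))^2 ≤ r * pE b r hr f ℓ := by
  rw [pE_eq_pv hr f ℓ, if_neg hℓ, add_zero]
  have := telescope_sq (pv b r f ℓ) r
  have e0 : pv b r f ℓ 0 = f (inr false) := by unfold pv; rw [if_pos rfl]
  have er : pv b r f ℓ r = f (inl (ℓ, ⟨r-1, by omega⟩)) := by
    unfold pv; rw [if_neg (by omega), dif_pos (by omega)]
  rw [e0, er] at this
  exact this

lemma pE_lower_long (hr : 0 < r) (f : (Fin b × Fin r) ⊕ Bool → ℝ) (ℓ : Fin b)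
    (hℓ : (ℓ:ℕ) = 0) :
    (f (inr true) - f (inr false))^2 ≤ (r+1) * pE b r hr f ℓ := by
  rw [pE_eq_pv hr f ℓ, if_pos hℓ]
  have h2 : (∑ i ∈ Finset.range r, (pv b r f ℓ (i+1) - pv b r f ℓ i)^2)
      + (pv b r f ℓ (r+1) - pv b r f ℓ r)^2
      = ∑ i ∈ Finset.range (r+1), (pv b r f ℓ (i+1) - pv b r f ℓ i)^2 := by
    rw [Finset.sum_range_succ]
  rw [h2]
  have := telescope_sq (pv b r f ℓ) (r+1)
  have e0 : pv b r f ℓ 0 = f (inr false) := by unfold pv; rw [if_pos rfl]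
  have er : pv b r f ℓ (r+1) = f (inr true) := by
    unfold pv; rw [if_neg (by omega), dif_neg (by omega)]
  rw [e0, er] at this
  calc (f (inr true) - f (inr false))^2
      ≤ (↑(r+1)) * ∑ i ∈ Finset.range (r+1), (pv b r f ℓ (i+1) - pv b r f ℓ i)^2 := this
    _ = ((r:ℝ)+1) * ∑ i ∈ Finset.range (r+1), (pv b r f ℓ (i+1) - pv b r f ℓ i)^2 := by
        push_cast; ring

section
variable {b r : ℕ}

lemma deg_one_of_single {V : Type*} [Fintype V] (G : SimpleGraph V) (v u : V)
    (h : ∀ w, G.Adj v w ↔ w = u) : G.degree v = 1 := by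
  have : G.neighborFinset v = {u} := by
    ext w
    rw [SimpleGraph.mem_neighborFinset, Finset.mem_singleton, h]
  rw [← SimpleGraph.card_neighborFinset_eq_degree, this, Finset.card_singleton]

lemma deg_ne_one_of_two {V : Type*} [Fintype V] (G : SimpleGraph V) (v u w : V)
    (h1 : G.Adj v u) (h2 : G.Adj v w) (hne : u ≠ w) : G.degree v ≠ 1 := by
  have : 1 < (G.neighborFinset v).card := by
    rw [Finset.one_lt_card]
    exact ⟨u, by rwa [SimpleGraph.mem_neighborFinset], w, by rwa [SimpleGraph.mem_neighborFinset], hne⟩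
  rw [← SimpleGraph.card_neighborFinset_eq_degree]
  omega

lemma mem_leaves_iff (hb : 2 ≤ b) (hr : 0 < r) (v : (Fin b × Fin r) ⊕ Bool) :
    v ∈ leavesFinset (almostFork b r) ↔
      (v = inr true ∨ ∃ ℓ : Fin b, (ℓ:ℕ) ≠ 0 ∧ v = inl (ℓ, ⟨r-1, by omega⟩)) := by
  have hb0 : 0 < b := by omega
  rw [leavesFinset, Finset.mem_filter]
  simp only [Finset.mem_univ, true_and]
  constructor
  · intro hdeg
    rcases v with ⟨ℓ, i⟩ | c
    · -- must be a short-path leaf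
      right
      -- show ℓ ≠ 0 ∧ i = r-1; otherwise two neighbors
      by_cases hi : (i:ℕ) = r - 1
      · by_cases hℓ : (ℓ:ℕ) = 0
        · exfalso
          -- adjacent to tip and prev
          have hadj1 : (almostFork b r).Adj (inl (ℓ,i)) (inr true) := by
            rw [adj_iff]; left; exact ⟨hℓ, hi⟩
          by_cases hi0 : (i:ℕ) = 0
          · have hadj2 : (almostFork b r).Adj (inl (ℓ,i)) (inr false) := by
              rw [adj_iff]; right; exact hi0
            exact deg_ne_one_of_two _ _ _ _ hadj1 hadj2 (by simp) hdeg
          · have hadj2 : (almostFork b r).Adj (inl (ℓ,i)) (inl (ℓ, ⟨(i:ℕ)-1, by omega⟩)) := by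
              rw [adj_iff]; right; exact ⟨rfl, show (i:ℕ) = (i:ℕ)-1+1 by omega⟩
            exact deg_ne_one_of_two _ _ _ _ hadj1 hadj2 (by simp) hdeg
        · exact ⟨ℓ, hℓ, by rw [Sum.inl.injEq, Prod.mk.injEq]; exact ⟨rfl, Fin.ext hi⟩⟩
      · exfalso
        have hir : (i:ℕ)+1 < r := by have := i.isLt; omega
        have hadj1 : (almostFork b r).Adj (inl (ℓ,i)) (inl (ℓ, ⟨(i:ℕ)+1, hir⟩)) := by
          rw [adj_iff]; left; exact ⟨rfl, rfl⟩
        by_cases hi0 : (i:ℕ) = 0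
        · have hadj2 : (almostFork b r).Adj (inl (ℓ,i)) (inr false) := by
            rw [adj_iff]; right; exact hi0
          exact deg_ne_one_of_two _ _ _ _ hadj1 hadj2 (by simp) hdeg
        · have hadj2 : (almostFork b r).Adj (inl (ℓ,i)) (inl (ℓ, ⟨(i:ℕ)-1, by omega⟩)) := by
            rw [adj_iff]; right; exact ⟨rfl, show (i:ℕ) = (i:ℕ)-1+1 by omega⟩
          exact deg_ne_one_of_two _ _ _ _ hadj1 hadj2
            (by intro he
                injection he with he1
                rw [Prod.mk.injEq] at he1
                have h5 : (i:ℕ)+1 = (i:ℕ)-1 := congrArg Fin.val he1.2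
                omega) hdeg
    · rcases c with _ | _
      · -- inr false : center, degree b ≥ 2
        exfalso
        have hadj1 : (almostFork b r).Adj (inr false) (inl (⟨0, hb0⟩, ⟨0, hr⟩)) := by
          rw [adj_iff]; left; exact rfl
        have hadj2 : (almostFork b r).Adj (inr false) (inl (⟨1, by omega⟩, ⟨0, hr⟩)) := by
          rw [adj_iff]; left; exact rfl
        exact deg_ne_one_of_two _ _ _ _ hadj1 hadj2
          (by rw [Ne, Sum.inl.injEq, Prod.mk.injEq, Fin.ext_iff]; simp) hdeg
      · left; rfl
  · intro h
    rcases h with rfl | ⟨ℓ, hℓ, rfl⟩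
    · -- tip has unique neighbor inl (0, r-1)
      apply deg_one_of_single _ _ (inl ((⟨0, hb0⟩ : Fin b), (⟨r-1, by omega⟩ : Fin r)))
      intro w
      rw [adj_iff]
      constructor
      · rintro (h | h)
        · rcases w with ⟨m, j⟩ | c
          · exact absurd h (by simp [afR])
          · rcases c <;> exact absurd h (by simp [afR])
        · rcases w with ⟨m, j⟩ | c
          · obtain ⟨h1, h2⟩ := h
            rw [Sum.inl.injEq, Prod.mk.injEq]
            exact ⟨Fin.ext h1, Fin.ext h2⟩
          · rcases c <;> exact absurd h (by simp [afR])
      · rintro rfl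
        right; exact ⟨rfl, rfl⟩
    · -- short leaf
      by_cases hi0 : r = 1
      · apply deg_one_of_single _ _ (inr false)
        intro w
        rw [adj_iff]
        constructor
        · rintro (h | h)
          · rcases w with ⟨m, j⟩ | c
            · obtain ⟨h1, h2⟩ := h
              exact absurd h2 (by have := j.isLt; omega)
            · rcases c
              · exact absurd h (by simp [afR])
              · exact absurd h.1 (by simpa using hℓ)
          · rcases w with ⟨m, j⟩ | c
            · obtain ⟨h1, h2⟩ := h
              omega
            · rcases c
              · rfl
              · exact absurd h (by simp [afR])
        · rintro rfl
          right
          show (r:ℕ) - 1 = 0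
          omega
      · apply deg_one_of_single _ _ (inl (ℓ, (⟨r-2, by omega⟩ : Fin r)))
        intro w
        rw [adj_iff]
        constructor
        · rintro (h | h)
          · rcases w with ⟨m, j⟩ | c
            · obtain ⟨h1, h2⟩ := h
              have h2' : (j:ℕ) = r - 1 + 1 := h2
              exact absurd h2' (by have := j.isLt; omega)
            · rcases c
              · exact absurd h (by simp [afR])
              · exact absurd h.1 (by simpa using hℓ)
          · rcases w with ⟨m, j⟩ | c
            · obtain ⟨h1, h2⟩ := h
              have h2' : r - 1 = (j:ℕ) + 1 := h2
              rw [Sum.inl.injEq, Prod.mk.injEq]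
              refine ⟨h1, Fin.ext ?_⟩
              show (j:ℕ) = r - 2
              omega
            · rcases c
              · exact absurd (show r - 1 = 0 from h) (by omega)
              · exact absurd h (by simp [afR])
        · rintro rfl
          right
          exact ⟨rfl, show r-1 = r-2+1 by omega⟩
  done
end

section
variable (b r : ℕ)

-- the short-leaf index set
def Blf (b : ℕ) : Finset (Fin b) := Finset.univ.filter (fun ℓ : Fin b => (ℓ:ℕ) ≠ 0)

lemma Blf_card (hb : 2 ≤ b) : (Blf b).card = b - 1 := by
  have hb0 : 0 < b := by omega
  have : Blf b = Finset.univ.erase ⟨0, hb0⟩ := by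
    ext ℓ
    rw [Blf, Finset.mem_filter, Finset.mem_erase]
    simp only [Finset.mem_univ, true_and, and_true]
    rw [Ne, Ne, Fin.ext_iff]
  rw [this, Finset.card_erase_of_mem (Finset.mem_univ _), Finset.card_univ, Fintype.card_fin]

lemma energy_split (hb : 2 ≤ b) (hr : 0 < r) (f : (Fin b × Fin r) ⊕ Bool → ℝ) :
    dirichletEnergy (almostFork b r) f
      = (∑ ℓ ∈ Blf b, pE b r hr f ℓ) + pE b r hr f ⟨0, by omega⟩ := by
  rw [energy_eq b r hr f]
  rw [← Finset.sum_filter_add_sum_filter_not Finset.univ (fun ℓ : Fin b => (ℓ:ℕ) ≠ 0)]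
  congr 1
  have h : Finset.univ.filter (fun ℓ : Fin b => ¬ (ℓ:ℕ) ≠ 0) = {(⟨0, by omega⟩ : Fin b)} := by
    ext ℓ
    rw [Finset.mem_filter, Finset.mem_singleton]
    simp only [Finset.mem_univ, true_and, not_not]
    rw [Fin.ext_iff]
  rw [h, Finset.sum_singleton]

lemma sum_sq_shift (hb : 2 ≤ b) (y : Fin b → ℝ) (c : ℝ) :
    ∑ ℓ ∈ Blf b, (y ℓ - c)^2
      = (∑ ℓ ∈ Blf b, (y ℓ)^2) - 2*c*(∑ ℓ ∈ Blf b, y ℓ) + ((b:ℝ)-1)*c^2 := by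
  have h1 : ∀ ℓ ∈ Blf b, (y ℓ - c)^2 = (y ℓ)^2 - 2*c*(y ℓ) + c^2 := by
    intro ℓ _; ring
  rw [Finset.sum_congr rfl h1]
  rw [Finset.sum_add_distrib, Finset.sum_sub_distrib, ← Finset.mul_sum, Finset.sum_const,
    Blf_card b hb, nsmul_eq_mul]
  rw [Nat.cast_sub (by omega)]
  norm_num

lemma sum_CS (hb : 2 ≤ b) (y : Fin b → ℝ) :
    (∑ ℓ ∈ Blf b, y ℓ)^2 ≤ ((b:ℝ)-1) * ∑ ℓ ∈ Blf b, (y ℓ)^2 := by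
  have h := Finset.sum_mul_sq_le_sq_mul_sq (Blf b) y (fun _ => 1)
  simp only [mul_one, one_pow, Finset.sum_const, Blf_card b hb, nsmul_eq_mul] at h
  calc (∑ ℓ ∈ Blf b, y ℓ)^2 ≤ (∑ ℓ ∈ Blf b, (y ℓ)^2) * ((b-1 : ℕ):ℝ) := h
    _ = ((b:ℝ)-1) * ∑ ℓ ∈ Blf b, (y ℓ)^2 := by
        rw [Nat.cast_sub (by omega)]; push_cast; ring

lemma energy_lower (hb : 2 ≤ b) (hr : 0 < r) (f : (Fin b × Fin r) ⊕ Bool → ℝ) :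
    ((r:ℝ)+1) * (∑ ℓ ∈ Blf b, (f (inl (ℓ, ⟨r-1, by omega⟩)) - f (inr false))^2)
      + (r:ℝ) * (f (inr true) - f (inr false))^2
    ≤ (r:ℝ)*((r:ℝ)+1) * dirichletEnergy (almostFork b r) f := by
  rw [energy_split b r hb hr f]
  have hr1 : (0:ℝ) < (r:ℝ) := by exact_mod_cast hr
  have hshort : ∀ ℓ ∈ Blf b, ((r:ℝ)+1) * (f (inl (ℓ, ⟨r-1, by omega⟩)) - f (inr false))^2
      ≤ ((r:ℝ)*((r:ℝ)+1)) * pE b r hr f ℓ := by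
    intro ℓ hm
    have hℓ : (ℓ:ℕ) ≠ 0 := (Finset.mem_filter.1 hm).2
    have h := pE_lower_short hr f ℓ hℓ
    nlinarith [pE_nonneg hr f ℓ]
  have hsum := Finset.sum_le_sum hshort
  rw [← Finset.mul_sum, ← Finset.mul_sum] at hsum
  have hlong := pE_lower_long hr f (⟨0, by omega⟩ : Fin b) rfl
  have hlong2 : (r:ℝ) * (f (inr true) - f (inr false))^2
      ≤ ((r:ℝ)*((r:ℝ)+1)) * pE b r hr f ⟨0, by omega⟩ := by
    nlinarith [pE_nonneg hr f (⟨0, by omega⟩ : Fin b)]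
  ring_nf
  ring_nf at hsum hlong2
  linarith

lemma H2ineq (hb : 2 ≤ b) (hr : 0 < r) (f : (Fin b × Fin r) ⊕ Bool → ℝ)
    (hz : f (inr true) + ∑ ℓ ∈ Blf b, f (inl (ℓ, ⟨r-1, by omega⟩)) = 0) :
    (b:ℝ)/((b:ℝ)*((r:ℝ)+1)-1)
      * ((f (inr true))^2 + ∑ ℓ ∈ Blf b, (f (inl (ℓ, ⟨r-1, by omega⟩)))^2)
    ≤ dirichletEnergy (almostFork b r) f := by
  have hr1 : (0:ℝ) < (r:ℝ) := by exact_mod_cast hr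
  have hb2 : (2:ℝ) ≤ (b:ℝ) := by exact_mod_cast hb
  have hB : (0:ℝ) < (b:ℝ)*((r:ℝ)+1)-1 := by nlinarith
  set c := f (inr false) with hc
  set y0 := f (inr true) with hy0
  set S := ∑ ℓ ∈ Blf b, f (inl (ℓ, ⟨r-1, by omega⟩)) with hSdef
  set Q := ∑ ℓ ∈ Blf b, (f (inl (ℓ, ⟨r-1, by omega⟩)))^2 with hQdef
  set D := dirichletEnergy (almostFork b r) f with hD
  have hE := energy_lower b r hb hr f
  rw [sum_sq_shift b hb (fun ℓ => f (inl (ℓ, ⟨r-1, by omega⟩))) c] at hE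
  have hCS := sum_CS b hb (fun ℓ => f (inl (ℓ, ⟨r-1, by omega⟩)))
  simp only [← hSdef, ← hQdef, ← hy0, ← hc, ← hD] at hE hCS
  have hyS : y0 = -S := by linarith
  have hy2 : y0^2 = S^2 := by rw [hyS]; ring
  have hsq : (y0 - c)^2 = (S + c)^2 := by rw [hyS]; ring
  rw [div_mul_eq_mul_div, div_le_iff₀ hB, hy2]
  have hrr : (0:ℝ) < (r:ℝ)*((r:ℝ)+1) := by positivity
  rw [hsq] at hE
  have h1 := mul_le_mul_of_nonneg_left hE hB.le
  have h2 := sq_nonneg (S - ((b:ℝ)*((r:ℝ)+1)-1)*c)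
  have h3 := mul_nonneg (show (0:ℝ) ≤ (r:ℝ)+1 by positivity) (sub_nonneg.2 hCS)
  have key : ((b:ℝ) * (S^2 + Q)) * ((r:ℝ)*((r:ℝ)+1)) ≤ (D * ((b:ℝ)*((r:ℝ)+1)-1)) * ((r:ℝ)*((r:ℝ)+1)) := by
    nlinarith [h1, h2, h3]
  exact le_of_mul_le_mul_right key hrr

lemma H3ineq (hb : 2 ≤ b) (hr : 0 < r) (f : (Fin b × Fin r) ⊕ Bool → ℝ)
    (h0 : f (inr true) = 0)
    (hS : ∑ ℓ ∈ Blf b, f (inl (ℓ, ⟨r-1, by omega⟩)) = 0) :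
    1/(r:ℝ) * ((f (inr true))^2 + ∑ ℓ ∈ Blf b, (f (inl (ℓ, ⟨r-1, by omega⟩)))^2)
    ≤ dirichletEnergy (almostFork b r) f := by
  have hr1 : (0:ℝ) < (r:ℝ) := by exact_mod_cast hr
  have hb2 : (2:ℝ) ≤ (b:ℝ) := by exact_mod_cast hb
  set c := f (inr false) with hc
  set Q := ∑ ℓ ∈ Blf b, (f (inl (ℓ, ⟨r-1, by omega⟩)))^2 with hQdef
  set D := dirichletEnergy (almostFork b r) f with hD
  have hE := energy_lower b r hb hr f
  rw [sum_sq_shift b hb (fun ℓ => f (inl (ℓ, ⟨r-1, by omega⟩))) c, hS] at hE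
  simp only [← hQdef, ← hc, ← hD, h0] at hE
  have hr2 : (0:ℝ) < (r:ℝ)+1 := by positivity
  have hQr : Q ≤ (r:ℝ) * D := by
    nlinarith [hE, hr2, mul_nonneg (mul_nonneg hr2.le (show (0:ℝ) ≤ (b:ℝ)-1 by linarith)) (sq_nonneg c),
      mul_nonneg hr1.le (sq_nonneg c)]
  rw [h0]
  have heq : 1/(r:ℝ) * ((0:ℝ)^2 + Q) = Q * (1/(r:ℝ)) := by ring
  rw [heq, mul_one_div, div_le_iff₀ hr1]
  linarith
end

lemma sum_leaves {b r : ℕ} (hb : 2 ≤ b) (hr : 0 < r) (h : (Fin b × Fin r) ⊕ Bool → ℝ) :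
    ∑ x ∈ leavesFinset (almostFork b r), h x
      = h (inr true) + ∑ ℓ ∈ Blf b, h (inl (ℓ, ⟨r-1, by omega⟩)) := by
  have hset : leavesFinset (almostFork b r)
      = insert (inr true) ((Blf b).image (fun ℓ => inl (ℓ, (⟨r-1, by omega⟩ : Fin r)))) := by
    ext v
    rw [mem_leaves_iff hb hr, Finset.mem_insert, Finset.mem_image]
    constructor
    · rintro (rfl | ⟨ℓ, hℓ, rfl⟩)
      · left; rfl
      · right; exact ⟨ℓ, Finset.mem_filter.2 ⟨Finset.mem_univ _, hℓ⟩, rfl⟩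
    · rintro (rfl | ⟨ℓ, hℓ, rfl⟩)
      · left; rfl
      · right; exact ⟨ℓ, (Finset.mem_filter.1 hℓ).2, rfl⟩
  rw [hset, Finset.sum_insert, Finset.sum_image]
  · intro x _ y _ hxy
    injection hxy with h1
    exact (Prod.ext_iff.1 h1).1
  · rw [Finset.mem_image]
    rintro ⟨ℓ, _, h⟩
    exact absurd h (by simp)

noncomputable def Breal (b r : ℕ) : ℝ := (b:ℝ)*((r:ℝ)+1)-1

noncomputable def phiF (b r : ℕ) : (Fin b × Fin r) ⊕ Bool → ℝ
  | inl (ℓ, i) => if (ℓ:ℕ) = 0 then ((b:ℝ)-1) - (b:ℝ)*((b:ℝ)-1)*((i:ℕ)+1)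
                  else ((b:ℝ)-1) + (b:ℝ)*((i:ℕ)+1)
  | inr false => (b:ℝ)-1
  | inr true => -(((b:ℝ)-1) * Breal b r)

noncomputable def chiF (b r : ℕ) (m : ℕ) : (Fin b × Fin r) ⊕ Bool → ℝ
  | inl (ℓ, i) => if (ℓ:ℕ) = m then ((i:ℕ):ℝ)+1 else 0
  | inr _ => 0

noncomputable def gfun (b r : ℕ) : ℕ → ((Fin b × Fin r) ⊕ Bool → ℝ)
  | 0 => fun _ => 1
  | 1 => phiF b r
  | (j+2) => fun v => chiF b r (j+1) v - chiF b r (j+2) v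

noncomputable def uu (b : ℕ) {k : ℕ} (cc : Fin k → ℝ) (ℓ : Fin b) : ℝ :=
  ∑ j : Fin k, cc j * ((if (ℓ:ℕ) = (j:ℕ)-1 ∧ 2 ≤ (j:ℕ) then (1:ℝ) else 0)
    - (if (ℓ:ℕ) = (j:ℕ) ∧ 2 ≤ (j:ℕ) then (1:ℝ) else 0))

section
variable (b r k' : ℕ)

lemma uu_split (cc : Fin (k'+2) → ℝ) (ℓ : Fin b) :
    uu b cc ℓ = ∑ j : Fin k', cc j.succ.succ *
      ((if (ℓ:ℕ) = (j:ℕ)+1 then (1:ℝ) else 0) - (if (ℓ:ℕ) = (j:ℕ)+2 then (1:ℝ) else 0)) := by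
  rw [uu, Fin.sum_univ_succ, Fin.sum_univ_succ]
  have e0 : ((0 : Fin (k'+2)) : ℕ) = 0 := rfl
  have e1 : (((0 : Fin (k'+1)).succ : Fin (k'+2)) : ℕ) = 1 := rfl
  rw [e0, e1]
  norm_num

lemma fval_ctr (cc : Fin (k'+2) → ℝ) :
    (∑ j : Fin (k'+2), cc j * gfun b r (j:ℕ) (inr false))
      = cc 0 + cc 1 * ((b:ℝ)-1) := by
  rw [Fin.sum_univ_succ, Fin.sum_univ_succ]
  have h2 : ∑ j : Fin k', cc j.succ.succ * gfun b r ((j.succ.succ : Fin (k'+2)) : ℕ) (inr false) = 0 := by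
    apply Finset.sum_eq_zero
    intro j _
    have e2 : ((j.succ.succ : Fin (k'+2)) : ℕ) = (j:ℕ)+2 := rfl
    rw [e2]
    show cc j.succ.succ * (chiF b r ((j:ℕ)+1) (inr false) - chiF b r ((j:ℕ)+2) (inr false)) = 0
    show cc j.succ.succ * ((0:ℝ) - 0) = 0
    ring
  rw [h2]
  show cc 0 * (1:ℝ) + (cc 1 * phiF b r (inr false) + 0) = _
  show cc 0 * (1:ℝ) + (cc 1 * ((b:ℝ)-1) + 0) = _
  ring

lemma fval_tip (cc : Fin (k'+2) → ℝ) :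
    (∑ j : Fin (k'+2), cc j * gfun b r (j:ℕ) (inr true))
      = cc 0 - cc 1 * (((b:ℝ)-1) * Breal b r) := by
  rw [Fin.sum_univ_succ, Fin.sum_univ_succ]
  have h2 : ∑ j : Fin k', cc j.succ.succ * gfun b r ((j.succ.succ : Fin (k'+2)) : ℕ) (inr true) = 0 := by
    apply Finset.sum_eq_zero
    intro j _
    have e2 : ((j.succ.succ : Fin (k'+2)) : ℕ) = (j:ℕ)+2 := rfl
    rw [e2]
    show cc j.succ.succ * (chiF b r ((j:ℕ)+1) (inr true) - chiF b r ((j:ℕ)+2) (inr true)) = 0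
    show cc j.succ.succ * ((0:ℝ) - 0) = 0
    ring
  rw [h2]
  show cc 0 * (1:ℝ) + (cc 1 * phiF b r (inr true) + 0) = _
  show cc 0 * (1:ℝ) + (cc 1 * (-(((b:ℝ)-1) * Breal b r)) + 0) = _
  ring

lemma fval_inl (cc : Fin (k'+2) → ℝ) (ℓ : Fin b) (i : Fin r) :
    (∑ j : Fin (k'+2), cc j * gfun b r (j:ℕ) (inl (ℓ, i)))
      = cc 0 + cc 1 * phiF b r (inl (ℓ, i)) + uu b cc ℓ * (((i:ℕ):ℝ)+1) := by
  rw [Fin.sum_univ_succ, Fin.sum_univ_succ, uu_split]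
  rw [Finset.sum_mul]
  have h2 : ∀ j : Fin k', cc j.succ.succ * gfun b r ((j.succ.succ : Fin (k'+2)) : ℕ) (inl (ℓ,i))
      = cc j.succ.succ * ((if (ℓ:ℕ) = (j:ℕ)+1 then (1:ℝ) else 0)
          - (if (ℓ:ℕ) = (j:ℕ)+2 then (1:ℝ) else 0)) * (((i:ℕ):ℝ)+1) := by
    intro j
    have e2 : ((j.succ.succ : Fin (k'+2)) : ℕ) = (j:ℕ)+2 := rfl
    rw [e2]
    show cc j.succ.succ * (chiF b r ((j:ℕ)+1) (inl (ℓ,i)) - chiF b r ((j:ℕ)+2) (inl (ℓ,i))) = _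
    show cc j.succ.succ * ((if (ℓ:ℕ) = (j:ℕ)+1 then ((i:ℕ):ℝ)+1 else 0)
      - (if (ℓ:ℕ) = (j:ℕ)+2 then ((i:ℕ):ℝ)+1 else 0)) = _
    by_cases hA : (ℓ:ℕ) = (j:ℕ)+1 <;> by_cases hB : (ℓ:ℕ) = (j:ℕ)+2 <;>
      simp [hA, hB] <;> ring
  rw [Finset.sum_congr rfl (fun j _ => h2 j)]
  show cc 0 * (1:ℝ) + (cc 1 * phiF b r (inl (ℓ,i)) + _) = _
  ring

-- row sums of the indicator matrix vanish
lemma ind_sum_one (hb : 2 ≤ b) (m : ℕ) (h1 : 1 ≤ m) (h2 : m < b) :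
    ∑ ℓ ∈ Blf b, (if (ℓ:ℕ) = m then (1:ℝ) else 0) = 1 := by
  have key : ∀ ℓ ∈ Blf b, (if (ℓ:ℕ) = m then (1:ℝ) else 0)
      = (if ℓ = (⟨m, h2⟩ : Fin b) then (1:ℝ) else 0) := by
    intro ℓ _
    apply if_congr _ rfl rfl
    rw [Fin.ext_iff]
  rw [Finset.sum_congr rfl key, Finset.sum_ite_eq' (Blf b) (⟨m, h2⟩ : Fin b) (fun _ => (1:ℝ))]
  rw [if_pos]
  rw [Blf, Finset.mem_filter]
  exact ⟨Finset.mem_univ _, show m ≠ 0 by omega⟩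

lemma uu_sumzero (hb : 2 ≤ b) (hk : k'+2 ≤ b) (cc : Fin (k'+2) → ℝ) :
    ∑ ℓ ∈ Blf b, uu b cc ℓ = 0 := by
  have : ∀ ℓ ∈ Blf b, uu b cc ℓ = ∑ j : Fin k', cc j.succ.succ *
      ((if (ℓ:ℕ) = (j:ℕ)+1 then (1:ℝ) else 0) - (if (ℓ:ℕ) = (j:ℕ)+2 then (1:ℝ) else 0)) :=
    fun ℓ _ => uu_split b k' cc ℓ
  rw [Finset.sum_congr rfl this, Finset.sum_comm]
  apply Finset.sum_eq_zero
  intro j _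
  have hj := j.isLt
  rw [← Finset.mul_sum, Finset.sum_sub_distrib]
  rw [ind_sum_one b hb ((j:ℕ)+1) (by omega) (by omega),
    ind_sum_one b hb ((j:ℕ)+2) (by omega) (by omega)]
  ring

lemma uu_zero_left (cc : Fin (k'+2) → ℝ) (ℓ : Fin b) (hℓ : (ℓ:ℕ) = 0) :
    uu b cc ℓ = 0 := by
  rw [uu_split]
  apply Finset.sum_eq_zero
  intro j _
  rw [if_neg (by omega), if_neg (by omega)]
  ring

-- exact value of pE for a function linear along path ℓ
lemma pE_linear (hr : 0 < r) (f : (Fin b × Fin r) ⊕ Bool → ℝ) (ℓ : Fin b) (A M : ℝ)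
    (hc : f (inr false) = A)
    (hv : ∀ i : Fin r, f (inl (ℓ, i)) = A + M*(((i:ℕ):ℝ)+1))
    (htip : (ℓ:ℕ) = 0 → f (inr true) = A + M*((r:ℝ)+1)) :
    pE b r hr f ℓ = ((r:ℝ) + (if (ℓ:ℕ) = 0 then 1 else 0)) * M^2 := by
  unfold pE
  have t1 : (f (inl (ℓ, ⟨0, hr⟩)) - f (inr false))^2 = M^2 := by
    rw [hc, hv ⟨0, hr⟩]
    norm_num
  have t2 : (∑ i : Fin r, (if h : (i:ℕ)+1 < r then
      (f (inl (ℓ, ⟨(i:ℕ)+1, h⟩)) - f (inl (ℓ, i)))^2 else 0)) = ((r:ℝ)-1) * M^2 := by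
    have key : ∀ i : Fin r, (if h : (i:ℕ)+1 < r then
        (f (inl (ℓ, ⟨(i:ℕ)+1, h⟩)) - f (inl (ℓ, i)))^2 else 0)
        = (if (i:ℕ)+1 < r then M^2 else 0) := by
      intro i
      by_cases h : (i:ℕ)+1 < r
      · rw [dif_pos h, if_pos h, hv ⟨(i:ℕ)+1, h⟩, hv i]
        have e : (((⟨(i:ℕ)+1, h⟩ : Fin r) : ℕ) : ℝ) = ((i:ℕ):ℝ)+1 := by
          show (((i:ℕ)+1 : ℕ) : ℝ) = ((i:ℕ):ℝ)+1
          push_cast; ring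
        rw [e]
        ring
      · rw [dif_neg h, if_neg h]
    rw [Finset.sum_congr rfl (fun i _ => key i)]
    rw [← Finset.sum_filter, Finset.sum_const]
    have hcard : (Finset.univ.filter (fun i : Fin r => (i:ℕ)+1 < r)).card = r - 1 := by
      have : Finset.univ.filter (fun i : Fin r => (i:ℕ)+1 < r)
          = Finset.univ.erase (⟨r-1, by omega⟩ : Fin r) := by
        ext i
        rw [Finset.mem_filter, Finset.mem_erase]
        simp only [Finset.mem_univ, true_and, and_true]
        rw [Ne, Fin.ext_iff]
        have := i.isLt
        show _ ↔ ¬ ((i:ℕ) = r - 1)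
        omega
      rw [this, Finset.card_erase_of_mem (Finset.mem_univ _), Finset.card_univ, Fintype.card_fin]
    rw [hcard, nsmul_eq_mul, Nat.cast_sub (by omega)]
    norm_num
  have t3 : (if (ℓ:ℕ) = 0 then (f (inr true) - f (inl (ℓ, ⟨r-1, by omega⟩)))^2 else 0)
      = (if (ℓ:ℕ) = 0 then 1 else 0) * M^2 := by
    by_cases hz : (ℓ:ℕ) = 0
    · rw [if_pos hz, if_pos hz, htip hz, hv ⟨r-1, by omega⟩, one_mul]
      have : ((((⟨r-1, by omega⟩ : Fin r)):ℕ):ℝ) = (r:ℝ) - 1 := by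
        show (((r-1 : ℕ)):ℝ) = (r:ℝ) - 1
        rw [Nat.cast_sub (by omega)]
        norm_num
      rw [this]
      ring
    · rw [if_neg hz, if_neg hz, zero_mul]
  rw [t1, t2, t3]
  ring

lemma phiF_short (ℓ : Fin b) (i : Fin r) (hℓ : (ℓ:ℕ) ≠ 0) :
    phiF b r (inl (ℓ, i)) = ((b:ℝ)-1) + (b:ℝ)*(((i:ℕ):ℝ)+1) := by
  show (if (ℓ:ℕ) = 0 then ((b:ℝ)-1) - (b:ℝ)*((b:ℝ)-1)*(((i:ℕ):ℝ)+1)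
    else ((b:ℝ)-1) + (b:ℝ)*(((i:ℕ):ℝ)+1)) = _
  rw [if_neg hℓ]

lemma phiF_long (ℓ : Fin b) (i : Fin r) (hℓ : (ℓ:ℕ) = 0) :
    phiF b r (inl (ℓ, i)) = ((b:ℝ)-1) - (b:ℝ)*((b:ℝ)-1)*(((i:ℕ):ℝ)+1) := by
  show (if (ℓ:ℕ) = 0 then ((b:ℝ)-1) - (b:ℝ)*((b:ℝ)-1)*(((i:ℕ):ℝ)+1)
    else ((b:ℝ)-1) + (b:ℝ)*(((i:ℕ):ℝ)+1)) = _
  rw [if_pos hℓ]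

lemma Dval (hb : 2 ≤ b) (hr : 0 < r) (hk : k'+2 ≤ b) (cc : Fin (k'+2) → ℝ) :
    dirichletEnergy (almostFork b r) (fun v => ∑ j : Fin (k'+2), cc j * gfun b r (j:ℕ) v)
      = ((r:ℝ)+1) * ((b:ℝ)*((b:ℝ)-1)*cc 1)^2
        + (r:ℝ) * (((b:ℝ)-1)*((b:ℝ)*cc 1)^2 + ∑ ℓ ∈ Blf b, (uu b cc ℓ)^2) := by
  set f : (Fin b × Fin r) ⊕ Bool → ℝ := fun v => ∑ j : Fin (k'+2), cc j * gfun b r (j:ℕ) v with hf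
  have hc : f (inr false) = cc 0 + cc 1 * ((b:ℝ)-1) := fval_ctr b r k' cc
  rw [energy_split b r hb hr]
  have hlong : pE b r hr f ⟨0, by omega⟩
      = ((r:ℝ)+1) * (-((b:ℝ)*((b:ℝ)-1)*cc 1))^2 := by
    have h := pE_linear b r hr f ⟨0, by omega⟩ (cc 0 + cc 1 * ((b:ℝ)-1))
        (-((b:ℝ)*((b:ℝ)-1)*cc 1)) hc ?_ ?_
    · rw [h, if_pos rfl]
    · intro i
      rw [hf]
      show (∑ j : Fin (k'+2), cc j * gfun b r (j:ℕ) (inl (⟨0, by omega⟩, i))) = _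
      rw [fval_inl, phiF_long b r _ i rfl, uu_zero_left b k' cc _ rfl]
      ring
    · intro _
      rw [hf]
      show (∑ j : Fin (k'+2), cc j * gfun b r (j:ℕ) (inr true)) = _
      rw [fval_tip, Breal]
      ring
  have hshort : ∀ ℓ ∈ Blf b, pE b r hr f ℓ = (r:ℝ) * ((b:ℝ)*cc 1 + uu b cc ℓ)^2 := by
    intro ℓ hm
    have hℓ : (ℓ:ℕ) ≠ 0 := (Finset.mem_filter.1 hm).2
    have h := pE_linear b r hr f ℓ (cc 0 + cc 1 * ((b:ℝ)-1))
        ((b:ℝ)*cc 1 + uu b cc ℓ) hc ?_ ?_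
    · rw [h, if_neg hℓ, add_zero]
    · intro i
      rw [hf]
      show (∑ j : Fin (k'+2), cc j * gfun b r (j:ℕ) (inl (ℓ, i))) = _
      rw [fval_inl, phiF_short b r ℓ i hℓ]
      ring
    · intro hz; exact absurd hz hℓ
  rw [Finset.sum_congr rfl hshort, hlong, ← Finset.mul_sum]
  have hexp : ∑ ℓ ∈ Blf b, ((b:ℝ)*cc 1 + uu b cc ℓ)^2
      = (∑ ℓ ∈ Blf b, (uu b cc ℓ)^2) + ((b:ℝ)-1)*((b:ℝ)*cc 1)^2 := by
    have h1 : ∀ ℓ ∈ Blf b, ((b:ℝ)*cc 1 + uu b cc ℓ)^2 = (uu b cc ℓ - (-((b:ℝ)*cc 1)))^2 := by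
      intro ℓ _; ring
    rw [Finset.sum_congr rfl h1, sum_sq_shift b hb (fun ℓ => uu b cc ℓ) (-((b:ℝ)*cc 1)),
      uu_sumzero b k' hb hk cc]
    ring
  rw [hexp]
  ring

lemma Bval2 (hb : 2 ≤ b) (hr : 0 < r) (hk : k'+2 ≤ b) (cc : Fin (k'+2) → ℝ) :
    ∑ x ∈ leavesFinset (almostFork b r), ((∑ j : Fin (k'+2), cc j * gfun b r (j:ℕ) x))^2
      = (b:ℝ)*(cc 0)^2 + (b:ℝ)*((b:ℝ)-1)*(Breal b r)^2*(cc 1)^2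
        + (r:ℝ)^2 * ∑ ℓ ∈ Blf b, (uu b cc ℓ)^2 := by
  rw [sum_leaves hb hr (fun x => ((∑ j : Fin (k'+2), cc j * gfun b r (j:ℕ) x))^2)]
  have htip : ((∑ j : Fin (k'+2), cc j * gfun b r (j:ℕ) (inr true)))^2
      = (cc 0 - cc 1 * (((b:ℝ)-1) * Breal b r))^2 := by rw [fval_tip]
  have hleaf : ∀ ℓ ∈ Blf b, ((∑ j : Fin (k'+2), cc j * gfun b r (j:ℕ) (inl (ℓ, ⟨r-1, by omega⟩))))^2
      = ((r:ℝ) * uu b cc ℓ - (-(cc 0 + Breal b r * cc 1)))^2 := by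
    intro ℓ hm
    have hℓ : (ℓ:ℕ) ≠ 0 := (Finset.mem_filter.1 hm).2
    rw [fval_inl, phiF_short b r ℓ _ hℓ]
    have e : ((((⟨r-1, by omega⟩ : Fin r)):ℕ):ℝ) = (r:ℝ) - 1 := by
      show (((r-1 : ℕ)):ℝ) = (r:ℝ) - 1
      rw [Nat.cast_sub (by omega)]
      norm_num
    rw [e, Breal]
    ring
  rw [htip, Finset.sum_congr rfl hleaf,
    sum_sq_shift b hb (fun ℓ => (r:ℝ) * uu b cc ℓ) (-(cc 0 + Breal b r * cc 1)),
    ← Finset.mul_sum, uu_sumzero b k' hb hk cc]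
  have hsq : ∀ ℓ ∈ Blf b, ((fun ℓ => (r:ℝ) * uu b cc ℓ) ℓ)^2 = (r:ℝ)^2 * (uu b cc ℓ)^2 := by
    intro ℓ _; ring
  rw [Finset.sum_congr rfl hsq, ← Finset.mul_sum, Breal]
  ring

lemma rayleigh_k (hb : 2 ≤ b) (hr : 0 < r) (hk : k'+2 ≤ b) (cc : Fin (k'+2) → ℝ) :
    dirichletEnergy (almostFork b r) (fun v => ∑ j : Fin (k'+2), cc j * gfun b r (j:ℕ) v)
      ≤ (1/(r:ℝ)) * ∑ x ∈ leavesFinset (almostFork b r),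
          ((∑ j : Fin (k'+2), cc j * gfun b r (j:ℕ) x))^2 := by
  have hr1 : (0:ℝ) < (r:ℝ) := by exact_mod_cast hr
  have hb2 : (2:ℝ) ≤ (b:ℝ) := by exact_mod_cast hb
  have hB : (0:ℝ) < Breal b r := by rw [Breal]; nlinarith
  rw [Dval b r k' hb hr hk cc, Bval2 b r k' hb hr hk cc]
  rw [div_mul_eq_mul_div, le_div_iff₀ hr1, one_mul]
  set U := ∑ ℓ ∈ Blf b, (uu b cc ℓ)^2 with hU
  have h1 : (0:ℝ) ≤ (b:ℝ)*(cc 0)^2 := by positivity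
  have h2 : (0:ℝ) ≤ (b:ℝ)*((b:ℝ)-1)^2*(Breal b r)*(cc 1)^2 :=
    mul_nonneg (mul_nonneg (mul_nonneg (by linarith : (0:ℝ) ≤ (b:ℝ))
      (sq_nonneg ((b:ℝ)-1))) hB.le) (sq_nonneg (cc 1))
  rw [Breal] at h2 ⊢
  nlinarith [h1, h2]

lemma uu_k2 (cc : Fin 2 → ℝ) (ℓ : Fin b) : uu b cc ℓ = 0 := by
  have h := uu_split b 0 cc ℓ
  simpa using h

lemma rayleigh_2 (hb : 2 ≤ b) (hr : 0 < r) (cc : Fin 2 → ℝ) :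
    dirichletEnergy (almostFork b r) (fun v => ∑ j : Fin 2, cc j * gfun b r (j:ℕ) v)
      ≤ ((b:ℝ)/((b:ℝ)*((r:ℝ)+1)-1)) * ∑ x ∈ leavesFinset (almostFork b r),
          ((∑ j : Fin 2, cc j * gfun b r (j:ℕ) x))^2 := by
  have hr1 : (0:ℝ) < (r:ℝ) := by exact_mod_cast hr
  have hb2 : (2:ℝ) ≤ (b:ℝ) := by exact_mod_cast hb
  have hB : (0:ℝ) < (b:ℝ)*((r:ℝ)+1)-1 := by nlinarith
  have hU : ∑ ℓ ∈ Blf b, (uu b (cc : Fin (0+2) → ℝ) ℓ)^2 = 0 := by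
    apply Finset.sum_eq_zero
    intro ℓ _
    rw [uu_k2 b cc ℓ]
    norm_num
  have hD := Dval b r 0 hb hr (by omega) cc
  have hX := Bval2 b r 0 hb hr (by omega) cc
  rw [hU] at hD hX
  rw [hD, hX]
  rw [div_mul_eq_mul_div, le_div_iff₀ hB]
  rw [Breal]
  nlinarith [sq_nonneg (cc 0), sq_nonneg (cc 1)]

lemma eval_ind {k : ℕ} (cc : Fin k → ℝ) (n : ℕ) :
    ∑ j : Fin k, cc j * (if (j:ℕ) = n then (1:ℝ) else 0) = if h : n < k then cc ⟨n, h⟩ else 0 := by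
  by_cases h : n < k
  · rw [dif_pos h]
    have key : ∀ j : Fin k, cc j * (if (j:ℕ) = n then (1:ℝ) else 0)
        = if j = (⟨n,h⟩ : Fin k) then cc j else 0 := by
      intro j
      by_cases hj : (j:ℕ) = n
      · rw [if_pos hj, if_pos (Fin.ext hj), mul_one]
      · rw [if_neg hj, if_neg (fun e => hj (by rw [e])), mul_zero]
    rw [Finset.sum_congr rfl (fun j _ => key j),
      Finset.sum_ite_eq' Finset.univ (⟨n,h⟩ : Fin k) cc, if_pos (Finset.mem_univ _)]
  · rw [dif_neg h]
    apply Finset.sum_eq_zero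
    intro j _
    rw [if_neg (by have := j.isLt; omega), mul_zero]

lemma uu_eval (cc : Fin (k'+2) → ℝ) (ℓ : Fin b) (h1 : 1 ≤ (ℓ:ℕ)) :
    uu b cc ℓ = (if h : (ℓ:ℕ)+1 < k'+2 then cc ⟨(ℓ:ℕ)+1, h⟩ else 0)
      - (if h : (ℓ:ℕ) < k'+2 ∧ 2 ≤ (ℓ:ℕ) then cc ⟨(ℓ:ℕ), h.1⟩ else 0) := by
  rw [uu]
  have key : ∀ j : Fin (k'+2), cc j * ((if (ℓ:ℕ) = (j:ℕ)-1 ∧ 2 ≤ (j:ℕ) then (1:ℝ) else 0)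
      - (if (ℓ:ℕ) = (j:ℕ) ∧ 2 ≤ (j:ℕ) then (1:ℝ) else 0))
      = cc j * (if (j:ℕ) = (ℓ:ℕ)+1 then (1:ℝ) else 0)
        - cc j * (if 2 ≤ (ℓ:ℕ) then (if (j:ℕ) = (ℓ:ℕ) then (1:ℝ) else 0) else 0) := by
    intro j
    rw [mul_sub]
    congr 2
    · apply if_congr _ rfl rfl
      constructor
      · rintro ⟨e1, e2⟩; omega
      · intro e; exact ⟨by omega, by omega⟩
    · by_cases h2 : 2 ≤ (ℓ:ℕ)
      · rw [if_pos h2]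
        apply if_congr _ rfl rfl
        constructor
        · rintro ⟨e1, e2⟩; omega
        · intro e; exact ⟨by omega, by omega⟩
      · rw [if_neg h2, if_neg (by omega)]
  rw [Finset.sum_congr rfl (fun j _ => key j), Finset.sum_sub_distrib, eval_ind cc ((ℓ:ℕ)+1)]
  congr 1
  by_cases h2 : 2 ≤ (ℓ:ℕ)
  · simp only [if_pos h2]
    rw [eval_ind cc (ℓ:ℕ)]
    by_cases h3 : (ℓ:ℕ) < k'+2
    · rw [dif_pos h3, dif_pos ⟨h3, h2⟩]
    · rw [dif_neg h3, dif_neg (fun hc => h3 hc.1)]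
  · simp only [if_neg h2]
    rw [dif_neg (fun hc => h2 hc.2)]
    simp

end

section generic
variable {V : Type*} [Fintype V] (G : SimpleGraph V) (B : Finset V)

lemma energy_nonneg (f : V → ℝ) : 0 ≤ dirichletEnergy G f := by
  unfold dirichletEnergy
  apply div_nonneg _ (by norm_num)
  apply Finset.sum_nonneg
  intro x _
  apply Finset.sum_nonneg
  intro y _
  split_ifs
  · positivity
  · exact le_refl 0

lemma sInf_spec (S : Set ℝ) (σ : ℝ) (hmem : σ ∈ S) (hlb : ∀ t ∈ S, σ ≤ t) : sInf S = σ :=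
  le_antisymm (csInf_le ⟨σ, hlb⟩ hmem) (le_csInf ⟨σ, hmem⟩ hlb)

-- extract an element of F whose boundary restriction is nonzero and satisfies m < k constraints
lemma exists_elem (F : Submodule ℝ (V → ℝ)) {k m : ℕ}
    (hdim : Module.finrank ℝ (F.map (LinearMap.funLeft ℝ ℝ (fun x : {v // v ∈ B} => (x : V)))) = k)
    (L : ({v // v ∈ B} → ℝ) →ₗ[ℝ] (Fin m → ℝ)) (hm : m < k) :
    ∃ f ∈ F, (fun x : {v // v ∈ B} => f (x : V)) ≠ 0
      ∧ L (fun x : {v // v ∈ B} => f (x : V)) = 0 := by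
  set res := LinearMap.funLeft ℝ ℝ (fun x : {v // v ∈ B} => (x : V)) with hres
  set Y := F.map res with hY
  have hker : LinearMap.ker (L.comp Y.subtype) ≠ ⊥ := by
    intro hbot
    have hinj : Function.Injective (L.comp Y.subtype) := by
      rw [← LinearMap.ker_eq_bot]; exact hbot
    have hle := LinearMap.finrank_le_finrank_of_injective hinj
    have hm2 : Module.finrank ℝ (Fin m → ℝ) = m := by
      simp [Module.finrank_pi]
    have hcon : k ≤ m := le_trans (le_of_eq hdim.symm) (le_trans hle (le_of_eq hm2))
    omega
  obtain ⟨y, hy, hyne⟩ := Submodule.ne_bot_iff _ |>.1 hker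
  have hyY : (y : {v // v ∈ B} → ℝ) ∈ Submodule.map res F := y.2
  obtain ⟨f, hfF, hfy⟩ := Submodule.mem_map.1 hyY
  refine ⟨f, hfF, ?_, ?_⟩
  · have : res f = (y : {v // v ∈ B} → ℝ) := hfy
    rw [show (fun x : {v // v ∈ B} => f (x : V)) = res f from rfl, this]
    intro hc
    apply hyne
    exact Subtype.ext hc
  · have h0 : L.comp Y.subtype y = 0 := hy
    have : L (y : {v // v ∈ B} → ℝ) = 0 := h0
    rw [show (fun x : {v // v ∈ B} => f (x : V)) = res f from rfl, hfy]
    exact this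

end generic

-- ===== new material =====
section main
variable (b r : ℕ)

lemma tip_mem (hb : 2 ≤ b) (hr : 0 < r) :
    (inr true : (Fin b × Fin r) ⊕ Bool) ∈ leavesFinset (almostFork b r) :=
  (mem_leaves_iff hb hr _).2 (Or.inl rfl)

lemma leaf_mem (hb : 2 ≤ b) (hr : 0 < r) (ℓ : Fin b) (hℓ : (ℓ:ℕ) ≠ 0) :
    (inl (ℓ, ⟨r-1, by omega⟩) : (Fin b × Fin r) ⊕ Bool) ∈ leavesFinset (almostFork b r) :=
  (mem_leaves_iff hb hr _).2 (Or.inr ⟨ℓ, hℓ, rfl⟩)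

lemma cast_rm1 (hr : 0 < r) :
    ((((⟨r-1, by omega⟩ : Fin r)):ℕ):ℝ) = (r:ℝ) - 1 := by
  show (((r-1 : ℕ)):ℝ) = (r:ℝ) - 1
  rw [Nat.cast_sub (by omega)]
  norm_num

-- linear independence of restricted family
lemma gfun_LI (k' : ℕ) (hb : 2 ≤ b) (hr : 0 < r) (hk : k'+2 ≤ b) :
    LinearIndependent ℝ (fun j : Fin (k'+2) =>
      (LinearMap.funLeft ℝ ℝ (fun x : {v // v ∈ leavesFinset (almostFork b r)} => (x : (Fin b × Fin r) ⊕ Bool)))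
        (gfun b r (j:ℕ))) := by
  have hr1 : (0:ℝ) < (r:ℝ) := by exact_mod_cast hr
  have hb2 : (2:ℝ) ≤ (b:ℝ) := by exact_mod_cast hb
  have hB : (0:ℝ) < Breal b r := by rw [Breal]; nlinarith
  rw [Fintype.linearIndependent_iff]
  intro cc hsum
  have hpt : ∀ x : {v // v ∈ leavesFinset (almostFork b r)},
      (∑ j : Fin (k'+2), cc j * gfun b r (j:ℕ) (x : (Fin b × Fin r) ⊕ Bool)) = 0 := by
    intro x
    have := congrFun hsum x
    simpa [Finset.sum_apply, LinearMap.funLeft_apply] using this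
  have htipeq : cc 0 - cc 1 * (((b:ℝ)-1) * Breal b r) = 0 := by
    have h := hpt ⟨inr true, tip_mem b r hb hr⟩
    rwa [fval_tip] at h
  have hleafeq : ∀ ℓ ∈ Blf b, cc 0 + Breal b r * cc 1 + (r:ℝ) * uu b cc ℓ = 0 := by
    intro ℓ hm
    have hℓ : (ℓ:ℕ) ≠ 0 := (Finset.mem_filter.1 hm).2
    have h := hpt ⟨inl (ℓ, ⟨r-1, by omega⟩), leaf_mem b r hb hr ℓ hℓ⟩
    rw [fval_inl, phiF_short b r ℓ _ hℓ, cast_rm1 r hr] at h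
    rw [Breal]
    linarith [h]
  have hsum0 : ((b:ℝ)-1) * (cc 0 + Breal b r * cc 1) = 0 := by
    have h0 : ∑ ℓ ∈ Blf b, (cc 0 + Breal b r * cc 1 + (r:ℝ) * uu b cc ℓ) = 0 := by
      rw [Finset.sum_congr rfl hleafeq, Finset.sum_const_zero]
    rw [Finset.sum_add_distrib, ← Finset.mul_sum, uu_sumzero b k' hb hk cc, mul_zero, add_zero,
      Finset.sum_const, Blf_card b hb, nsmul_eq_mul, Nat.cast_sub (by omega : 1 ≤ b)] at h0
    push_cast at h0
    linarith [h0]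
  have hcc1 : cc 1 = 0 := by
    have h5 : ((b:ℝ) * Breal b r) * cc 1 = 0 := by nlinarith [htipeq, hsum0]
    have h6 : (0:ℝ) < (b:ℝ) * Breal b r := by positivity
    rcases mul_eq_zero.1 h5 with h | h
    · exact absurd h (ne_of_gt h6)
    · exact h
  have hcc0 : cc 0 = 0 := by
    have : ((b:ℝ)-1) * cc 0 = 0 := by nlinarith [hsum0]
    rcases mul_eq_zero.1 this with h | h
    · exact absurd h (by intro hc; nlinarith)
    · exact h
  have huuz : ∀ ℓ ∈ Blf b, uu b cc ℓ = 0 := by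
    intro ℓ hm
    have h := hleafeq ℓ hm
    rw [hcc0, hcc1] at h
    have : (r:ℝ) * uu b cc ℓ = 0 := by linarith
    rcases mul_eq_zero.1 this with h | h
    · exact absurd h (ne_of_gt hr1)
    · exact h
  -- induction to kill the remaining coefficients
  have main : ∀ n, ∀ h : n < k'+2, cc ⟨n, h⟩ = 0 := by
    intro n
    induction n using Nat.strong_induction_on with
    | _ n ih =>
      match n with
      | 0 => intro h; exact (show cc ⟨0,h⟩ = cc 0 from congrArg cc (Fin.ext rfl)).trans hcc0
      | 1 => intro h; exact (show cc ⟨1,h⟩ = cc 1 from congrArg cc (Fin.ext rfl)).trans hcc1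
      | (m+2) =>
        intro h
        have hmb : m + 1 < b := by omega
        set ℓ : Fin b := ⟨m+1, hmb⟩ with hℓdef
        have hℓBlf : ℓ ∈ Blf b := by
          rw [Blf, Finset.mem_filter]
          exact ⟨Finset.mem_univ _, show m+1 ≠ 0 by omega⟩
        have he : uu b cc ℓ = (if h2 : m+1+1 < k'+2 then cc ⟨m+1+1, h2⟩ else 0)
            - (if h2 : m+1 < k'+2 ∧ 2 ≤ m+1 then cc ⟨m+1, h2.1⟩ else 0) :=
          uu_eval b k' cc ℓ (Nat.succ_le_succ (Nat.zero_le m))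
        rw [huuz ℓ hℓBlf] at he
        rw [dif_pos (show m+1+1 < k'+2 from h)] at he
        by_cases hm1 : 2 ≤ m+1
        · rw [dif_pos ⟨by omega, hm1⟩] at he
          have hprev : cc ⟨m+1, by omega⟩ = 0 := ih (m+1) (by omega) (by omega)
          have : cc ⟨m+1+1, h⟩ = 0 := by rw [← hprev] at he ⊢; linarith [he]
          exact this
        · rw [dif_neg (by omega)] at he
          have : cc ⟨m+1+1, h⟩ = 0 := by linarith [he]
          exact this
  intro j
  have := main (j:ℕ) j.isLt
  rwa [show (⟨(j:ℕ), j.isLt⟩ : Fin (k'+2)) = j from Fin.ext rfl] at this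

lemma sum_subtype_eq {V : Type*} [Fintype V] (s : Finset V) (g : V → ℝ) :
    ∑ x : {v // v ∈ s}, g (x : V) = ∑ x ∈ s, g x :=
  (Finset.sum_subtype s (fun _ => Iff.rfl) g).symm

lemma energy_const_zero {V : Type*} [Fintype V] (G : SimpleGraph V) (f : V → ℝ)
    (h : ∀ x y, f x = f y) : dirichletEnergy G f = 0 := by
  unfold dirichletEnergy
  have h0 : (∑ x : V, ∑ y : V, if G.Adj x y then (f x - f y) ^ 2 else 0) = 0 := by
    apply Finset.sum_eq_zero
    intro x _
    apply Finset.sum_eq_zero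
    intro y _
    split_ifs
    · rw [h x y]; ring
    · rfl
  rw [h0]
  norm_num

-- membership of σ for k = k'+2
lemma mem_S_k (k' : ℕ) (hb : 2 ≤ b) (hr : 0 < r) (hk : k'+2 ≤ b) (σ : ℝ)
    (hray : ∀ cc : Fin (k'+2) → ℝ,
      dirichletEnergy (almostFork b r) (fun v => ∑ j : Fin (k'+2), cc j * gfun b r (j:ℕ) v)
        ≤ σ * ∑ x ∈ leavesFinset (almostFork b r), ((∑ j : Fin (k'+2), cc j * gfun b r (j:ℕ) x))^2) :
    ∃ F : Submodule ℝ ((Fin b × Fin r) ⊕ Bool → ℝ),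
      Module.finrank ℝ (F.map (LinearMap.funLeft ℝ ℝ
        (fun x : {v // v ∈ leavesFinset (almostFork b r)} => (x : (Fin b × Fin r) ⊕ Bool)))) = k'+2 ∧
      ∀ f ∈ F, dirichletEnergy (almostFork b r) f
        ≤ σ * ∑ x ∈ leavesFinset (almostFork b r), (f x) ^ 2 := by
  classical
  set res := LinearMap.funLeft ℝ ℝ
    (fun x : {v // v ∈ leavesFinset (almostFork b r)} => (x : (Fin b × Fin r) ⊕ Bool)) with hres
  set Gk : Fin (k'+2) → ((Fin b × Fin r) ⊕ Bool → ℝ) := fun j => gfun b r (j:ℕ) with hGk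
  refine ⟨Submodule.span ℝ (Set.range Gk), ?_, ?_⟩
  · rw [Submodule.map_span, ← Set.range_comp]
    have hLI := gfun_LI b r k' hb hr hk
    have hLI2 : LinearIndependent ℝ (⇑res ∘ Gk) := hLI
    rw [finrank_span_eq_card hLI2, Fintype.card_fin]
  · intro f hf
    obtain ⟨cc, hcc⟩ := (Submodule.mem_span_range_iff_exists_fun ℝ).1 hf
    have hfe : f = fun v => ∑ j : Fin (k'+2), cc j * gfun b r (j:ℕ) v := by
      funext v
      rw [← hcc]
      simp [Finset.sum_apply, hGk]
    rw [hfe]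
    exact hray cc

lemma mem_S_1 (hb : 2 ≤ b) (hr : 0 < r) :
    ∃ F : Submodule ℝ ((Fin b × Fin r) ⊕ Bool → ℝ),
      Module.finrank ℝ (F.map (LinearMap.funLeft ℝ ℝ
        (fun x : {v // v ∈ leavesFinset (almostFork b r)} => (x : (Fin b × Fin r) ⊕ Bool)))) = 1 ∧
      ∀ f ∈ F, dirichletEnergy (almostFork b r) f
        ≤ 0 * ∑ x ∈ leavesFinset (almostFork b r), (f x) ^ 2 := by
  classical
  set res := LinearMap.funLeft ℝ ℝ
    (fun x : {v // v ∈ leavesFinset (almostFork b r)} => (x : (Fin b × Fin r) ⊕ Bool)) with hres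
  refine ⟨Submodule.span ℝ {(fun _ => (1:ℝ))}, ?_, ?_⟩
  · rw [Submodule.map_span, Set.image_singleton]
    apply finrank_span_singleton
    intro hc
    have h1 : res (fun _ => (1:ℝ)) ⟨inr true, tip_mem b r hb hr⟩ = 0 := by rw [hc]; rfl
    have h2 : res (fun _ => (1:ℝ)) ⟨inr true, tip_mem b r hb hr⟩ = 1 := rfl
    rw [h2] at h1
    norm_num at h1
  · intro f hf
    obtain ⟨a, ha⟩ := Submodule.mem_span_singleton.1 hf
    have hfc : ∀ x y, f x = f y := by
      intro x y
      rw [← ha]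
      rfl
    rw [energy_const_zero _ f hfc, zero_mul]

-- linear functionals
noncomputable def sumLM (b r : ℕ) :
    ({v // v ∈ leavesFinset (almostFork b r)} → ℝ) →ₗ[ℝ] (Fin 1 → ℝ) where
  toFun h := fun _ => ∑ x : {v // v ∈ leavesFinset (almostFork b r)}, h x
  map_add' := by intro h g; funext i; simp [Finset.sum_add_distrib]
  map_smul' := by intro a h; funext i; simp [Finset.mul_sum]

noncomputable def sumTipLM (b r : ℕ) (hb : 2 ≤ b) (hr : 0 < r) :
    ({v // v ∈ leavesFinset (almostFork b r)} → ℝ) →ₗ[ℝ] (Fin 2 → ℝ) where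
  toFun h := fun i => if (i:ℕ) = 0 then ∑ x : {v // v ∈ leavesFinset (almostFork b r)}, h x
    else h ⟨inr true, tip_mem b r hb hr⟩
  map_add' := by
    intro h g; funext i
    by_cases hi : (i:ℕ) = 0 <;> simp only [Fin.val_eq_zero_iff] at hi <;> simp [hi, Finset.sum_add_distrib]
  map_smul' := by
    intro a h; funext i
    by_cases hi : (i:ℕ) = 0 <;> simp only [Fin.val_eq_zero_iff] at hi <;> simp [hi, Finset.mul_sum]

lemma bpos_of_res_ne (hb : 2 ≤ b) (hr : 0 < r) (f : (Fin b × Fin r) ⊕ Bool → ℝ)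
    (hne : (fun x : {v // v ∈ leavesFinset (almostFork b r)} => f (x : (Fin b × Fin r) ⊕ Bool)) ≠ 0) :
    0 < ∑ x ∈ leavesFinset (almostFork b r), (f x)^2 := by
  have hex : ∃ x : {v // v ∈ leavesFinset (almostFork b r)}, f (x : (Fin b × Fin r) ⊕ Bool) ≠ 0 := by
    by_contra hall
    push_neg at hall
    exact hne (funext fun x => hall x)
  obtain ⟨x, hx⟩ := hex
  apply Finset.sum_pos'
  · intro i _; positivity
  · exact ⟨(x : (Fin b × Fin r) ⊕ Bool), x.2, by positivity⟩

lemma lower_1 (hb : 2 ≤ b) (hr : 0 < r) (t : ℝ)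
    (ht : ∃ F : Submodule ℝ ((Fin b × Fin r) ⊕ Bool → ℝ),
      Module.finrank ℝ (F.map (LinearMap.funLeft ℝ ℝ
        (fun x : {v // v ∈ leavesFinset (almostFork b r)} => (x : (Fin b × Fin r) ⊕ Bool)))) = 1 ∧
      ∀ f ∈ F, dirichletEnergy (almostFork b r) f
        ≤ t * ∑ x ∈ leavesFinset (almostFork b r), (f x) ^ 2) : 0 ≤ t := by
  obtain ⟨F, hdim, hF⟩ := ht
  obtain ⟨f, hfF, hne, -⟩ := exists_elem (leavesFinset (almostFork b r)) F hdim
    (0 : ({v // v ∈ leavesFinset (almostFork b r)} → ℝ) →ₗ[ℝ] (Fin 0 → ℝ)) (by omega)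
  have hpos := bpos_of_res_ne b r hb hr f hne
  have h1 := le_trans (energy_nonneg (almostFork b r) f) (hF f hfF)
  nlinarith [h1, hpos]

lemma lower_2 (hb : 2 ≤ b) (hr : 0 < r) (t : ℝ)
    (ht : ∃ F : Submodule ℝ ((Fin b × Fin r) ⊕ Bool → ℝ),
      Module.finrank ℝ (F.map (LinearMap.funLeft ℝ ℝ
        (fun x : {v // v ∈ leavesFinset (almostFork b r)} => (x : (Fin b × Fin r) ⊕ Bool)))) = 2 ∧
      ∀ f ∈ F, dirichletEnergy (almostFork b r) f
        ≤ t * ∑ x ∈ leavesFinset (almostFork b r), (f x) ^ 2) :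
    (b:ℝ)/((b:ℝ)*((r:ℝ)+1)-1) ≤ t := by
  obtain ⟨F, hdim, hF⟩ := ht
  obtain ⟨f, hfF, hne, hL⟩ := exists_elem (leavesFinset (almostFork b r)) F hdim
    (sumLM b r) (by omega)
  have hpos := bpos_of_res_ne b r hb hr f hne
  have hz0 : ∑ x ∈ leavesFinset (almostFork b r), f x = 0 := by
    have := congrFun hL (0 : Fin 1)
    rw [← sum_subtype_eq (leavesFinset (almostFork b r)) f]
    exact this
  have hz : f (inr true) + ∑ ℓ ∈ Blf b, f (inl (ℓ, ⟨r-1, by omega⟩)) = 0 := by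
    rw [← sum_leaves hb hr f]
    exact hz0
  have hH := H2ineq b r hb hr f hz
  have hsq : ∑ x ∈ leavesFinset (almostFork b r), (f x)^2
      = (f (inr true))^2 + ∑ ℓ ∈ Blf b, (f (inl (ℓ, ⟨r-1, by omega⟩)))^2 :=
    sum_leaves hb hr (fun x => (f x)^2)
  rw [← hsq] at hH
  have h2 := hF f hfF
  nlinarith [hH, h2, hpos]

lemma lower_3 (k : ℕ) (hk3 : 3 ≤ k) (hb : 2 ≤ b) (hr : 0 < r) (t : ℝ)
    (ht : ∃ F : Submodule ℝ ((Fin b × Fin r) ⊕ Bool → ℝ),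
      Module.finrank ℝ (F.map (LinearMap.funLeft ℝ ℝ
        (fun x : {v // v ∈ leavesFinset (almostFork b r)} => (x : (Fin b × Fin r) ⊕ Bool)))) = k ∧
      ∀ f ∈ F, dirichletEnergy (almostFork b r) f
        ≤ t * ∑ x ∈ leavesFinset (almostFork b r), (f x) ^ 2) :
    1/(r:ℝ) ≤ t := by
  obtain ⟨F, hdim, hF⟩ := ht
  obtain ⟨f, hfF, hne, hL⟩ := exists_elem (leavesFinset (almostFork b r)) F hdim
    (sumTipLM b r hb hr) (by omega)
  have hpos := bpos_of_res_ne b r hb hr f hne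
  have hz0 : ∑ x ∈ leavesFinset (almostFork b r), f x = 0 := by
    have := congrFun hL (0 : Fin 2)
    rw [← sum_subtype_eq (leavesFinset (almostFork b r)) f]
    simpa [sumTipLM] using this
  have htip0 : f (inr true) = 0 := by
    have := congrFun hL (1 : Fin 2)
    simpa [sumTipLM] using this
  have hS : ∑ ℓ ∈ Blf b, f (inl (ℓ, ⟨r-1, by omega⟩)) = 0 := by
    have h := hz0
    rw [sum_leaves hb hr f, htip0, zero_add] at h
    exact h
  have hH := H3ineq b r hb hr f htip0 hS
  have hsq : ∑ x ∈ leavesFinset (almostFork b r), (f x)^2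
      = (f (inr true))^2 + ∑ ℓ ∈ Blf b, (f (inl (ℓ, ⟨r-1, by omega⟩)))^2 :=
    sum_leaves hb hr (fun x => (f x)^2)
  rw [← hsq] at hH
  have h2 := hF f hfF
  nlinarith [hH, h2, hpos]

end main

/-- Let `b ≥ 2` and `r ≥ 1` be integers, and let `T = AF(b,r)` be the almost
fork graph with leaves as boundary. Then the Steklov eigenvalues of `T` are `σ₁ = 0`,
`σ₂ = b/(b(r+1)-1)`, and `σₖ = 1/r` for all `3 ≤ k ≤ b`. -/
theorem stmt9 (b r : ℕ) (hb : 2 ≤ b) (hr : 1 ≤ r) :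
    steklovEig (almostFork b r) (leavesFinset (almostFork b r)) 1 = 0 ∧
    steklovEig (almostFork b r) (leavesFinset (almostFork b r)) 2 =
      (b : ℝ) / ((b : ℝ) * ((r : ℝ) + 1) - 1) ∧
    ∀ k : ℕ, 3 ≤ k → k ≤ b →
      steklovEig (almostFork b r) (leavesFinset (almostFork b r)) k = 1 / (r : ℝ) := by
  have hr0 : 0 < r := hr
  refine ⟨?_, ?_, ?_⟩
  · apply sInf_spec
    · exact mem_S_1 b r hb hr0
    · intro t ht
      exact lower_1 b r hb hr0 t ht
  · apply sInf_spec
    · exact mem_S_k b r 0 hb hr0 (by omega) _ (rayleigh_2 b r hb hr0)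
    · intro t ht
      exact lower_2 b r hb hr0 t ht
  · intro k hk3 hkb
    obtain ⟨k', rfl⟩ : ∃ k'', k = k'' + 2 := ⟨k - 2, by omega⟩
    apply sInf_spec
    · exact mem_S_k b r k' hb hr0 (by omega) _ (by
        intro cc
        have := rayleigh_k b r k' hb hr0 (by omega) cc
        simpa [one_div] using this)
    · intro t ht
      exact lower_3 b r (k'+2) (by omega) hb hr0 t ht
end

section
/- Let p, q ≥ 1 and D ≥ 3 be integers, and let T = B(p,q,D) be the barbell graph with leaves as boundary. Then the Steklov eigenvalues of T are σ_1 = 0, σ_2 = (p+q)/((D−2)pq + p + q), and σ_k = 1 for all 3 ≤ k ≤ p+q. -/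
open scoped BigOperators
open Classical

/-- The barbell graph `B(p,q,D)`: a path with `D-1` vertices (`Sum.inr (Sum.inr w)`),
with `p` pendant vertices attached at the endpoint `w = 0` and `q` pendant vertices
attached at the endpoint `w = D-2`. -/
def barbell (p q D : ℕ) : SimpleGraph (Fin p ⊕ Fin q ⊕ Fin (D - 1)) :=
  SimpleGraph.fromRel fun x y =>
    match x, y with
    | Sum.inl _, Sum.inr (Sum.inr w) => (w : ℕ) = 0
    | Sum.inr (Sum.inl _), Sum.inr (Sum.inr w) => (w : ℕ) = D - 2
    | Sum.inr (Sum.inr w), Sum.inr (Sum.inr w') => (w' : ℕ) = (w : ℕ) + 1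
    | _, _ => False

namespace Stmt11

def brel (p q D : ℕ) : (Fin p ⊕ Fin q ⊕ Fin (D-1)) → (Fin p ⊕ Fin q ⊕ Fin (D-1)) → Prop
  | Sum.inl _, Sum.inr (Sum.inr w) => (w : ℕ) = 0
  | Sum.inr (Sum.inl _), Sum.inr (Sum.inr w) => (w : ℕ) = D - 2
  | Sum.inr (Sum.inr w), Sum.inr (Sum.inr w') => (w' : ℕ) = (w : ℕ) + 1
  | _, _ => False

lemma barbell_eq (p q D : ℕ) : barbell p q D = SimpleGraph.fromRel (brel p q D) := rfl

variable {p q D : ℕ}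

@[simp] lemma brel_ll (i : Fin p) (i' : Fin p) : brel p q D (Sum.inl i) (Sum.inl i') ↔ False := by
  simp [brel]
@[simp] lemma brel_lm (i : Fin p) (j : Fin q) : brel p q D (Sum.inl i) (Sum.inr (Sum.inl j)) ↔ False := by
  simp [brel]
@[simp] lemma brel_lr (i : Fin p) (w : Fin (D-1)) : brel p q D (Sum.inl i) (Sum.inr (Sum.inr w)) ↔ (w:ℕ) = 0 := by
  simp [brel]
@[simp] lemma brel_ml (j : Fin q) (i : Fin p) : brel p q D (Sum.inr (Sum.inl j)) (Sum.inl i) ↔ False := by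
  simp [brel]
@[simp] lemma brel_mm (j j' : Fin q) : brel p q D (Sum.inr (Sum.inl j)) (Sum.inr (Sum.inl j')) ↔ False := by
  simp [brel]
@[simp] lemma brel_mr (j : Fin q) (w : Fin (D-1)) : brel p q D (Sum.inr (Sum.inl j)) (Sum.inr (Sum.inr w)) ↔ (w:ℕ) = D - 2 := by
  simp [brel]
@[simp] lemma brel_rl (w : Fin (D-1)) (i : Fin p) : brel p q D (Sum.inr (Sum.inr w)) (Sum.inl i) ↔ False := by
  simp [brel]
@[simp] lemma brel_rm (w : Fin (D-1)) (j : Fin q) : brel p q D (Sum.inr (Sum.inr w)) (Sum.inr (Sum.inl j)) ↔ False := by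
  simp [brel]
@[simp] lemma brel_rr (w w' : Fin (D-1)) : brel p q D (Sum.inr (Sum.inr w)) (Sum.inr (Sum.inr w')) ↔ (w':ℕ) = (w:ℕ) + 1 := by
  simp [brel]

instance brel.decRel : ∀ x y, Decidable (brel p q D x y) := fun x y =>
  match x, y with
  | Sum.inl i, Sum.inl i' => decidable_of_iff False (brel_ll i i').symm
  | Sum.inl i, Sum.inr (Sum.inl j) => decidable_of_iff False (brel_lm i j).symm
  | Sum.inl i, Sum.inr (Sum.inr w) => decidable_of_iff _ (brel_lr i w).symm
  | Sum.inr (Sum.inl j), Sum.inl i => decidable_of_iff False (brel_ml j i).symm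
  | Sum.inr (Sum.inl j), Sum.inr (Sum.inl j') => decidable_of_iff False (brel_mm j j').symm
  | Sum.inr (Sum.inl j), Sum.inr (Sum.inr w) => decidable_of_iff _ (brel_mr j w).symm
  | Sum.inr (Sum.inr w), Sum.inl i => decidable_of_iff False (brel_rl w i).symm
  | Sum.inr (Sum.inr w), Sum.inr (Sum.inl j) => decidable_of_iff False (brel_rm w j).symm
  | Sum.inr (Sum.inr w), Sum.inr (Sum.inr w') => decidable_of_iff _ (brel_rr w w').symm

lemma dE_fromRel {V : Type*} [Fintype V] [DecidableEq V] (r : V → V → Prop)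
    [inst : ∀ x y, Decidable (r x y)]
    (hanti : ∀ x y, r x y → r y x → x = y) (f : V → ℝ) :
    dirichletEnergy (SimpleGraph.fromRel r) f
      = ∑ x : V, ∑ y : V, if x ≠ y ∧ r x y then (f x - f y) ^ 2 else 0 := by
  have key : ∀ x y : V, (@ite _ ((SimpleGraph.fromRel r).Adj x y) (Classical.propDecidable _) ((f x - f y)^2) 0)
      = (if x ≠ y ∧ r x y then (f x - f y)^2 else 0)
        + (if y ≠ x ∧ r y x then (f x - f y)^2 else 0) := by
    intro x y
    by_cases hxy : x = y
    · subst hxy; simp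
    by_cases h1 : r x y <;> by_cases h2 : r y x
    · exact absurd (hanti _ _ h1 h2) hxy
    all_goals
      simp [SimpleGraph.fromRel_adj, hxy, Ne.symm hxy, h1, h2]
  have swap : (∑ x : V, ∑ y : V, if y ≠ x ∧ r y x then (f x - f y)^2 else 0)
      = ∑ x : V, ∑ y : V, if x ≠ y ∧ r x y then (f x - f y)^2 else 0 := by
    rw [Finset.sum_comm]
    refine Finset.sum_congr rfl fun x _ => Finset.sum_congr rfl fun y _ => ?_
    congr 1
    ring
  unfold dirichletEnergy
  simp_rw [key, Finset.sum_add_distrib]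
  rw [swap]
  ring

/-- `n`-th path vertex of the barbell graph. -/
def pv (p q : ℕ) {D : ℕ} (hD : 3 ≤ D) (n : ℕ) : Fin p ⊕ Fin q ⊕ Fin (D - 1) :=
  Sum.inr (Sum.inr ⟨n % (D-1), Nat.mod_lt _ (by omega)⟩)

lemma pv_val (hD : 3 ≤ D) {n : ℕ} (hn : n < D - 1) :
    pv p q hD n = Sum.inr (Sum.inr ⟨n, hn⟩) := by
  simp [pv, Nat.mod_eq_of_lt hn]

lemma pv_coe (hD : 3 ≤ D) (w : Fin (D-1)) : pv p q hD (w : ℕ) = Sum.inr (Sum.inr w) := by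
  rw [pv_val hD w.isLt]

lemma sum_pick {α : Type*} [Fintype α] (P : α → Prop) [DecidablePred P] (g : α → ℝ) (a : α)
    (hP : ∀ x, P x ↔ x = a) : (∑ x : α, if P x then g x else 0) = g a := by
  have : ∀ x : α, (if P x then g x else 0) = if x = a then g x else 0 := by
    intro x
    by_cases h : P x
    · rw [if_pos h, if_pos ((hP x).1 h)]
    · rw [if_neg h, if_neg (fun e => h ((hP x).2 e))]
  simp only [this, Finset.sum_ite_eq', Finset.mem_univ, if_true]

lemma sum_none {α : Type*} [Fintype α] (P : α → Prop) [DecidablePred P] (g : α → ℝ)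
    (hP : ∀ x, ¬ P x) : (∑ x : α, if P x then g x else 0) = 0 := by
  have : ∀ x : α, (if P x then g x else 0) = 0 := fun x => if_neg (hP x)
  simp only [this, Finset.sum_const_zero]

lemma energy_eq (hD : 3 ≤ D) (f : Fin p ⊕ Fin q ⊕ Fin (D-1) → ℝ) :
    dirichletEnergy (barbell p q D) f =
      (∑ i : Fin p, (f (Sum.inl i) - f (pv p q hD 0)) ^ 2)
      + (∑ j : Fin q, (f (Sum.inr (Sum.inl j)) - f (pv p q hD (D-2))) ^ 2)
      + (∑ n ∈ Finset.range (D-2), (f (pv p q hD n) - f (pv p q hD (n+1))) ^ 2) := by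
  have h0 : (0:ℕ) < D - 1 := by omega
  have hd2 : D - 2 < D - 1 := by omega
  rw [barbell_eq, dE_fromRel _ (by
    rintro (a | b | w) (a' | b' | w') h1 h2 <;>
      simp only [brel_ll, brel_lm, brel_lr, brel_ml, brel_mm, brel_mr, brel_rl, brel_rm,
        brel_rr] at h1 h2 <;>
      exact absurd h1 (by omega))]
  rw [Fintype.sum_sum_type, Fintype.sum_sum_type]
  have B1 : (∑ i : Fin p, ∑ y : Fin p ⊕ Fin q ⊕ Fin (D-1),
        (if Sum.inl i ≠ y ∧ brel p q D (Sum.inl i) y then (f (Sum.inl i) - f y)^2 else 0))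
      = ∑ i : Fin p, (f (Sum.inl i) - f (pv p q hD 0))^2 := by
    refine Finset.sum_congr rfl fun i _ => ?_
    rw [Fintype.sum_sum_type, Fintype.sum_sum_type]
    rw [sum_none _ _ (fun x => by simp), sum_none _ _ (fun x => by simp),
      sum_pick _ _ (⟨0, h0⟩ : Fin (D-1)) (fun w => by simp [Fin.ext_iff]),
      pv_val hD h0]
    ring
  have B2 : (∑ j : Fin q, ∑ y : Fin p ⊕ Fin q ⊕ Fin (D-1),
        (if Sum.inr (Sum.inl j) ≠ y ∧ brel p q D (Sum.inr (Sum.inl j)) y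
          then (f (Sum.inr (Sum.inl j)) - f y)^2 else 0))
      = ∑ j : Fin q, (f (Sum.inr (Sum.inl j)) - f (pv p q hD (D-2)))^2 := by
    refine Finset.sum_congr rfl fun j _ => ?_
    rw [Fintype.sum_sum_type, Fintype.sum_sum_type]
    rw [sum_none _ _ (fun x => by simp), sum_none _ _ (fun x => by simp),
      sum_pick _ _ (⟨D-2, hd2⟩ : Fin (D-1)) (fun w => by simp [Fin.ext_iff]),
      pv_val hD hd2]
    ring
  have B3 : (∑ w : Fin (D-1), ∑ y : Fin p ⊕ Fin q ⊕ Fin (D-1),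
        (if Sum.inr (Sum.inr w) ≠ y ∧ brel p q D (Sum.inr (Sum.inr w)) y
          then (f (Sum.inr (Sum.inr w)) - f y)^2 else 0))
      = ∑ n ∈ Finset.range (D-2), (f (pv p q hD n) - f (pv p q hD (n+1)))^2 := by
    have step : ∀ w : Fin (D-1), (∑ y : Fin p ⊕ Fin q ⊕ Fin (D-1),
        (if Sum.inr (Sum.inr w) ≠ y ∧ brel p q D (Sum.inr (Sum.inr w)) y
          then (f (Sum.inr (Sum.inr w)) - f y)^2 else 0))
        = (fun n => if n + 1 < D - 1
            then (f (pv p q hD n) - f (pv p q hD (n+1)))^2 else 0) (w : ℕ) := by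
      intro w
      rw [Fintype.sum_sum_type, Fintype.sum_sum_type]
      rw [sum_none _ _ (fun x => by simp), sum_none _ _ (fun x => by simp)]
      by_cases h : (w : ℕ) + 1 < D - 1
      · rw [sum_pick _ _ (⟨(w:ℕ)+1, h⟩ : Fin (D-1))
          (fun w' => by simp [Fin.ext_iff]; omega)]
        simp only [h, if_true, pv_val hD h, pv_coe hD]
        ring
      · rw [sum_none _ _ (fun w' => by simp [Fin.ext_iff]; omega)]
        simp [h]
    rw [Finset.sum_congr rfl (fun w _ => step w),
      Fin.sum_univ_eq_sum_range
        (fun n => if n + 1 < D - 1 then (f (pv p q hD n) - f (pv p q hD (n+1)))^2 else 0) (D-1)]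
    have hsplit : D - 1 = (D - 2) + 1 := by omega
    rw [hsplit, Finset.sum_range_succ, if_neg (by omega)]
    rw [add_zero]
    refine Finset.sum_congr rfl fun n hn => ?_
    rw [if_pos (by simp at hn; omega)]
  rw [B1, B2, B3]
  ring

lemma adj_iff (x y : Fin p ⊕ Fin q ⊕ Fin (D-1)) :
    (barbell p q D).Adj x y ↔ x ≠ y ∧ (brel p q D x y ∨ brel p q D y x) := by
  rw [barbell_eq, SimpleGraph.fromRel_adj]

/-- The explicit leaf set. -/
def Lf (p q D : ℕ) : Finset (Fin p ⊕ Fin q ⊕ Fin (D-1)) :=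
  (Finset.univ.image (Sum.inl : Fin p → Fin p ⊕ Fin q ⊕ Fin (D-1))) ∪
    (Finset.univ.image (fun j : Fin q => Sum.inr (Sum.inl j)))

lemma mem_Lf (x : Fin p ⊕ Fin q ⊕ Fin (D-1)) :
    x ∈ Lf p q D ↔ (∃ i, x = Sum.inl i) ∨ (∃ j, x = Sum.inr (Sum.inl j)) := by
  simp [Lf, eq_comm]

lemma nbr_inl (hD : 3 ≤ D) (i : Fin p) :
    (barbell p q D).neighborFinset (Sum.inl i) = {pv p q hD 0} := by
  have h0 : (0:ℕ) < D - 1 := by omega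
  ext y
  rw [SimpleGraph.mem_neighborFinset, adj_iff, Finset.mem_singleton, pv_val hD h0]
  rcases y with a | b | w <;> simp [Fin.ext_iff]

lemma nbr_inm (hD : 3 ≤ D) (j : Fin q) :
    (barbell p q D).neighborFinset (Sum.inr (Sum.inl j)) = {pv p q hD (D-2)} := by
  have hd2 : D - 2 < D - 1 := by omega
  ext y
  rw [SimpleGraph.mem_neighborFinset, adj_iff, Finset.mem_singleton, pv_val hD hd2]
  rcases y with a | b | w <;> simp [Fin.ext_iff]

lemma leaves_eq (hp : 1 ≤ p) (hq : 1 ≤ q) (hD : 3 ≤ D) :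
    leavesFinset (barbell p q D) = Lf p q D := by
  ext x
  rw [leavesFinset, Finset.mem_filter, mem_Lf]
  constructor
  · rintro ⟨-, hdeg⟩
    rcases x with a | b | w
    · exact Or.inl ⟨a, rfl⟩
    · exact Or.inr ⟨b, rfl⟩
    · exfalso
      -- interior vertex has two neighbors
      have two_nbrs : ∃ u v : Fin p ⊕ Fin q ⊕ Fin (D-1), u ≠ v ∧
          (barbell p q D).Adj (Sum.inr (Sum.inr w)) u ∧
          (barbell p q D).Adj (Sum.inr (Sum.inr w)) v := by
        by_cases h1 : (w : ℕ) = 0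
        · refine ⟨Sum.inl ⟨0, by omega⟩, Sum.inr (Sum.inr ⟨1, by omega⟩), by simp, ?_, ?_⟩
          · rw [adj_iff]; simp [h1]
          · rw [adj_iff]; constructor
            · simp [Fin.ext_iff]; omega
            · left; simp [h1]
        · by_cases h2 : (w : ℕ) = D - 2
          · refine ⟨Sum.inr (Sum.inl ⟨0, by omega⟩),
              Sum.inr (Sum.inr ⟨(w:ℕ) - 1, by omega⟩), by simp, ?_, ?_⟩
            · rw [adj_iff]; simp [h2]
            · rw [adj_iff]; constructor
              · simp [Fin.ext_iff]; omega
              · right; simp; omega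
          · have hw1 : (w:ℕ) + 1 < D - 1 := by
              have := w.isLt; omega
            refine ⟨Sum.inr (Sum.inr ⟨(w:ℕ) + 1, by omega⟩),
              Sum.inr (Sum.inr ⟨(w:ℕ) - 1, by omega⟩), by simp [Fin.ext_iff]; omega, ?_, ?_⟩
            · rw [adj_iff]; constructor
              · simp [Fin.ext_iff] <;> omega
              · left; simp
            · rw [adj_iff]; constructor
              · simp [Fin.ext_iff]; omega
              · right; simp; omega
      obtain ⟨u, v, huv, hu, hv⟩ := two_nbrs
      have hsub : ({u, v} : Finset _) ⊆ (barbell p q D).neighborFinset (Sum.inr (Sum.inr w)) := by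
        intro z hz
        rw [SimpleGraph.mem_neighborFinset]
        rcases Finset.mem_insert.1 hz with rfl | hz
        · exact hu
        · rw [Finset.mem_singleton] at hz; subst hz; exact hv
      have h2le : 2 ≤ ((barbell p q D).neighborFinset (Sum.inr (Sum.inr w))).card := by
        calc 2 = ({u, v} : Finset _).card := (Finset.card_pair huv).symm
        _ ≤ _ := Finset.card_le_card hsub
      rw [SimpleGraph.card_neighborFinset_eq_degree] at h2le
      omega
  · rintro (⟨i, rfl⟩ | ⟨j, rfl⟩)
    · refine ⟨Finset.mem_univ _, ?_⟩
      rw [← SimpleGraph.card_neighborFinset_eq_degree, nbr_inl hD, Finset.card_singleton]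
    · refine ⟨Finset.mem_univ _, ?_⟩
      rw [← SimpleGraph.card_neighborFinset_eq_degree, nbr_inm hD, Finset.card_singleton]

lemma sum_Lf (g : Fin p ⊕ Fin q ⊕ Fin (D-1) → ℝ) :
    ∑ x ∈ Lf p q D, g x
      = (∑ i : Fin p, g (Sum.inl i)) + ∑ j : Fin q, g (Sum.inr (Sum.inl j)) := by
  rw [Lf, Finset.sum_union, Finset.sum_image (by simp; exact Sum.inl_injective),
    Finset.sum_image (by simp; exact Sum.inr_injective.comp Sum.inl_injective)]
  simp [Finset.disjoint_left]

lemma card_Lf : (Lf p q D).card = p + q := by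
  rw [Lf, Finset.card_union_of_disjoint (by simp [Finset.disjoint_left])]
  rw [Finset.card_image_of_injective _ (fun a b => by simp),
    Finset.card_image_of_injective _ (fun a b => by simp)]
  simp

lemma dE_nonneg {V : Type*} [Fintype V] (G : SimpleGraph V) (f : V → ℝ) :
    0 ≤ dirichletEnergy G f := by
  unfold dirichletEnergy
  apply div_nonneg _ (by norm_num)
  apply Finset.sum_nonneg; intro x _
  apply Finset.sum_nonneg; intro y _
  split <;> positivity

section Steklov

/-- restriction to the boundary -/
noncomputable abbrev RB (p q D : ℕ) :
    ((Fin p ⊕ Fin q ⊕ Fin (D-1)) → ℝ) →ₗ[ℝ] ({v // v ∈ Lf p q D} → ℝ) :=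
  LinearMap.funLeft ℝ ℝ (fun x : {v // v ∈ Lf p q D} => (x : Fin p ⊕ Fin q ⊕ Fin (D-1)))

lemma Q_pos {f : (Fin p ⊕ Fin q ⊕ Fin (D-1)) → ℝ} (h : RB p q D f ≠ 0) :
    0 < ∑ x ∈ Lf p q D, (f x) ^ 2 := by
  have : ∃ b : {v // v ∈ Lf p q D}, f ↑b ≠ 0 := by
    by_contra hc
    push_neg at hc
    exact h (funext fun b => hc b)
  obtain ⟨b, hb⟩ := this
  refine Finset.sum_pos' (fun x _ => sq_nonneg _) ⟨↑b, b.2, by positivity⟩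

lemma exists_f_of_inf {F : Submodule ℝ ((Fin p ⊕ Fin q ⊕ Fin (D-1)) → ℝ)}
    {W : Submodule ℝ ({v // v ∈ Lf p q D} → ℝ)}
    (h : 0 < Module.finrank ℝ ((F.map (RB p q D)) ⊓ W : Submodule ℝ _)) :
    ∃ f ∈ F, RB p q D f ≠ 0 ∧ RB p q D f ∈ W := by
  have hne : ((F.map (RB p q D)) ⊓ W) ≠ ⊥ := by
    intro hbot
    rw [hbot, finrank_bot] at h
    omega
  obtain ⟨g, hg, hg0⟩ := Submodule.exists_mem_ne_zero_of_ne_bot hne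
  obtain ⟨f, hf, rfl⟩ := hg.1
  exact ⟨f, hf, hg0, hg.2⟩

lemma inf_rank_lb {M : Type*} [AddCommGroup M] [Module ℝ M] [FiniteDimensional ℝ M]
    (U W : Submodule ℝ M) :
    Module.finrank ℝ U + Module.finrank ℝ W
      ≤ Module.finrank ℝ M + Module.finrank ℝ (U ⊓ W : Submodule ℝ M) := by
  rw [← Submodule.finrank_sup_add_finrank_inf_eq U W]
  have := Submodule.finrank_le (U ⊔ W)
  omega

lemma finrank_boundary : Module.finrank ℝ ({v // v ∈ Lf p q D} → ℝ) = p + q := by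
  rw [Module.finrank_pi]
  rw [Fintype.card_coe, card_Lf]

lemma sig1 (hp : 1 ≤ p) (hq : 1 ≤ q) (hD : 3 ≤ D) : steklovEig (barbell p q D) (Lf p q D) 1 = 0 := by
  set S := { t : ℝ | ∃ F : Submodule ℝ ((Fin p ⊕ Fin q ⊕ Fin (D-1)) → ℝ),
    Module.finrank ℝ (F.map (RB p q D)) = 1 ∧
    ∀ f ∈ F, dirichletEnergy (barbell p q D) f ≤ t * ∑ x ∈ Lf p q D, (f x) ^ 2 } with hS
  have mem0 : (0:ℝ) ∈ S := by
    refine ⟨Submodule.span ℝ {(fun _ => 1 : (Fin p ⊕ Fin q ⊕ Fin (D-1)) → ℝ)}, ?_, ?_⟩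
    · rw [Submodule.map_span, Set.image_singleton]
      rw [finrank_span_singleton]
      intro hc
      have := congrFun hc ⟨Sum.inl ⟨0, hp⟩, by rw [mem_Lf]; exact Or.inl ⟨_, rfl⟩⟩
      simp [RB] at this
    · intro f hf
      obtain ⟨a, rfl⟩ := Submodule.mem_span_singleton.1 hf
      have hE : dirichletEnergy (barbell p q D) (a • fun _ => (1:ℝ)) = 0 := by
        rw [energy_eq hD]
        simp
      rw [hE, zero_mul]
  have lb : ∀ t ∈ S, (0:ℝ) ≤ t := by
    rintro t ⟨F, hrk, hb⟩
    have hinf : 0 < Module.finrank ℝ ((F.map (RB p q D)) ⊓ ⊤ : Submodule ℝ _) := by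
      rw [inf_top_eq]
      omega
    obtain ⟨f, hf, hf0, -⟩ := exists_f_of_inf hinf
    have hQ := Q_pos hf0
    have hE := dE_nonneg (barbell p q D) f
    have := hb f hf
    nlinarith
  rw [steklovEig]
  exact le_antisymm (csInf_le ⟨0, lb⟩ mem0) (le_csInf ⟨0, mem0⟩ lb)

/-- weighted sum as a linear map -/
noncomputable def wsum {α : Type*} [Fintype α] (w : α → ℝ) : (α → ℝ) →ₗ[ℝ] ℝ where
  toFun g := ∑ b, w b * g b
  map_add' g h := by
    simp only [Pi.add_apply, mul_add]
    rw [Finset.sum_add_distrib]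
  map_smul' c g := by
    simp only [Pi.smul_apply, smul_eq_mul, RingHom.id_apply]
    rw [Finset.mul_sum]
    exact Finset.sum_congr rfl fun b _ => by ring

/-- weight picking out the `Fin p` leaves -/
noncomputable def wv1 (p q D : ℕ) : (Fin p ⊕ Fin q ⊕ Fin (D-1)) → ℝ :=
  fun x => if ∃ i, x = Sum.inl i then 1 else 0

noncomputable def wv2 (p q D : ℕ) : (Fin p ⊕ Fin q ⊕ Fin (D-1)) → ℝ :=
  fun x => if ∃ j, x = Sum.inr (Sum.inl j) then 1 else 0

lemma wsum1_R (f : (Fin p ⊕ Fin q ⊕ Fin (D-1)) → ℝ) :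
    wsum (fun b : {v // v ∈ Lf p q D} => wv1 p q D ↑b) (RB p q D f)
      = ∑ i : Fin p, f (Sum.inl i) := by
  show (∑ b : {v // v ∈ Lf p q D}, wv1 p q D ↑b * f ↑b) = _
  rw [Finset.sum_coe_sort (Lf p q D) (fun x => wv1 p q D x * f x), sum_Lf]
  have h1 : ∀ i : Fin p, wv1 p q D (Sum.inl i) = 1 := fun i => if_pos ⟨i, rfl⟩
  have h2 : ∀ j : Fin q, wv1 p q D (Sum.inr (Sum.inl j)) = 0 := fun j => if_neg (by simp)
  simp only [h1, h2, one_mul, zero_mul, Finset.sum_const_zero, add_zero]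

lemma wsum2_R (f : (Fin p ⊕ Fin q ⊕ Fin (D-1)) → ℝ) :
    wsum (fun b : {v // v ∈ Lf p q D} => wv2 p q D ↑b) (RB p q D f)
      = ∑ j : Fin q, f (Sum.inr (Sum.inl j)) := by
  show (∑ b : {v // v ∈ Lf p q D}, wv2 p q D ↑b * f ↑b) = _
  rw [Finset.sum_coe_sort (Lf p q D) (fun x => wv2 p q D x * f x), sum_Lf]
  have h1 : ∀ i : Fin p, wv2 p q D (Sum.inl i) = 0 := fun i => if_neg (by simp)
  have h2 : ∀ j : Fin q, wv2 p q D (Sum.inr (Sum.inl j)) = 1 := fun j => if_pos ⟨j, rfl⟩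
  simp only [h1, h2, one_mul, zero_mul, Finset.sum_const_zero, zero_add]

lemma sum_sub_sq {n : ℕ} (g : Fin n → ℝ) (c : ℝ) :
    ∑ i, (g i - c)^2 = (∑ i, (g i)^2) - 2*c*(∑ i, g i) + n*c^2 := by
  have h : ∀ i : Fin n, (g i - c)^2 = (g i)^2 - 2*c*(g i) + c^2 := fun i => by ring
  rw [Finset.sum_congr rfl (fun i _ => h i), Finset.sum_add_distrib, Finset.sum_sub_distrib,
    ← Finset.mul_sum, Finset.sum_const, Finset.card_univ, Fintype.card_fin, nsmul_eq_mul]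

lemma sigk (hp : 1 ≤ p) (hq : 1 ≤ q) (hD : 3 ≤ D) (k : ℕ) (h3 : 3 ≤ k) (hk : k ≤ p + q) :
    steklovEig (barbell p q D) (Lf p q D) k = 1 := by
  set S := { t : ℝ | ∃ F : Submodule ℝ ((Fin p ⊕ Fin q ⊕ Fin (D-1)) → ℝ),
    Module.finrank ℝ (F.map (RB p q D)) = k ∧
    ∀ f ∈ F, dirichletEnergy (barbell p q D) f ≤ t * ∑ x ∈ Lf p q D, (f x) ^ 2 } with hS
  have hcard : k ≤ Fintype.card {v // v ∈ Lf p q D} := by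
    rw [Fintype.card_coe, card_Lf]; exact hk
  obtain ⟨e⟩ : Nonempty (Fin k ↪ {v // v ∈ Lf p q D}) :=
    Function.Embedding.nonempty_of_card_le (by simpa using hcard)
  have mem1 : (1:ℝ) ∈ S := by
    refine ⟨Submodule.span ℝ (Set.range fun i : Fin k =>
      (Pi.single ((e i : {v // v ∈ Lf p q D}) : Fin p ⊕ Fin q ⊕ Fin (D-1)) 1 :
        (Fin p ⊕ Fin q ⊕ Fin (D-1)) → ℝ)), ?_, ?_⟩
    · rw [Submodule.map_span, ← Set.range_comp]
      have hcomp : ((RB p q D) ∘ fun i : Fin k =>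
          (Pi.single ((e i : {v // v ∈ Lf p q D}) : Fin p ⊕ Fin q ⊕ Fin (D-1)) 1 :
            (Fin p ⊕ Fin q ⊕ Fin (D-1)) → ℝ))
          = fun i : Fin k => (Pi.single (e i) 1 : {v // v ∈ Lf p q D} → ℝ) := by
        funext i
        funext b
        simp only [Function.comp_apply, LinearMap.funLeft_apply]
        by_cases hb : b = e i
        · subst hb; simp
        · rw [Pi.single_eq_of_ne hb, Pi.single_eq_of_ne (fun hc => hb (Subtype.ext hc))]
      rw [hcomp]
      have hli : LinearIndependent ℝ (fun i : Fin k =>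
          (Pi.single (e i) 1 : {v // v ∈ Lf p q D} → ℝ)) := by
        have hb := (Pi.basisFun ℝ {v // v ∈ Lf p q D}).linearIndependent
        have := hb.comp e e.injective
        convert this using 1
        funext i
        simp [Function.comp, Pi.basisFun_apply]
      rw [finrank_span_eq_card hli, Fintype.card_fin]
    · intro f hf
      rw [Submodule.mem_span_range_iff_exists_fun] at hf
      obtain ⟨c, rfl⟩ := hf
      set f := ∑ i : Fin k, c i • (Pi.single ((e i : {v // v ∈ Lf p q D}) :
        Fin p ⊕ Fin q ⊕ Fin (D-1)) 1 : (Fin p ⊕ Fin q ⊕ Fin (D-1)) → ℝ) with hfdef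
      have hval : ∀ n : ℕ, f (pv p q hD n) = 0 := by
        intro n
        rw [hfdef, Finset.sum_apply]
        apply Finset.sum_eq_zero
        intro i _
        have hne : pv p q hD n ≠ ((e i : {v // v ∈ Lf p q D}) :
            Fin p ⊕ Fin q ⊕ Fin (D-1)) := by
          rcases (mem_Lf _).1 (e i).2 with ⟨a, ha⟩ | ⟨b, hb⟩
          · rw [ha]; simp [pv]
          · rw [hb]; simp [pv]
        simp [Pi.single_eq_of_ne hne]
      have hE : dirichletEnergy (barbell p q D) f = ∑ x ∈ Lf p q D, (f x)^2 := by
        rw [energy_eq hD, sum_Lf (fun x => f x ^ 2)]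
        rw [hval 0, hval (D-2)]
        have hz : ∀ n ∈ Finset.range (D-2),
            (f (pv p q hD n) - f (pv p q hD (n+1)))^2 = 0 := by
          intro n _
          rw [hval n, hval (n+1)]
          ring
        rw [Finset.sum_congr rfl hz, Finset.sum_const_zero]
        simp
      rw [hE, one_mul]
  have lb : ∀ t ∈ S, (1:ℝ) ≤ t := by
    rintro t ⟨F, hrk, hb⟩
    set μ := (wsum fun b : {v // v ∈ Lf p q D} => wv1 p q D ↑b).prod
      (wsum fun b : {v // v ∈ Lf p q D} => wv2 p q D ↑b) with hμ
    have hker : p + q ≤ Module.finrank ℝ (LinearMap.ker μ) + 2 := by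
      have h1 := LinearMap.finrank_range_add_finrank_ker μ
      rw [finrank_boundary] at h1
      have h2 : Module.finrank ℝ (LinearMap.range μ) ≤ 2 := by
        have := Submodule.finrank_le (LinearMap.range μ)
        rw [Module.finrank_prod, Module.finrank_self] at this
        omega
      omega
    have hinf : 0 < Module.finrank ℝ
        ((F.map (RB p q D)) ⊓ (LinearMap.ker μ) : Submodule ℝ _) := by
      have := inf_rank_lb (F.map (RB p q D)) (LinearMap.ker μ)
      rw [hrk, finrank_boundary] at this
      omega
    obtain ⟨f, hf, hf0, hfW⟩ := exists_f_of_inf hinf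
    rw [LinearMap.mem_ker, hμ, LinearMap.prod_apply] at hfW
    have hA : (∑ i : Fin p, f (Sum.inl i)) = 0 := by
      have := congrArg Prod.fst hfW
      simpa [wsum1_R] using this
    have hB : (∑ j : Fin q, f (Sum.inr (Sum.inl j))) = 0 := by
      have := congrArg Prod.snd hfW
      simpa [wsum2_R] using this
    have hQE : (∑ x ∈ Lf p q D, (f x)^2) ≤ dirichletEnergy (barbell p q D) f := by
      rw [energy_eq hD, sum_Lf (fun x => f x ^ 2)]
      rw [sum_sub_sq (fun i => f (Sum.inl i)), sum_sub_sq (fun j => f (Sum.inr (Sum.inl j)))]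
      rw [hA, hB]
      have hpath : 0 ≤ ∑ n ∈ Finset.range (D-2),
          (f (pv p q hD n) - f (pv p q hD (n+1)))^2 :=
        Finset.sum_nonneg fun n _ => sq_nonneg _
      have h1 : 0 ≤ (p:ℝ) * (f (pv p q hD 0))^2 := by positivity
      have h2 : 0 ≤ (q:ℝ) * (f (pv p q hD (D-2)))^2 := by positivity
      nlinarith
    have hQ := Q_pos hf0
    have := hb f hf
    nlinarith
  rw [steklovEig]
  exact le_antisymm (csInf_le ⟨1, lb⟩ mem1) (le_csInf ⟨1, mem1⟩ lb)

/-- The first nontrivial Steklov eigenfunction of the barbell graph. -/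
noncomputable def phi (p q D : ℕ) : (Fin p ⊕ Fin q ⊕ Fin (D-1)) → ℝ
  | Sum.inl _ => -(q:ℝ) * (((D-2:ℕ):ℝ)*p*q + p + q)
  | Sum.inr (Sum.inl _) => (p:ℝ) * (((D-2:ℕ):ℝ)*p*q + p + q)
  | Sum.inr (Sum.inr w) => -(q:ℝ) * (((D-2:ℕ):ℝ)*p*q + p + q)
      + (q:ℝ)*((p:ℝ)+q) + ((w:ℕ):ℝ) * ((p:ℝ)*q*((p:ℝ)+q))

lemma phi_inl (i : Fin p) :
    phi p q D (Sum.inl i) = -(q:ℝ) * (((D-2:ℕ):ℝ)*p*q + p + q) := rfl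

lemma phi_inm (j : Fin q) :
    phi p q D (Sum.inr (Sum.inl j)) = (p:ℝ) * (((D-2:ℕ):ℝ)*p*q + p + q) := rfl

lemma phi_pv (hD : 3 ≤ D) {n : ℕ} (hn : n < D - 1) :
    phi p q D (pv p q hD n) = -(q:ℝ) * (((D-2:ℕ):ℝ)*p*q + p + q)
      + (q:ℝ)*((p:ℝ)+q) + (n:ℝ) * ((p:ℝ)*q*((p:ℝ)+q)) := by
  rw [pv_val hD hn]
  rfl

lemma sq_sum_le {α : Type*} (s : Finset α) (g : α → ℝ) :
    (∑ i ∈ s, g i)^2 ≤ (∑ i ∈ s, (g i)^2) * s.card := by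
  have := Finset.sum_mul_sq_le_sq_mul_sq s g (fun _ => 1)
  simpa using this

set_option maxHeartbeats 1600000 in
lemma sig2 (hp : 1 ≤ p) (hq : 1 ≤ q) (hD : 3 ≤ D) :
    steklovEig (barbell p q D) (Lf p q D) 2
      = ((p:ℝ)+q) / (((D-2:ℕ):ℝ)*p*q + p + q) := by
  have h0 : (0:ℕ) < D - 1 := by omega
  have hd2 : D - 2 < D - 1 := by omega
  have hp' : (1:ℝ) ≤ (p:ℝ) := by exact_mod_cast hp
  have hq' : (1:ℝ) ≤ (q:ℝ) := by exact_mod_cast hq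
  have hd' : (1:ℝ) ≤ ((D-2:ℕ):ℝ) := by exact_mod_cast (by omega : 1 ≤ D - 2)
  have hN0 : (0:ℝ) < ((D-2:ℕ):ℝ)*p*q + p + q := by
    have h1 : (0:ℝ) ≤ ((D-2:ℕ):ℝ)*p*q := by positivity
    linarith
  set σ : ℝ := ((p:ℝ)+q) / (((D-2:ℕ):ℝ)*p*q + p + q) with hσ
  set S := { t : ℝ | ∃ F : Submodule ℝ ((Fin p ⊕ Fin q ⊕ Fin (D-1)) → ℝ),
    Module.finrank ℝ (F.map (RB p q D)) = 2 ∧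
    ∀ f ∈ F, dirichletEnergy (barbell p q D) f ≤ t * ∑ x ∈ Lf p q D, (f x) ^ 2 } with hS
  have memσ : σ ∈ S := by
    refine ⟨Submodule.span ℝ (Set.range ![(fun _ => 1 : (Fin p ⊕ Fin q ⊕ Fin (D-1)) → ℝ),
      phi p q D]), ?_, ?_⟩
    · rw [Submodule.map_span, ← Set.range_comp]
      have hcomp : (⇑(RB p q D) ∘ ![(fun _ => 1 : (Fin p ⊕ Fin q ⊕ Fin (D-1)) → ℝ), phi p q D])
          = ![(fun _ => 1 : {v // v ∈ Lf p q D} → ℝ),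
              fun b : {v // v ∈ Lf p q D} => phi p q D ↑b] := by
        funext i
        fin_cases i <;> rfl
      rw [hcomp]
      have hli : LinearIndependent ℝ ![(fun _ => 1 : {v // v ∈ Lf p q D} → ℝ),
          fun b : {v // v ∈ Lf p q D} => phi p q D ↑b] := by
        rw [linearIndependent_fin2]
        constructor
        · intro hc
          have := congrFun hc ⟨Sum.inl ⟨0, hp⟩, by rw [mem_Lf]; exact Or.inl ⟨_, rfl⟩⟩
          simp only [Matrix.cons_val_one, Matrix.head_cons, Matrix.cons_val_zero, Pi.zero_apply] at this
          rw [phi_inl] at this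
          nlinarith
        · intro a hc
          have h1 := congrFun hc ⟨Sum.inl ⟨0, hp⟩, by rw [mem_Lf]; exact Or.inl ⟨_, rfl⟩⟩
          have h2 := congrFun hc ⟨Sum.inr (Sum.inl ⟨0, hq⟩), by
            rw [mem_Lf]; exact Or.inr ⟨_, rfl⟩⟩
          simp only [Matrix.cons_val_one, Matrix.head_cons, Matrix.cons_val_zero,
            Pi.smul_apply, smul_eq_mul] at h1 h2
          rw [phi_inl] at h1
          rw [phi_inm] at h2
          nlinarith
      rw [finrank_span_eq_card hli, Fintype.card_fin]
    · intro f hf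
      rw [Submodule.mem_span_range_iff_exists_fun] at hf
      obtain ⟨c, rfl⟩ := hf
      set s : ℝ := c 0 with hs
      set t : ℝ := c 1 with ht
      have hfx : ∀ x, (∑ i : Fin 2, c i • ![(fun _ => 1 : (Fin p ⊕ Fin q ⊕ Fin (D-1)) → ℝ),
          phi p q D] i) x = s + t * phi p q D x := by
        intro x
        rw [Finset.sum_apply, Fin.sum_univ_two]
        simp [hs, ht]
      set f := ∑ i : Fin 2, c i • ![(fun _ => 1 : (Fin p ⊕ Fin q ⊕ Fin (D-1)) → ℝ),
          phi p q D] i with hfdef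
      have hE1 : ∑ i : Fin p, (f (Sum.inl i) - f (pv p q hD 0))^2
          = (p:ℝ) * (t*((q:ℝ)*((p:ℝ)+q)))^2 := by
        have hterm : ∀ i : Fin p, (f (Sum.inl i) - f (pv p q hD 0))^2
            = (t*((q:ℝ)*((p:ℝ)+q)))^2 := by
          intro i
          rw [hfx, hfx, phi_inl, phi_pv hD h0]
          push_cast
          ring
        rw [Finset.sum_congr rfl (fun i _ => hterm i), Finset.sum_const, Finset.card_univ,
          Fintype.card_fin, nsmul_eq_mul]
      have hE2 : ∑ j : Fin q, (f (Sum.inr (Sum.inl j)) - f (pv p q hD (D-2)))^2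
          = (q:ℝ) * (t*((p:ℝ)*((p:ℝ)+q)))^2 := by
        have hterm : ∀ j : Fin q, (f (Sum.inr (Sum.inl j)) - f (pv p q hD (D-2)))^2
            = (t*((p:ℝ)*((p:ℝ)+q)))^2 := by
          intro j
          rw [hfx, hfx, phi_inm, phi_pv hD hd2]
          push_cast
          ring
        rw [Finset.sum_congr rfl (fun j _ => hterm j), Finset.sum_const, Finset.card_univ,
          Fintype.card_fin, nsmul_eq_mul]
      have hE3 : ∑ n ∈ Finset.range (D-2), (f (pv p q hD n) - f (pv p q hD (n+1)))^2
          = ((D-2:ℕ):ℝ) * (t*((p:ℝ)*q*((p:ℝ)+q)))^2 := by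
        have hterm : ∀ n ∈ Finset.range (D-2), (f (pv p q hD n) - f (pv p q hD (n+1)))^2
            = (t*((p:ℝ)*q*((p:ℝ)+q)))^2 := by
          intro n hn
          rw [Finset.mem_range] at hn
          rw [hfx, hfx, phi_pv hD (by omega), phi_pv hD (by omega)]
          push_cast
          ring
        rw [Finset.sum_congr rfl hterm, Finset.sum_const, Finset.card_range, nsmul_eq_mul]
      have hQ : ∑ x ∈ Lf p q D, (f x)^2
          = (p:ℝ) * (s - t*((q:ℝ)*(((D-2:ℕ):ℝ)*p*q + p + q)))^2
            + (q:ℝ) * (s + t*((p:ℝ)*(((D-2:ℕ):ℝ)*p*q + p + q)))^2 := by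
        rw [sum_Lf (fun x => f x ^ 2)]
        have hterm1 : ∀ i : Fin p, (f (Sum.inl i))^2
            = (s - t*((q:ℝ)*(((D-2:ℕ):ℝ)*p*q + p + q)))^2 := by
          intro i
          rw [hfx, phi_inl]
          ring
        have hterm2 : ∀ j : Fin q, (f (Sum.inr (Sum.inl j)))^2
            = (s + t*((p:ℝ)*(((D-2:ℕ):ℝ)*p*q + p + q)))^2 := by
          intro j
          rw [hfx, phi_inm]
        rw [Finset.sum_congr rfl (fun i _ => hterm1 i),
          Finset.sum_congr rfl (fun j _ => hterm2 j), Finset.sum_const, Finset.sum_const,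
          Finset.card_univ, Finset.card_univ, Fintype.card_fin, Fintype.card_fin,
          nsmul_eq_mul, nsmul_eq_mul]
      rw [energy_eq hD, hE1, hE2, hE3, hQ, hσ, div_mul_eq_mul_div, le_div_iff₀ hN0]
      nlinarith [sq_nonneg (((p:ℝ)+q)*s), sq_nonneg (t*((p:ℝ)+q))]
  have lb : ∀ t ∈ S, σ ≤ t := by
    rintro t ⟨F, hrk, hb⟩
    clear memσ hS S
    set ν := wsum (fun _ : {v // v ∈ Lf p q D} => (1:ℝ)) with hν
    have hker : p + q ≤ Module.finrank ℝ (LinearMap.ker ν) + 1 := by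
      have h1 := LinearMap.finrank_range_add_finrank_ker ν
      rw [finrank_boundary] at h1
      have h2 : Module.finrank ℝ (LinearMap.range ν) ≤ 1 := by
        have := Submodule.finrank_le (LinearMap.range ν)
        rw [Module.finrank_self] at this
        omega
      omega
    have hinf : 0 < Module.finrank ℝ
        ((F.map (RB p q D)) ⊓ (LinearMap.ker ν) : Submodule ℝ _) := by
      have := inf_rank_lb (F.map (RB p q D)) (LinearMap.ker ν)
      rw [hrk, finrank_boundary] at this
      omega
    obtain ⟨f, hf, hf0, hfW⟩ := exists_f_of_inf hinf
    rw [LinearMap.mem_ker] at hfW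
    have hAB : (∑ i : Fin p, f (Sum.inl i)) + (∑ j : Fin q, f (Sum.inr (Sum.inl j))) = 0 := by
      have : ν (RB p q D f) = ∑ x ∈ Lf p q D, f x := by
        show (∑ b : {v // v ∈ Lf p q D}, (1:ℝ) * f ↑b) = _
        simp only [one_mul]
        exact Finset.sum_coe_sort (Lf p q D) f
      rw [hfW, sum_Lf] at this
      linarith [this.symm]
    set A := ∑ i : Fin p, f (Sum.inl i) with hA
    set Sa := ∑ i : Fin p, (f (Sum.inl i))^2 with hSa
    set Sb := ∑ j : Fin q, (f (Sum.inr (Sum.inl j)))^2 with hSb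
    set x0 := f (pv p q hD 0) with hx
    set y0 := f (pv p q hD (D-2)) with hy
    set P := ∑ n ∈ Finset.range (D-2), (f (pv p q hD n) - f (pv p q hD (n+1)))^2 with hP
    set d : ℝ := ((D-2:ℕ):ℝ) with hd
    set N : ℝ := d*p*q + p + q with hNdef
    -- Cauchy-Schwarz bounds
    have hCS1 : A^2 ≤ Sa * p := by
      have := sq_sum_le Finset.univ (fun i : Fin p => f (Sum.inl i))
      simpa [hA, hSa] using this
    have hCS2 : A^2 ≤ Sb * q := by
      have h' := sq_sum_le Finset.univ (fun j : Fin q => f (Sum.inr (Sum.inl j)))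
      have hBA : (∑ j : Fin q, f (Sum.inr (Sum.inl j))) = -A := by linarith
      rw [hBA] at h'
      simpa [hSb] using h'
    have htel : ∑ n ∈ Finset.range (D-2), (f (pv p q hD n) - f (pv p q hD (n+1))) = x0 - y0 :=
      Finset.sum_range_sub' (fun n => f (pv p q hD n)) (D-2)
    have hCS3 : (x0 - y0)^2 ≤ P * d := by
      have := sq_sum_le (Finset.range (D-2)) (fun n => f (pv p q hD n) - f (pv p q hD (n+1)))
      rw [htel, Finset.card_range] at this
      simpa [hP, hd] using this
    have hEf : dirichletEnergy (barbell p q D) f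
        = (Sa - 2*x0*A + p*x0^2) + (Sb + 2*y0*A + q*y0^2) + P := by
      rw [energy_eq hD f]
      rw [sum_sub_sq (fun i => f (Sum.inl i)) x0, sum_sub_sq (fun j => f (Sum.inr (Sum.inl j))) y0]
      have hBA : (∑ j : Fin q, f (Sum.inr (Sum.inl j))) = -A := by linarith
      rw [hBA]
      simp only [← hA, ← hSa, ← hSb, ← hP]
      ring
    have hQf : ∑ x ∈ Lf p q D, (f x)^2 = Sa + Sb := by
      rw [sum_Lf (fun x => f x ^ 2)]
    have hQpos := Q_pos hf0
    rw [hQf] at hQpos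
    have hbf := hb f hf
    rw [hQf] at hbf
    clear hb hf hfW hf0 hinf hker hrk hν
    clear ν F
    -- the main inequality
    have hPnn : (0:ℝ) ≤ P := Finset.sum_nonneg fun n _ => sq_nonneg _
    clear_value A Sa Sb x0 y0 P d N
    have hd0 : (0:ℝ) < d := by linarith [hd']
    have hdp1 : (0:ℝ) < d*p + 1 := by positivity
    have hid : (d*p+1)*d*(((Sa - 2*x0*A + p*x0^2) + (Sb + 2*y0*A + q*y0^2) + P)*N
          - ((p:ℝ)+q)*(Sa+Sb))
        = N*((d*p+1)*x0 - d*A - y0)^2 + d*(d*p*A + N*y0)^2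
          + (d*p+1)*d^2*((q:ℝ)*(Sa*p - A^2) + (p:ℝ)*(Sb*q - A^2))
          + (d*p+1)*N*(P*d - (x0-y0)^2) := by
      rw [hNdef]
      ring
    have hNnn : (0:ℝ) ≤ N := le_of_lt hN0
    have hG : (0:ℝ) ≤ ((Sa - 2*x0*A + p*x0^2) + (Sb + 2*y0*A + q*y0^2) + P)*N
        - ((p:ℝ)+q)*(Sa+Sb) := by
      have t1 : (0:ℝ) ≤ N*((d*p+1)*x0 - d*A - y0)^2 :=
        mul_nonneg hNnn (sq_nonneg _)
      have t2 : (0:ℝ) ≤ d*(d*p*A + N*y0)^2 := mul_nonneg (le_of_lt hd0) (sq_nonneg _)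
      have t3 : (0:ℝ) ≤ (d*p+1)*d^2*((q:ℝ)*(Sa*p - A^2) + (p:ℝ)*(Sb*q - A^2)) := by
        have hc1 : (0:ℝ) ≤ (d*p+1)*d^2 := by positivity
        apply mul_nonneg hc1
        have hq0 : (0:ℝ) ≤ (q:ℝ) := by linarith
        have hp0 : (0:ℝ) ≤ (p:ℝ) := by linarith
        have hSaA : (0:ℝ) ≤ Sa*p - A^2 := by linarith
        have hSbA : (0:ℝ) ≤ Sb*q - A^2 := by linarith
        have t3a : (0:ℝ) ≤ (q:ℝ)*(Sa*p - A^2) := mul_nonneg hq0 hSaA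
        have t3b : (0:ℝ) ≤ (p:ℝ)*(Sb*q - A^2) := mul_nonneg hp0 hSbA
        linarith
      have t4 : (0:ℝ) ≤ (d*p+1)*N*(P*d - (x0-y0)^2) := by
        apply mul_nonneg (mul_nonneg (le_of_lt hdp1) hNnn)
        linarith
      have hGc : (0:ℝ) ≤ (d*p+1)*d*(((Sa - 2*x0*A + p*x0^2) + (Sb + 2*y0*A + q*y0^2) + P)*N
          - ((p:ℝ)+q)*(Sa+Sb)) := by
        rw [hid]
        linarith
      by_contra hneg
      push_neg at hneg
      have := mul_neg_of_pos_of_neg (mul_pos hdp1 hd0) hneg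
      linarith
    have hσQ : σ * (Sa + Sb) ≤ dirichletEnergy (barbell p q D) f := by
      rw [hσ, hEf, div_mul_eq_mul_div, div_le_iff₀ hN0]
      linarith
    have : σ * (Sa + Sb) ≤ t * (Sa + Sb) := le_trans hσQ hbf
    exact le_of_mul_le_mul_right this hQpos
  rw [steklovEig]
  exact le_antisymm (csInf_le ⟨σ, lb⟩ memσ) (le_csInf ⟨σ, memσ⟩ lb)


end Steklov

end Stmt11

/-- Let `p, q ≥ 1` and `D ≥ 3` be integers, and let `T = B(p,q,D)` be the
barbell graph with leaves as boundary. Then the Steklov eigenvalues of `T` are `σ₁ = 0`,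
`σ₂ = (p+q)/((D-2)pq + p + q)`, and `σₖ = 1` for all `3 ≤ k ≤ p+q`. -/
theorem stmt11 (p q D : ℕ) (hp : 1 ≤ p) (hq : 1 ≤ q) (hD : 3 ≤ D) :
    steklovEig (barbell p q D) (leavesFinset (barbell p q D)) 1 = 0 ∧
    steklovEig (barbell p q D) (leavesFinset (barbell p q D)) 2 =
      ((p : ℝ) + q) / (((D : ℝ) - 2) * p * q + p + q) ∧
    ∀ k : ℕ, 3 ≤ k → k ≤ p + q →
      steklovEig (barbell p q D) (leavesFinset (barbell p q D)) k = 1 := by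
  rw [Stmt11.leaves_eq hp hq hD]
  refine ⟨Stmt11.sig1 hp hq hD, ?_, fun k h3 hk => Stmt11.sigk hp hq hD k h3 hk⟩
  rw [Stmt11.sig2 hp hq hD]
  have hcast : ((D-2:ℕ):ℝ) = (D:ℝ) - 2 := by
    rw [Nat.cast_sub (by omega : 2 ≤ D)]
    norm_num
  rw [hcast]
end

section
/- Let b ≥ 3 and r ≥ 1 be integers, and let n be an integer with 2r + b − 1 ≤ n ≤ br + 1. Then there exists a tree with b leaves and n vertices whose first nontrivial Steklov eigenvalue equals 1/r; in particular σ_{2,max}(b,n) ≥ 1/r. -/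
open scoped BigOperators
open Classical

namespace Stmt13

def par (r m v : ℕ) : ℕ :=
  if v ≤ 2*r then v - 1 else if v < 2*r+1+m then r else v - m

lemma par_le (r m v : ℕ) : par r m v ≤ v := by
  unfold par; split_ifs with h1 h2 <;> omega

def spider (n r m : ℕ) : SimpleGraph (Fin n) where
  Adj u v := (u:ℕ) ≠ (v:ℕ) ∧ (par r m u = v ∨ par r m v = u)
  symm := ⟨fun _ _ ⟨h1, h2⟩ => ⟨h1.symm, h2.symm⟩⟩
  loopless := ⟨fun _ h => h.1 rfl⟩

lemma spider_adj {n r m : ℕ} (u v : Fin n) :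
    (spider n r m).Adj u v ↔ (u:ℕ) ≠ (v:ℕ) ∧ (par r m u = v ∨ par r m v = u) := Iff.rfl

lemma par_lt (r m v : ℕ) (hm : 1 ≤ m) (hv : 1 ≤ v) : par r m v < v := by
  unfold par; split_ifs with h1 h2 <;> omega

lemma spider_isAcyclic {n r m : ℕ} : (spider n r m).IsAcyclic := by
  intro v0 c hc
  obtain ⟨M, hMmem, hMmax⟩ : ∃ M ∈ c.support, ∀ x ∈ c.support, x ≤ M := by
    refine ⟨c.support.toFinset.max' ?_, ?_, ?_⟩
    · rw [Finset.nonempty_iff_ne_empty]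
      simp only [ne_eq, List.toFinset_eq_empty_iff]
      exact SimpleGraph.Walk.support_ne_nil c
    · rw [← List.mem_toFinset]; exact Finset.max'_mem _ _
    · intro x hx; exact Finset.le_max' _ _ (List.mem_toFinset.2 hx)
  obtain ⟨c', hc', hsupp⟩ : ∃ c' : (spider n r m).Walk M M, c'.IsCycle ∧
      ∀ x ∈ c'.support, x ≤ M := by
    refine ⟨c.rotate M hMmem, hc.rotate hMmem, ?_⟩
    intro x hx
    rcases (SimpleGraph.Walk.mem_support_iff _).1 hx with h | h
    · exact h.le
    · have hrot := SimpleGraph.Walk.support_rotate c M hMmem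
      exact hMmax x (List.mem_of_mem_tail (hrot.mem_iff.1 h))
  clear hc hMmem hMmax c
  cases c' with
  | nil => exact hc'.ne_nil rfl
  | cons hadj p =>
    rename_i u
    have hu_ne : (u:ℕ) ≠ (M:ℕ) := fun h => ((spider_adj M u).1 hadj).1 (by omega)
    have hu_lt : (u:ℕ) < (M:ℕ) := by
      have hmem : u ∈ (SimpleGraph.Walk.cons hadj p).support := by
        rw [SimpleGraph.Walk.support_cons]
        exact List.mem_cons_of_mem _ (SimpleGraph.Walk.start_mem_support p)
      have := hsupp u hmem
      have : (u:ℕ) ≤ (M:ℕ) := this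
      omega
    have hu_par : par r m (M:ℕ) = (u:ℕ) := by
      rcases ((spider_adj M u).1 hadj).2 with h | h
      · exact h
      · exfalso; have := par_le r m u; omega
    have hMu : M ≠ u := fun h => hu_ne (by rw [h])
    obtain ⟨w, hadj2, q, hq⟩ := SimpleGraph.Walk.exists_eq_cons_of_ne hMu p.reverse
    have hw_ne : (w:ℕ) ≠ (M:ℕ) := fun h => ((spider_adj M w).1 hadj2).1 (by omega)
    have hw_mem : w ∈ p.support := by
      have : w ∈ p.reverse.support := by
        rw [hq, SimpleGraph.Walk.support_cons]
        exact List.mem_cons_of_mem _ (SimpleGraph.Walk.start_mem_support q)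
      rwa [SimpleGraph.Walk.support_reverse, List.mem_reverse] at this
    have hw_lt : (w:ℕ) < (M:ℕ) := by
      have hmem : w ∈ (SimpleGraph.Walk.cons hadj p).support := by
        rw [SimpleGraph.Walk.support_cons]
        exact List.mem_cons_of_mem _ hw_mem
      have : (w:ℕ) ≤ (M:ℕ) := hsupp w hmem
      omega
    have hw_par : par r m (M:ℕ) = (w:ℕ) := by
      rcases ((spider_adj M w).1 hadj2).2 with h | h
      · exact h
      · exfalso; have := par_le r m w; omega
    have hwu : w = u := Fin.ext (by omega)
    -- the edge s(M,u) appears twice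
    have hnodup := hc'.isCircuit.isTrail.edges_nodup
    rw [SimpleGraph.Walk.edges_cons] at hnodup
    have hnot := (List.nodup_cons.1 hnodup).1
    apply hnot
    have : s(M, w) ∈ p.reverse.edges := by
      rw [hq, SimpleGraph.Walk.edges_cons]; exact List.mem_cons_self
    rw [SimpleGraph.Walk.edges_reverse, List.mem_reverse] at this
    rwa [hwu] at this

lemma spider_connected {n r m : ℕ} (hm : 1 ≤ m) (hn : 1 ≤ n) :
    (spider n r m).Connected := by
  have h0 : (0:ℕ) < n := hn
  have key : ∀ k : ℕ, ∀ v : Fin n, (v:ℕ) ≤ k → (spider n r m).Reachable v ⟨0, h0⟩ := by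
    intro k
    induction k with
    | zero =>
      intro v hv
      have : v = (⟨0, h0⟩ : Fin n) := Fin.ext (by simp; omega)
      rw [this]
    | succ k ih =>
      intro v hv
      by_cases hv0 : (v:ℕ) = 0
      · rw [show v = (⟨0, h0⟩ : Fin n) from Fin.ext hv0]
      · have hlt : par r m (v:ℕ) < (v:ℕ) := par_lt r m v hm (by omega)
        have hp : par r m (v:ℕ) < n := lt_trans hlt v.isLt
        have hadj : (spider n r m).Adj v ⟨par r m (v:ℕ), hp⟩ := by
          rw [spider_adj]
          exact ⟨by simp; omega, Or.inl rfl⟩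
        exact hadj.reachable.trans (ih _ (by simp; omega))
  rw [SimpleGraph.connected_iff]
  refine ⟨fun u v => (key u u le_rfl).trans (key v v le_rfl).symm, ⟨⟨0, h0⟩⟩⟩

lemma spider_isTree {n r m : ℕ} (hm : 1 ≤ m) (hn : 1 ≤ n) :
    (spider n r m).IsTree :=
  ⟨spider_connected hm hn, spider_isAcyclic⟩


def natNbhd (r m n v : ℕ) : Finset ℕ :=
  if v = 0 then {1}
  else if v = r then insert (r-1) (insert (r+1) (Finset.Ico (2*r+1) (2*r+1+m)))
  else if v < 2*r then {v-1, v+1}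
  else if v = 2*r then {2*r-1}
  else if v + m < n then {par r m v, v + m}
  else {par r m v}

section
variable {n r m L : ℕ} (hr : 1 ≤ r) (hm : 1 ≤ m) (hLm : m ≤ L) (hLr : L ≤ m*r)
  (hn : n = 2*r+1+L)

include hr hm hLm hLr hn

lemma natNbhd_lt (v : ℕ) (hv : v < n) : ∀ u ∈ natNbhd r m n v, u < n := by
  intro u hu
  unfold natNbhd at hu
  unfold par at hu
  split_ifs at hu <;>
    simp only [Finset.mem_insert, Finset.mem_singleton, Finset.mem_Ico] at hu <;> omega

lemma adj_iff_mem (v u : Fin n) :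
    (spider n r m).Adj v u ↔ (u:ℕ) ∈ natNbhd r m n (v:ℕ) := by
  have hu := u.isLt; have hv := v.isLt
  rw [spider_adj]
  unfold natNbhd par
  split_ifs <;>
    simp only [Finset.mem_insert, Finset.mem_singleton, Finset.mem_Ico] <;> omega

lemma spider_nbhd (v : Fin n) :
    (spider n r m).neighborFinset v = (natNbhd r m n (v:ℕ)).attachFin
      (natNbhd_lt hr hm hLm hLr hn (v:ℕ) v.isLt) := by
  ext u
  rw [SimpleGraph.mem_neighborFinset, Finset.mem_attachFin]
  exact adj_iff_mem hr hm hLm hLr hn v u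

lemma spider_degree (v : Fin n) :
    (spider n r m).degree v = (natNbhd r m n (v:ℕ)).card := by
  rw [← SimpleGraph.card_neighborFinset_eq_degree,
    spider_nbhd hr hm hLm hLr hn, Finset.card_attachFin]

lemma natNbhd_card_eq_one_iff (v : ℕ) (hv : v < n) :
    (natNbhd r m n v).card = 1 ↔ (v = 0 ∨ v = 2*r ∨ 2*r+1+(L-m) ≤ v) := by
  unfold natNbhd
  split_ifs with h1 h2 h3 h4 h5
  · simp; omega
  · rw [Finset.card_insert_of_notMem (by
        simp only [Finset.mem_insert, Finset.mem_Ico]; omega),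
      Finset.card_insert_of_notMem (by simp only [Finset.mem_Ico]; omega),
      Nat.card_Ico]
    omega
  · rw [Finset.card_insert_of_notMem (by simp only [Finset.mem_singleton]; omega),
      Finset.card_singleton]
    omega
  · simp; omega
  · rw [Finset.card_insert_of_notMem (by
        simp only [Finset.mem_singleton]
        have := par_le r m v
        omega),
      Finset.card_singleton]
    omega
  · simp; omega

def Bnat (r m L n : ℕ) : Finset ℕ := insert 0 (insert (2*r) (Finset.Ico (2*r+1+(L-m)) n))

lemma Bnat_lt : ∀ u ∈ Bnat r m L n, u < n := by
  intro u hu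
  unfold Bnat at hu
  simp only [Finset.mem_insert, Finset.mem_Ico] at hu
  omega

lemma leaves_eq : leavesFinset (spider n r m) = (Bnat r m L n).attachFin
    (Bnat_lt hr hm hLm hLr hn) := by
  ext v
  rw [leavesFinset, Finset.mem_filter, Finset.mem_attachFin]
  simp only [Finset.mem_univ, true_and]
  rw [spider_degree hr hm hLm hLr hn,
    natNbhd_card_eq_one_iff hr hm hLm hLr hn (v:ℕ) v.isLt]
  unfold Bnat
  simp only [Finset.mem_insert, Finset.mem_Ico]
  have := v.isLt
  omega

lemma Bnat_card : (Bnat r m L n).card = m + 2 := by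
  unfold Bnat
  rw [Finset.card_insert_of_notMem (by
      simp only [Finset.mem_insert, Finset.mem_Ico]; omega),
    Finset.card_insert_of_notMem (by simp only [Finset.mem_Ico]; omega),
    Nat.card_Ico]
  omega

lemma leaves_card : (leavesFinset (spider n r m)).card = m + 2 := by
  rw [leaves_eq hr hm hLm hLr hn, Finset.card_attachFin,
    Bnat_card hr hm hLm hLr hn]

end

lemma chain_bound (g : ℕ → ℝ) (d r : ℕ) (hd : 1 ≤ d) (hdr : d ≤ r) :
    (g d - g 0)^2 / r ≤ ∑ i ∈ Finset.range d, (g (i+1) - g i)^2 := by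
  have hr0 : (0:ℝ) < r := by
    have : 1 ≤ r := le_trans hd hdr
    exact_mod_cast Nat.lt_of_lt_of_le Nat.zero_lt_one this
  rw [div_le_iff₀ hr0]
  have htel : g d - g 0 = ∑ i ∈ Finset.range d, (g (i+1) - g i) :=
    (Finset.sum_range_sub g d).symm
  calc (g d - g 0)^2 = (∑ i ∈ Finset.range d, (g (i+1) - g i))^2 := by rw [htel]
    _ ≤ (Finset.range d).card * ∑ i ∈ Finset.range d, (g (i+1) - g i)^2 :=
        sq_sum_le_card_mul_sum_sq
    _ ≤ (∑ i ∈ Finset.range d, (g (i+1) - g i)^2) * r := by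
        rw [Finset.card_range, mul_comm]
        apply mul_le_mul_of_nonneg_left
        · exact_mod_cast hdr
        · exact Finset.sum_nonneg fun i _ => sq_nonneg _

def emb (n : ℕ) [NeZero n] (v : ℕ) : Fin n :=
  ⟨v % n, Nat.mod_lt _ (Nat.pos_of_ne_zero (NeZero.ne n))⟩

lemma emb_val {n : ℕ} [NeZero n] {v : ℕ} (h : v < n) : ((emb n v : Fin n) : ℕ) = v :=
  Nat.mod_eq_of_lt h

lemma sum_attachFin {n : ℕ} [NeZero n] (s : Finset ℕ) (h : ∀ v ∈ s, v < n)
    (g : Fin n → ℝ) : ∑ x ∈ s.attachFin h, g x = ∑ v ∈ s, g (emb n v) := by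
  refine Finset.sum_bij' (fun (x : Fin n) _ => (x:ℕ)) (fun v hv => emb n v) ?_ ?_ ?_ ?_ ?_
  · intro a ha; exact (Finset.mem_attachFin _).1 ha
  · intro v hv; rw [Finset.mem_attachFin, emb_val (h v hv)]; exact hv
  · intro a ha; exact Fin.ext (emb_val a.isLt)
  · intro v hv; exact emb_val (h v hv)
  · intro a ha; congr 1; exact Fin.ext (emb_val a.isLt).symm

section
variable {n r m L : ℕ} [NeZero n] (hr : 1 ≤ r) (hm : 1 ≤ m) (hLm : m ≤ L) (hLr : L ≤ m*r)
  (hn : n = 2*r+1+L)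

include hr hm hLm hLr hn

lemma energy_eq (f : Fin n → ℝ) :
    dirichletEnergy (spider n r m) f =
      ∑ v ∈ Finset.Ico 1 n, (f (emb n v) - f (emb n (par r m v)))^2 := by
  have hpar : ∀ x : Fin n, par r m (x:ℕ) < n := fun x => lt_of_le_of_lt (par_le r m _) x.isLt
  have key : ∀ x y : Fin n, (if (spider n r m).Adj x y then (f x - f y)^2 else 0) =
      (if ((x:ℕ) ≠ 0 ∧ y = emb n (par r m (x:ℕ))) then (f x - f y)^2 else 0) +
      (if ((y:ℕ) ≠ 0 ∧ x = emb n (par r m (y:ℕ))) then (f x - f y)^2 else 0) := by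
    intro x y
    have hiff : (spider n r m).Adj x y ↔
        ((x:ℕ) ≠ 0 ∧ y = emb n (par r m (x:ℕ))) ∨ ((y:ℕ) ≠ 0 ∧ x = emb n (par r m (y:ℕ))) := by
      rw [spider_adj]
      constructor
      · rintro ⟨hne, h | h⟩
        · rcases Nat.eq_zero_or_pos (x:ℕ) with h0 | h0
          · exfalso; rw [h0] at h; unfold par at h; simp at h; omega
          · exact Or.inl ⟨by omega, Fin.ext (by rw [emb_val (hpar x), ← h])⟩
        · rcases Nat.eq_zero_or_pos (y:ℕ) with h0 | h0
          · exfalso; rw [h0] at h; unfold par at h; simp at h; omega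
          · exact Or.inr ⟨by omega, Fin.ext (by rw [emb_val (hpar y), ← h])⟩
      · rintro (⟨h0, rfl⟩ | ⟨h0, rfl⟩)
        · have := par_lt r m (x:ℕ) hm (by omega)
          refine ⟨by rw [emb_val (hpar x)]; omega, Or.inl (by rw [emb_val (hpar x)])⟩
        · have := par_lt r m (y:ℕ) hm (by omega)
          refine ⟨by rw [emb_val (hpar y)]; omega, Or.inr (by rw [emb_val (hpar y)])⟩
    have hexcl : ¬(((x:ℕ) ≠ 0 ∧ y = emb n (par r m (x:ℕ))) ∧
        ((y:ℕ) ≠ 0 ∧ x = emb n (par r m (y:ℕ)))) := by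
      rintro ⟨⟨hx0, hy⟩, ⟨hy0, hx⟩⟩
      have h1 : (y:ℕ) = par r m (x:ℕ) := by rw [hy, emb_val (hpar x)]
      have h2 : (x:ℕ) = par r m (y:ℕ) := by rw [hx, emb_val (hpar y)]
      have := par_lt r m (x:ℕ) hm (by omega)
      have := par_lt r m (y:ℕ) hm (by omega)
      omega
    rw [if_congr hiff rfl rfl]
    rcases Classical.em ((x:ℕ) ≠ 0 ∧ y = emb n (par r m (x:ℕ))) with h1|h1 <;>
      rcases Classical.em ((y:ℕ) ≠ 0 ∧ x = emb n (par r m (y:ℕ))) with h2|h2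
    · exact absurd ⟨h1, h2⟩ hexcl
    · rw [if_pos (Or.inl h1), if_pos h1, if_neg h2]; ring
    · rw [if_pos (Or.inr h2), if_neg h1, if_pos h2]; ring
    · rw [if_neg (by tauto), if_neg h1, if_neg h2]; ring
  unfold dirichletEnergy
  have hsplit : ∑ x : Fin n, ∑ y : Fin n, (if (spider n r m).Adj x y then (f x - f y)^2 else 0)
      = (∑ x : Fin n, ∑ y : Fin n,
          (if ((x:ℕ) ≠ 0 ∧ y = emb n (par r m (x:ℕ))) then (f x - f y)^2 else 0)) +
        (∑ x : Fin n, ∑ y : Fin n,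
          (if ((y:ℕ) ≠ 0 ∧ x = emb n (par r m (y:ℕ))) then (f x - f y)^2 else 0)) := by
    rw [← Finset.sum_add_distrib]
    apply Finset.sum_congr rfl
    intro x _
    rw [← Finset.sum_add_distrib]
    apply Finset.sum_congr rfl
    intro y _
    exact key x y
  have e1 : ∀ (g : Fin n → Fin n → ℝ), (∑ x : Fin n, ∑ y : Fin n,
      (if ((x:ℕ) ≠ 0 ∧ y = emb n (par r m (x:ℕ))) then g x y else 0)) =
      ∑ x : Fin n, (if (x:ℕ) ≠ 0 then g x (emb n (par r m (x:ℕ))) else 0) := by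
    intro g
    apply Finset.sum_congr rfl
    intro x _
    by_cases h0 : (x:ℕ) ≠ 0
    · have hy : ∀ y : Fin n, (if ((x:ℕ) ≠ 0 ∧ y = emb n (par r m (x:ℕ))) then g x y else 0)
          = (if y = emb n (par r m (x:ℕ)) then g x y else 0) :=
        fun y => if_congr (and_iff_right h0) rfl rfl
      rw [Finset.sum_congr rfl (fun y _ => hy y),
        Finset.sum_ite_eq' Finset.univ (emb n (par r m (x:ℕ))) (fun y => g x y),
        if_pos (Finset.mem_univ _), if_pos h0]
    · have hy : ∀ y : Fin n, (if ((x:ℕ) ≠ 0 ∧ y = emb n (par r m (x:ℕ))) then g x y else 0)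
          = 0 := fun y => if_neg (by tauto)
      rw [Finset.sum_congr rfl (fun y _ => hy y), Finset.sum_const_zero, if_neg h0]
  have e2 : ∑ x : Fin n, ∑ y : Fin n,
      (if ((y:ℕ) ≠ 0 ∧ x = emb n (par r m (y:ℕ))) then (f x - f y)^2 else 0) =
      ∑ x : Fin n, (if (x:ℕ) ≠ 0 then (f x - f (emb n (par r m (x:ℕ))))^2 else 0) := by
    rw [Finset.sum_comm]
    rw [e1 (fun y x => (f x - f y)^2)]
    apply Finset.sum_congr rfl
    intro x _
    congr 1
    ring
  rw [hsplit, e1 (fun x y => (f x - f y)^2), e2]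
  have hhalf : ∀ a : ℝ, (a + a)/2 = a := by intro a; ring
  rw [hhalf]
  have e3 : ∑ x : Fin n, (if (x:ℕ) ≠ 0 then (f x - f (emb n (par r m (x:ℕ))))^2 else 0) =
      ∑ x : Fin n, (if (x:ℕ) ≠ 0 then (f (emb n (x:ℕ)) - f (emb n (par r m (x:ℕ))))^2 else 0) := by
    apply Finset.sum_congr rfl
    intro x _
    have : emb n (x:ℕ) = x := Fin.ext (emb_val x.isLt)
    rw [this]
  rw [e3]
  rw [Fin.sum_univ_eq_sum_range
    (fun v => if v ≠ 0 then (f (emb n v) - f (emb n (par r m v)))^2 else 0) n]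
  · rw [Finset.range_eq_Ico,
      show Finset.Ico 0 n = insert 0 (Finset.Ico 1 n) from by
        ext a; simp [Finset.mem_Ico, Finset.mem_insert]; omega,
      Finset.sum_insert (by simp)]
    simp only [ne_eq, not_true_eq_false, if_false, zero_add]
    apply Finset.sum_congr rfl
    intro v hv
    rw [Finset.mem_Ico] at hv
    rw [if_pos (by omega)]

end

lemma window_mod {a t t' mm : ℕ} (hm : 0 < mm) (h : t % mm = t' % mm)
    (h1 : a ≤ t) (h2 : t < a + mm) (h3 : a ≤ t') (h4 : t' < a + mm) : t = t' := by
  obtain ⟨q1, a1, e1, ha1⟩ : ∃ q1 a1, t = mm * q1 + a1 ∧ a1 < mm :=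
    ⟨t / mm, t % mm, (Nat.div_add_mod t mm).symm, Nat.mod_lt _ hm⟩
  obtain ⟨q2, a2, e2, ha2⟩ : ∃ q2 a2, t' = mm * q2 + a2 ∧ a2 < mm :=
    ⟨t' / mm, t' % mm, (Nat.div_add_mod t' mm).symm, Nat.mod_lt _ hm⟩
  have hm1 : t % mm = a1 := by rw [e1, Nat.mul_add_mod]; exact Nat.mod_eq_of_lt ha1
  have hm2 : t' % mm = a2 := by rw [e2, Nat.mul_add_mod]; exact Nat.mod_eq_of_lt ha2
  have ha : a1 = a2 := by omega
  rcases lt_trichotomy q1 q2 with hq | hq | hq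
  · exfalso
    have h5 : mm * (q1 + 1) ≤ mm * q2 := Nat.mul_le_mul_left mm (by omega)
    rw [Nat.mul_add, Nat.mul_one] at h5
    omega
  · subst hq; omega
  · exfalso
    have h5 : mm * (q2 + 1) ≤ mm * q1 := Nat.mul_le_mul_left mm (by omega)
    rw [Nat.mul_add, Nat.mul_one] at h5
    omega

section
variable {n r m L : ℕ} [NeZero n] (hr : 1 ≤ r) (hm : 1 ≤ m) (hLm : m ≤ L) (hLr : L ≤ m*r)
  (hn : n = 2*r+1+L)

include hr hm hLm hLr hn

/-- the vertices of the extra leg whose leaf is `2r+1+t` -/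
def leg (r m t : ℕ) : Finset ℕ :=
  (Finset.range (t/m + 1)).image (fun i => 2*r+1 + t % m + i * m)

lemma energy_lower (f : Fin n → ℝ)
    (hsum : f (emb n 0) + f (emb n (2*r))
      + ∑ t ∈ Finset.Ico (L-m) L, f (emb n (2*r+1+t)) = 0) :
    (1/(r:ℝ)) * ((f (emb n 0))^2 + (f (emb n (2*r)))^2
      + ∑ t ∈ Finset.Ico (L-m) L, (f (emb n (2*r+1+t)))^2)
      ≤ dirichletEnergy (spider n r m) f := by
  set F : ℕ → ℝ := fun v => f (emb n v) with hF
  set q : ℕ → ℝ := fun v => (F v - F (par r m v))^2 with hq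
  have hE : dirichletEnergy (spider n r m) f = ∑ v ∈ Finset.Ico 1 n, q v :=
    energy_eq hr hm hLm hLr hn f
  -- the pieces
  have hqnonneg : ∀ v, 0 ≤ q v := fun v => sq_nonneg _
  -- leg facts
  have hlegmem : ∀ t ∈ Finset.Ico (L-m) L, ∀ v ∈ leg r m t, 2*r+1 ≤ v ∧ v ≤ 2*r+1+t := by
    intro t _ v hv
    rw [leg, Finset.mem_image] at hv
    obtain ⟨i, hi, rfl⟩ := hv
    rw [Finset.mem_range] at hi
    have e1 : t % m + t / m * m = t := Nat.mod_add_div' t m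
    have e2 : i * m ≤ t / m * m := Nat.mul_le_mul_right m (by omega)
    omega
  -- leg sums
  have hlegsum : ∀ t ∈ Finset.Ico (L-m) L,
      (F (2*r+1+t) - F r)^2 / r ≤ ∑ v ∈ leg r m t, q v := by
    intro t ht
    rw [Finset.mem_Ico] at ht
    have htL : t < L := ht.2
    set g : ℕ → ℝ := fun i => if i = 0 then F r else F (2*r+1 + t % m + (i-1) * m) with hg
    have himage : ∑ v ∈ leg r m t, q v = ∑ i ∈ Finset.range (t/m + 1), (g (i+1) - g i)^2 := by
      rw [leg, Finset.sum_image (by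
        intro i _ j _ hij
        have : i * m = j * m := by simp only at hij; omega
        exact Nat.eq_of_mul_eq_mul_right (by omega) this)]
      apply Finset.sum_congr rfl
      intro i hi
      rw [Finset.mem_range] at hi
      rcases Nat.eq_zero_or_pos i with rfl | hipos
      · have hmod : t % m < m := Nat.mod_lt t (by omega)
        have hpar : par r m (2*r+1 + t % m + 0 * m) = r := by
          unfold par; split_ifs <;> omega
        simp only [hq, hg]
        rw [hpar]
        norm_num
      · obtain ⟨i', rfl⟩ : ∃ i', i = i' + 1 := ⟨i - 1, by omega⟩
        have hval : 2*r+1 + t % m + (i'+1) * m = (2*r+1 + t % m + i' * m) + m := by ring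
        have hpar : par r m ((2*r+1 + t % m + i' * m) + m) = 2*r+1 + t % m + i' * m := by
          unfold par; split_ifs <;> omega
        simp only [hq, hg, Nat.add_sub_cancel]
        rw [if_neg (Nat.succ_ne_zero _), if_neg (Nat.succ_ne_zero _), hval, hpar]
    rw [himage]
    have hbd : t / m + 1 ≤ r := by
      have h1 : t < m * r := by omega
      have h3 : t / m < r := Nat.div_lt_of_lt_mul h1
      omega
    have := chain_bound g (t/m + 1) r (Nat.le_add_left 1 _) hbd
    have hgtop : g (t/m + 1) = F (2*r+1+t) := by
      simp only [hg, Nat.add_sub_cancel, if_neg (Nat.succ_ne_zero _)]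
      have : t % m + t / m * m = t := Nat.mod_add_div' t m
      congr 1
      omega
    have hg0 : g 0 = F r := by simp only [hg, if_pos rfl]
    rw [hgtop, hg0] at this
    exact this
  -- main path sums
  have hleft : (F r - F 0)^2 / r ≤ ∑ v ∈ Finset.Ico 1 (r+1), q v := by
    have : ∑ v ∈ Finset.Ico 1 (r+1), q v = ∑ i ∈ Finset.range r, (F (i+1) - F i)^2 := by
      rw [Finset.sum_Ico_eq_sum_range]
      simp only [Nat.add_sub_cancel]
      apply Finset.sum_congr rfl
      intro i hi
      rw [Finset.mem_range] at hi
      have hpar : par r m (1+i) = i := by unfold par; split_ifs <;> omega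
      simp only [hq]
      rw [hpar, Nat.add_comm 1 i]
    rw [this]
    exact chain_bound F r r hr le_rfl
  have hright : (F (2*r) - F r)^2 / r ≤ ∑ v ∈ Finset.Ico (r+1) (2*r+1), q v := by
    set g : ℕ → ℝ := fun i => F (r + i) with hg
    have : ∑ v ∈ Finset.Ico (r+1) (2*r+1), q v = ∑ i ∈ Finset.range r, (g (i+1) - g i)^2 := by
      rw [Finset.sum_Ico_eq_sum_range]
      have hcard : 2*r+1 - (r+1) = r := by omega
      rw [hcard]
      apply Finset.sum_congr rfl
      intro i hi
      rw [Finset.mem_range] at hi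
      have hpar : par r m (r+1+i) = r + i := by unfold par; split_ifs <;> omega
      simp only [hq, hg]
      rw [hpar]
      have : r + (i+1) = r+1+i := by omega
      rw [this]
    rw [this]
    have := chain_bound g r r hr le_rfl
    have hgtop : g r = F (2*r) := by simp only [hg]; congr 1; omega
    have hg0 : g 0 = F r := by simp only [hg, Nat.add_zero]
    rw [hgtop, hg0] at this
    exact this
  -- assemble the subsets
  set T : Finset ℕ :=
    Finset.Ico 1 (2*r+1) ∪ (Finset.Ico (L-m) L).biUnion (leg r m) with hT
  have hTsub : T ⊆ Finset.Ico 1 n := by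
    intro v hv
    rw [hT, Finset.mem_union] at hv
    rcases hv with hv | hv
    · rw [Finset.mem_Ico] at hv ⊢; omega
    · rw [Finset.mem_biUnion] at hv
      obtain ⟨t, ht, hv⟩ := hv
      have := hlegmem t ht v hv
      rw [Finset.mem_Ico] at ht ⊢
      omega
  have hdisj : ∀ t1 ∈ Finset.Ico (L-m) L, ∀ t2 ∈ Finset.Ico (L-m) L, t1 ≠ t2 →
      Disjoint (leg r m t1) (leg r m t2) := by
    intro t1 ht1 t2 ht2 hne
    rw [Finset.mem_Ico] at ht1 ht2
    rw [Finset.disjoint_left]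
    intro v hv1 hv2
    rw [leg, Finset.mem_image] at hv1 hv2
    obtain ⟨i1, _, he1⟩ := hv1
    obtain ⟨i2, _, he2⟩ := hv2
    have hmm : t1 % m + i1 * m = t2 % m + i2 * m := by omega
    have h1 : (t1 % m + i1 * m) % m = t1 % m := by
      rw [Nat.add_mul_mod_self_right]
      exact Nat.mod_eq_of_lt (Nat.mod_lt _ (by omega))
    have h2 : (t2 % m + i2 * m) % m = t2 % m := by
      rw [Nat.add_mul_mod_self_right]
      exact Nat.mod_eq_of_lt (Nat.mod_lt _ (by omega))
    have : t1 % m = t2 % m := by rw [← h1, ← h2, hmm]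
    exact hne (window_mod (a := L - m) (by omega) this (by omega) (by omega) (by omega) (by omega))
  have hsplitT : ∑ v ∈ T, q v = (∑ v ∈ Finset.Ico 1 (2*r+1), q v)
      + ∑ t ∈ Finset.Ico (L-m) L, ∑ v ∈ leg r m t, q v := by
    rw [hT, Finset.sum_union, Finset.sum_biUnion hdisj]
    rw [Finset.disjoint_left]
    intro v hv1 hv2
    rw [Finset.mem_Ico] at hv1
    rw [Finset.mem_biUnion] at hv2
    obtain ⟨t, ht, hv2⟩ := hv2
    have := hlegmem t ht v hv2
    omega
  have hsplitmain : ∑ v ∈ Finset.Ico 1 (2*r+1), q v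
      = (∑ v ∈ Finset.Ico 1 (r+1), q v) + ∑ v ∈ Finset.Ico (r+1) (2*r+1), q v :=
    (Finset.sum_Ico_consecutive _ (by omega) (by omega)).symm
  have hTbound : ∑ v ∈ T, q v ≤ ∑ v ∈ Finset.Ico 1 n, q v :=
    Finset.sum_le_sum_of_subset_of_nonneg hTsub (fun v _ _ => hqnonneg v)
  have hlegtotal : ∑ t ∈ Finset.Ico (L-m) L, (F (2*r+1+t) - F r)^2 / r
      ≤ ∑ t ∈ Finset.Ico (L-m) L, ∑ v ∈ leg r m t, q v :=
    Finset.sum_le_sum hlegsum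
  -- final algebra
  have hr0 : (0:ℝ) < r := by exact_mod_cast hr
  set c := F r with hc
  set x0 := F 0 with hx0
  set x1 := F (2*r) with hx1
  set S1 := ∑ t ∈ Finset.Ico (L-m) L, F (2*r+1+t) with hS1
  set S2 := ∑ t ∈ Finset.Ico (L-m) L, (F (2*r+1+t))^2 with hS2
  set K := ((Finset.Ico (L-m) L).card : ℝ) with hK
  have hsum' : x0 + x1 + S1 = 0 := by
    simp only [hx0, hx1, hS1, hF]
    exact hsum
  have hexpand : ∑ t ∈ Finset.Ico (L-m) L, (F (2*r+1+t) - c)^2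
      = S2 - 2*c*S1 + K * c^2 := by
    have hterm : ∀ t ∈ Finset.Ico (L-m) L,
        (F (2*r+1+t) - c)^2 = (F (2*r+1+t))^2 - 2*c*(F (2*r+1+t)) + c^2 := fun t _ => by ring
    rw [Finset.sum_congr rfl hterm, Finset.sum_add_distrib, Finset.sum_sub_distrib,
      ← Finset.mul_sum, Finset.sum_const, nsmul_eq_mul]
  have hgoal_eq : (1/(r:ℝ)) * (x0^2 + x1^2 + S2) + (1/r)*((2 + K)*c^2)
      = (c - x0)^2/r + (x1 - c)^2/r
        + ∑ t ∈ Finset.Ico (L-m) L, (F (2*r+1+t) - c)^2 / r := by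
    rw [← Finset.sum_div, hexpand]
    have hS1' : S1 = -x0 - x1 := by linarith
    rw [hS1']
    field_simp
    ring
  have hKpos : (0:ℝ) ≤ (1/(r:ℝ))*((2 + K)*c^2) := by
    apply mul_nonneg (by positivity)
    apply mul_nonneg _ (sq_nonneg _)
    rw [hK]; positivity
  have hchain : (c - x0)^2/r + (x1 - c)^2/r
      + ∑ t ∈ Finset.Ico (L-m) L, (F (2*r+1+t) - c)^2 / r ≤ ∑ v ∈ Finset.Ico 1 n, q v := by
    have h1 : (c - x0)^2/r ≤ ∑ v ∈ Finset.Ico 1 (r+1), q v := by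
      have : (c - x0)^2 = (F r - F 0)^2 := by rw [hc, hx0]
      rw [this]; exact hleft
    have h2 : (x1 - c)^2/r ≤ ∑ v ∈ Finset.Ico (r+1) (2*r+1), q v := by
      have : (x1 - c)^2 = (F (2*r) - F r)^2 := by rw [hc, hx1]
      rw [this]; exact hright
    calc (c - x0)^2/r + (x1 - c)^2/r + ∑ t ∈ Finset.Ico (L-m) L, (F (2*r+1+t) - c)^2 / r
        ≤ (∑ v ∈ Finset.Ico 1 (r+1), q v) + (∑ v ∈ Finset.Ico (r+1) (2*r+1), q v)
          + ∑ t ∈ Finset.Ico (L-m) L, ∑ v ∈ leg r m t, q v := by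
          apply add_le_add (add_le_add h1 h2) hlegtotal
      _ = ∑ v ∈ T, q v := by rw [hsplitT, hsplitmain]
      _ ≤ ∑ v ∈ Finset.Ico 1 n, q v := hTbound
  rw [hE]
  have hx0eq : f (emb n 0) = x0 := by simp only [hx0, hF]
  have hx1eq : f (emb n (2*r)) = x1 := by simp only [hx1, hF]
  rw [hx0eq, hx1eq]
  calc (1/(r:ℝ)) * (x0^2 + x1^2 + S2)
      ≤ (1/(r:ℝ)) * (x0^2 + x1^2 + S2) + (1/r)*((2 + K)*c^2) := le_add_of_nonneg_right hKpos
    _ = _ := hgoal_eq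
    _ ≤ ∑ v ∈ Finset.Ico 1 n, q v := hchain

end

-- ## general helpers

lemma dirichletEnergy_nonneg {V : Type*} [Fintype V] (G : SimpleGraph V) (f : V → ℝ) :
    0 ≤ dirichletEnergy G f := by
  unfold dirichletEnergy
  apply div_nonneg _ (by norm_num)
  apply Finset.sum_nonneg
  intro x _
  apply Finset.sum_nonneg
  intro y _
  split_ifs
  · exact sq_nonneg _
  · exact le_rfl

lemma finrank_span_pair_eq_two {M : Type*} [AddCommGroup M] [Module ℝ M] {x y : M}
    (h : LinearIndependent ℝ ![x, y]) :
    Module.finrank ℝ (Submodule.span ℝ ({x, y} : Set M)) = 2 := by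
  have hrange : Set.range ![x, y] = ({x, y} : Set M) := by
    rw [Matrix.range_cons_cons_empty]
  rw [← hrange, finrank_span_eq_card h, Fintype.card_fin]

/-- restriction map to the boundary -/
noncomputable def res {V : Type*} [Fintype V] (B : Finset V) :
    (V → ℝ) →ₗ[ℝ] ({v // v ∈ B} → ℝ) :=
  LinearMap.funLeft ℝ ℝ (fun x : {v // v ∈ B} => (x : V))

lemma sum_sq_boundary {V : Type*} [Fintype V] (B : Finset V) (f : V → ℝ) :
    ∑ x ∈ B, (f x)^2 = ∑ i : {v // v ∈ B}, (res B f i)^2 := by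
  rw [← Finset.sum_coe_sort B (fun x => (f x)^2)]
  rfl

lemma sum_boundary {V : Type*} [Fintype V] (B : Finset V) (f : V → ℝ) :
    ∑ x ∈ B, f x = ∑ i : {v // v ∈ B}, res B f i := by
  rw [← Finset.sum_coe_sort B f]
  rfl

/-- a nonzero boundary restriction from a finrank-2 subspace, annihilated by a functional -/
lemma exists_mem_ker {V : Type*} [Fintype V] (B : Finset V) (F : Submodule ℝ (V → ℝ))
    (hdim : Module.finrank ℝ (F.map (res B)) = 2)
    (φ : ({v // v ∈ B} → ℝ) →ₗ[ℝ] ℝ) :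
    ∃ f ∈ F, res B f ≠ 0 ∧ φ (res B f) = 0 := by
  set W := F.map (res B) with hW
  have : ∃ g ∈ W, g ≠ 0 ∧ φ g = 0 := by
    set ψ := φ.comp W.subtype with hψ
    have hker : LinearMap.ker ψ ≠ ⊥ := by
      intro hbot
      have hinj : Function.Injective ψ := LinearMap.ker_eq_bot.1 hbot
      have := LinearMap.finrank_le_finrank_of_injective hinj
      rw [hdim, Module.finrank_self] at this
      omega
    obtain ⟨x, hxker, hxne⟩ := (Submodule.ne_bot_iff _).1 hker
    refine ⟨(x : {v // v ∈ B} → ℝ), x.2, ?_, ?_⟩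
    · intro h0
      apply hxne
      ext
      rw [h0]
      rfl
    · have := (LinearMap.mem_ker).1 hxker
      exact this
  obtain ⟨g, hgW, hgne, hgφ⟩ := this
  obtain ⟨f, hf, hfres⟩ := Submodule.mem_map.1 hgW
  exact ⟨f, hf, by rw [hfres]; exact hgne, by rw [hfres]; exact hgφ⟩

/-- the sum functional -/
noncomputable def sumφ (ι : Type*) [Fintype ι] : (ι → ℝ) →ₗ[ℝ] ℝ where
  toFun g := ∑ i, g i
  map_add' g h := by simp [Finset.sum_add_distrib]
  map_smul' a g := by simp [Finset.mul_sum]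

lemma sum_sq_pos_of_res_ne {ι : Type*} [Fintype ι] (g : ι → ℝ) (hg : g ≠ 0) :
    0 < ∑ i : ι, (g i)^2 := by
  obtain ⟨i, hi⟩ : ∃ i, g i ≠ 0 := by
    by_contra h
    push_neg at h
    exact hg (funext h)
  apply Finset.sum_pos' (fun j _ => sq_nonneg _)
  exact ⟨i, Finset.mem_univ i, lt_of_le_of_ne (sq_nonneg _) (Ne.symm (pow_ne_zero 2 hi))⟩

lemma steklov_set_nonneg {V : Type*} [Fintype V] (G : SimpleGraph V) (B : Finset V) :
    ∀ t ∈ { t : ℝ | ∃ F : Submodule ℝ (V → ℝ),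
      Module.finrank ℝ (F.map (LinearMap.funLeft ℝ ℝ (fun x : {v // v ∈ B} => (x : V)))) = 2 ∧
      ∀ f ∈ F, dirichletEnergy G f ≤ t * ∑ x ∈ B, (f x) ^ 2 }, 0 ≤ t := by
  rintro t ⟨F, hdim, hle⟩
  obtain ⟨f, hfF, hfne, -⟩ := exists_mem_ker B F hdim 0
  have hE := hle f hfF
  rw [sum_sq_boundary] at hE
  have hP : 0 < ∑ i : {v // v ∈ B}, (res B f i)^2 := sum_sq_pos_of_res_ne _ hfne
  nlinarith [dirichletEnergy_nonneg G f]

lemma dirichletEnergy_le {V : Type*} [Fintype V] (G : SimpleGraph V) (f : V → ℝ) :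
    dirichletEnergy G f ≤ 2 * (Fintype.card V) * ∑ x : V, (f x)^2 := by
  unfold dirichletEnergy
  rw [div_le_iff₀ (by norm_num : (0:ℝ) < 2)]
  have hterm : ∀ x y : V, (if G.Adj x y then (f x - f y)^2 else 0) ≤ 2*(f x)^2 + 2*(f y)^2 := by
    intro x y
    split_ifs
    · nlinarith [sq_nonneg (f x + f y)]
    · positivity
  calc ∑ x : V, ∑ y : V, (if G.Adj x y then (f x - f y)^2 else 0)
      ≤ ∑ x : V, ∑ y : V, (2*(f x)^2 + 2*(f y)^2) :=
        Finset.sum_le_sum fun x _ => Finset.sum_le_sum fun y _ => hterm x y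
    _ = 2 * (Fintype.card V) * (∑ x : V, (f x)^2) * 2 := by
        have hx : ∀ x : V, ∑ y : V, (2*(f x)^2 + 2*(f y)^2)
            = (Fintype.card V) * (2*(f x)^2) + 2*∑ y : V, (f y)^2 := by
          intro x
          rw [Finset.sum_add_distrib, Finset.sum_const, ← Finset.mul_sum,
            Finset.card_univ, nsmul_eq_mul]
        rw [Finset.sum_congr rfl (fun x _ => hx x), Finset.sum_add_distrib,
          Finset.sum_const, Finset.card_univ, nsmul_eq_mul, ← Finset.mul_sum,
          ← Finset.mul_sum]
        ring

lemma energy_affine {V : Type*} [Fintype V] (G : SimpleGraph V) (h : V → ℝ) (a c : ℝ) :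
    dirichletEnergy G (fun x => a + c * h x) = c^2 * dirichletEnergy G h := by
  unfold dirichletEnergy
  have hterm : ∀ x y : V, (if G.Adj x y then ((a + c*h x) - (a + c*h y))^2 else 0)
      = c^2 * (if G.Adj x y then (h x - h y)^2 else 0) := by
    intro x y; split_ifs <;> ring
  calc (∑ x : V, ∑ y : V, if G.Adj x y then ((a + c*h x) - (a + c*h y))^2 else 0) / 2
      = (∑ x : V, ∑ y : V, c^2 * (if G.Adj x y then (h x - h y)^2 else 0)) / 2 := by
        congr 1
        exact Finset.sum_congr rfl fun x _ => Finset.sum_congr rfl fun y _ => hterm x y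
    _ = c^2 * ((∑ x : V, ∑ y : V, if G.Adj x y then (h x - h y)^2 else 0) / 2) := by
        have hs : (∑ x : V, ∑ y : V, c^2 * (if G.Adj x y then (h x - h y)^2 else 0))
            = c^2 * ∑ x : V, ∑ y : V, (if G.Adj x y then (h x - h y)^2 else 0) := by
          rw [Finset.mul_sum]
          exact Finset.sum_congr rfl fun x _ => (Finset.mul_sum _ _ _).symm
        rw [hs]
        ring

noncomputable def f0 (n r : ℕ) [NeZero n] : Fin n → ℝ :=
  fun v => if (v:ℕ) ≤ 2*r then ((r:ℝ) - (v:ℕ))/r else 0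

section
variable {n r m L : ℕ} [NeZero n] (hr : 1 ≤ r) (hm : 1 ≤ m) (hLm : m ≤ L) (hLr : L ≤ m*r)
  (hn : n = 2*r+1+L)

include hr hm hLm hLr hn

lemma sum_over_leaves (g : Fin n → ℝ) :
    ∑ x ∈ leavesFinset (spider n r m), g x
      = g (emb n 0) + g (emb n (2*r)) + ∑ t ∈ Finset.Ico (L-m) L, g (emb n (2*r+1+t)) := by
  rw [leaves_eq hr hm hLm hLr hn, sum_attachFin]
  unfold Bnat
  rw [Finset.sum_insert (by
      simp only [Finset.mem_insert, Finset.mem_Ico]; omega),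
    Finset.sum_insert (by simp only [Finset.mem_Ico]; omega)]
  have hre : ∑ v ∈ Finset.Ico (2*r+1+(L-m)) n, g (emb n v)
      = ∑ t ∈ Finset.Ico (L-m) L, g (emb n (2*r+1+t)) := by
    rw [Finset.sum_Ico_eq_sum_range, Finset.sum_Ico_eq_sum_range]
    have hc1 : n - (2*r+1+(L-m)) = m := by omega
    have hc2 : L - (L-m) = m := by omega
    rw [hc1, hc2]
    exact Finset.sum_congr rfl fun i _ =>
      congrArg (fun z => g (emb n z)) (by omega)
  rw [hre]
  ring

lemma f0_at0 : f0 n r (emb n 0) = 1 := by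
  unfold f0
  rw [emb_val (by omega)]
  rw [if_pos (by omega)]
  have hr0 : (r:ℝ) ≠ 0 := by
    have : (0:ℝ) < r := by exact_mod_cast hr
    linarith
  simp [hr0]

lemma f0_at2r : f0 n r (emb n (2*r)) = -1 := by
  unfold f0
  rw [emb_val (by omega)]
  rw [if_pos le_rfl]
  have hr0 : (r:ℝ) ≠ 0 := by
    have : (0:ℝ) < r := by exact_mod_cast hr
    linarith
  push_cast
  field_simp
  ring

lemma f0_extra (t : ℕ) (ht : t < L) : f0 n r (emb n (2*r+1+t)) = 0 := by
  unfold f0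
  rw [emb_val (by omega)]
  rw [if_neg (by omega)]

lemma energy_f0 : dirichletEnergy (spider n r m) (f0 n r) = 2/(r:ℝ) := by
  have hr0 : (0:ℝ) < r := by exact_mod_cast hr
  rw [energy_eq hr hm hLm hLr hn]
  have hterm : ∀ v ∈ Finset.Ico 1 n, (f0 n r (emb n v) - f0 n r (emb n (par r m v)))^2
      = if v ≤ 2*r then 1/(r:ℝ)^2 else 0 := by
    intro v hv
    rw [Finset.mem_Ico] at hv
    have hparlt : par r m v < n := lt_of_le_of_lt (par_le r m v) hv.2
    have hval : ∀ w, w < n → f0 n r (emb n w) = if w ≤ 2*r then ((r:ℝ) - w)/r else 0 := by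
      intro w hw
      unfold f0
      rw [emb_val hw]
    rw [hval v hv.2, hval _ hparlt]
    by_cases hcase : v ≤ 2*r
    · have hpv : par r m v = v - 1 := by unfold par; rw [if_pos hcase]
      rw [if_pos hcase, hpv, if_pos (by omega), if_pos (by omega)]
      have hcast : ((v - 1 : ℕ) : ℝ) = (v:ℝ) - 1 := by
        have h1 : (1:ℕ) ≤ v := hv.1
        push_cast [h1]
        ring
      rw [hcast]
      field_simp
      ring
    · rw [if_neg hcase]
      by_cases hc2 : v < 2*r+1+m
      · have hpv : par r m v = r := by unfold par; rw [if_neg hcase, if_pos hc2]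
        rw [hpv, if_pos (by omega : r ≤ 2*r), if_neg hcase]
        simp
      · have hpv : par r m v = v - m := by unfold par; rw [if_neg hcase, if_neg hc2]
        rw [hpv, if_neg (by omega : ¬(v - m ≤ 2*r)), if_neg hcase]
        simp
  rw [Finset.sum_congr rfl hterm]
  rw [Finset.sum_ite, Finset.sum_const, Finset.sum_const_zero, add_zero]
  have hfil : (Finset.Ico 1 n).filter (fun v => v ≤ 2*r) = Finset.Ico 1 (2*r+1) := by
    ext a
    simp only [Finset.mem_filter, Finset.mem_Ico]
    omega
  rw [hfil, Nat.card_Ico, nsmul_eq_mul]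
  have : ((2*r+1-1 : ℕ) : ℝ) = 2*(r:ℝ) := by push_cast; ring
  rw [this]
  field_simp

lemma spider_mem : (1/(r:ℝ)) ∈ { t : ℝ | ∃ F : Submodule ℝ (Fin n → ℝ),
    Module.finrank ℝ (F.map (LinearMap.funLeft ℝ ℝ
      (fun x : {v // v ∈ leavesFinset (spider n r m)} => (x : Fin n)))) = 2 ∧
    ∀ f ∈ F, dirichletEnergy (spider n r m) f
      ≤ (1/(r:ℝ)) * ∑ x ∈ leavesFinset (spider n r m), (f x) ^ 2 } := by
  have hr0 : (0:ℝ) < r := by exact_mod_cast hr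
  set B := leavesFinset (spider n r m) with hB
  set one : Fin n → ℝ := fun _ => 1 with hone
  have h0B : emb n 0 ∈ B := by
    rw [hB, leaves_eq hr hm hLm hLr hn, Finset.mem_attachFin, emb_val (by omega)]
    unfold Bnat
    simp
  have h2rB : emb n (2*r) ∈ B := by
    rw [hB, leaves_eq hr hm hLm hLr hn, Finset.mem_attachFin, emb_val (by omega)]
    unfold Bnat
    simp
  set rmap := LinearMap.funLeft (R := ℝ) (M := ℝ) (fun x : {v // v ∈ B} => (x : Fin n))
    with hrmap
  refine ⟨Submodule.span ℝ {one, f0 n r}, ?_, ?_⟩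
  · rw [Submodule.map_span, Set.image_pair]
    apply finrank_span_pair_eq_two
    rw [LinearIndependent.pair_iff]
    intro s t hst
    have e0 := congrFun hst ⟨emb n 0, h0B⟩
    have e1 := congrFun hst ⟨emb n (2*r), h2rB⟩
    simp only [hrmap, Pi.add_apply, Pi.smul_apply, smul_eq_mul, Pi.zero_apply,
      LinearMap.funLeft_apply] at e0 e1
    rw [f0_at0 hr hm hLm hLr hn] at e0
    rw [f0_at2r hr hm hLm hLr hn] at e1
    simp only [hone] at e0 e1
    constructor <;> nlinarith [e0, e1]
  · intro f hf
    rw [Submodule.mem_span_pair] at hf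
    obtain ⟨a, c, hfeq⟩ := hf
    have hfun : f = fun x => a + c * f0 n r x := by
      rw [← hfeq]
      funext x
      simp [hone, smul_eq_mul]
    rw [hfun]
    rw [energy_affine, energy_f0 hr hm hLm hLr hn]
    rw [sum_over_leaves hr hm hLm hLr hn (g := fun x => (a + c * f0 n r x)^2)]
    rw [f0_at0 hr hm hLm hLr hn, f0_at2r hr hm hLm hLr hn]
    have hz : ∀ t ∈ Finset.Ico (L-m) L, (a + c * f0 n r (emb n (2*r+1+t)))^2 = a^2 := by
      intro t ht
      rw [Finset.mem_Ico] at ht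
      rw [f0_extra hr hm hLm hLr hn t ht.2]
      ring
    rw [Finset.sum_congr rfl hz, Finset.sum_const, Nat.card_Ico, nsmul_eq_mul]
    have hcard : ((L - (L-m) : ℕ) : ℝ) = (m:ℝ) := by
      have : L - (L-m) = m := by omega
      rw [this]
    rw [hcard]
    have key : (1/(r:ℝ)) * ((a + c*1)^2 + (a + c*(-1))^2 + (m:ℝ)*a^2) - c^2*(2/(r:ℝ))
        = (1/(r:ℝ))*((2+(m:ℝ))*a^2) := by
      field_simp
      ring
    have pos : 0 ≤ (1/(r:ℝ))*((2+(m:ℝ))*a^2) := by positivity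
    linarith

lemma spider_lb : ∀ t ∈ { t : ℝ | ∃ F : Submodule ℝ (Fin n → ℝ),
    Module.finrank ℝ (F.map (LinearMap.funLeft ℝ ℝ
      (fun x : {v // v ∈ leavesFinset (spider n r m)} => (x : Fin n)))) = 2 ∧
    ∀ f ∈ F, dirichletEnergy (spider n r m) f
      ≤ t * ∑ x ∈ leavesFinset (spider n r m), (f x) ^ 2 }, 1/(r:ℝ) ≤ t := by
  rintro t ⟨F, hdim, hle⟩
  set B := leavesFinset (spider n r m) with hB
  obtain ⟨f, hfF, hfne, hfφ⟩ := exists_mem_ker B F hdim (sumφ _)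
  have hE := hle f hfF
  have hsum0 : ∑ x ∈ B, f x = 0 := by
    rw [sum_boundary]
    exact hfφ
  have h1 : f (emb n 0) + f (emb n (2*r))
      + ∑ t' ∈ Finset.Ico (L-m) L, f (emb n (2*r+1+t')) = 0 := by
    rw [← sum_over_leaves hr hm hLm hLr hn f]
    exact hsum0
  have hlow := energy_lower hr hm hLm hLr hn f h1
  have hT : ∑ x ∈ B, (f x)^2 = (f (emb n 0))^2 + (f (emb n (2*r)))^2
      + ∑ t' ∈ Finset.Ico (L-m) L, (f (emb n (2*r+1+t')))^2 :=
    sum_over_leaves hr hm hLm hLr hn (g := fun x => (f x)^2)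
  have hP : 0 < ∑ x ∈ B, (f x)^2 := by
    rw [sum_sq_boundary]
    exact sum_sq_pos_of_res_ne _ hfne
  rw [← hT] at hlow
  have h2 : (1/(r:ℝ)) * (∑ x ∈ B, (f x)^2) ≤ t * (∑ x ∈ B, (f x)^2) :=
    le_trans hlow hE
  exact le_of_mul_le_mul_right h2 hP

lemma spider_steklov :
    steklovEig (spider n r m) (leavesFinset (spider n r m)) 2 = 1/(r:ℝ) := by
  unfold steklovEig
  exact IsLeast.csInf_eq ⟨spider_mem hr hm hLm hLr hn, spider_lb hr hm hLm hLr hn⟩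

end

lemma steklov_le {V : Type*} [Fintype V] (G : SimpleGraph V) (B : Finset V)
    (hB : 1 < B.card) : steklovEig G B 2 ≤ 2 * (Fintype.card V : ℝ) := by
  obtain ⟨u, hu, v, hv, huv⟩ := Finset.one_lt_card.1 hB
  set du : V → ℝ := fun x => if x = u then 1 else 0 with hdu
  set dv : V → ℝ := fun x => if x = v then 1 else 0 with hdv
  apply csInf_le ⟨0, steklov_set_nonneg G B⟩
  refine ⟨Submodule.span ℝ {du, dv}, ?_, ?_⟩
  · rw [Submodule.map_span, Set.image_pair]
    apply finrank_span_pair_eq_two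
    rw [LinearIndependent.pair_iff]
    intro s t hst
    have e0 := congrFun hst ⟨u, hu⟩
    have e1 := congrFun hst ⟨v, hv⟩
    simp only [Pi.add_apply, Pi.smul_apply, smul_eq_mul, Pi.zero_apply,
      LinearMap.funLeft_apply, hdu, hdv] at e0 e1
    rw [if_neg huv] at e0
    rw [if_neg (Ne.symm huv)] at e1
    simp only [if_true, mul_one, mul_zero, add_zero, zero_add] at e0 e1
    exact ⟨e0, e1⟩
  · intro f hf
    rw [Submodule.mem_span_pair] at hf
    obtain ⟨a, c, hfeq⟩ := hf
    have hsq : ∀ x : V, (f x)^2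
        = (if x = u then a^2 else 0) + (if x = v then c^2 else 0) := by
      intro x
      rw [← hfeq]
      simp only [Pi.add_apply, Pi.smul_apply, smul_eq_mul, hdu, hdv]
      by_cases h1 : x = u <;> by_cases h2 : x = v
      · exact absurd (h1.symm.trans h2) huv
      · rw [if_pos h1, if_neg h2, if_pos h1, if_neg h2]; ring
      · rw [if_neg h1, if_pos h2, if_neg h1, if_pos h2]; ring
      · rw [if_neg h1, if_neg h2, if_neg h1, if_neg h2]; ring
    have hsumV : ∑ x : V, (f x)^2 = a^2 + c^2 := by
      rw [Finset.sum_congr rfl (fun x _ => hsq x), Finset.sum_add_distrib,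
        Finset.sum_ite_eq' Finset.univ u (fun _ => a^2),
        Finset.sum_ite_eq' Finset.univ v (fun _ => c^2),
        if_pos (Finset.mem_univ u), if_pos (Finset.mem_univ v)]
    have hsumB : ∑ x ∈ B, (f x)^2 = a^2 + c^2 := by
      rw [Finset.sum_congr rfl (fun x _ => hsq x), Finset.sum_add_distrib,
        Finset.sum_ite_eq' B u (fun _ => a^2),
        Finset.sum_ite_eq' B v (fun _ => c^2),
        if_pos hu, if_pos hv]
    rw [hsumB]
    calc dirichletEnergy G f ≤ 2 * (Fintype.card V) * ∑ x : V, (f x)^2 :=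
          dirichletEnergy_le G f
      _ = 2 * (Fintype.card V : ℝ) * (a^2 + c^2) := by rw [hsumV]

end Stmt13



open Stmt13

/-- Let `b ≥ 3` and `r ≥ 1` be integers, and let `n` be an integer with
`2r + b - 1 ≤ n ≤ br + 1`. Then there exists a tree with `b` leaves and `n` vertices whose
first nontrivial Steklov eigenvalue equals `1/r`; in particular `σ_{2,max}(b,n) ≥ 1/r`. -/
theorem stmt13 (b r n : ℕ) (hb : 3 ≤ b) (hr : 1 ≤ r)
    (hn1 : 2 * r + b - 1 ≤ n) (hn2 : n ≤ b * r + 1) :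
    (∃ G : SimpleGraph (Fin n), G.IsTree ∧ (leavesFinset G).card = b ∧
      steklovEig G (leavesFinset G) 2 = 1 / (r : ℝ)) ∧
    1 / (r : ℝ) ≤ sigmaMax 2 b n := by
  set m := b - 2 with hmdef
  set L := n - 1 - 2*r with hLdef
  haveI : NeZero n := ⟨by omega⟩
  have hm : 1 ≤ m := by omega
  have hb2 : b = m + 2 := by omega
  have hbr : b * r = m*r + 2*r := by rw [hb2]; ring
  have hLm : m ≤ L := by omega
  have hLr : L ≤ m*r := by omega
  have hnn : n = 2*r+1+L := by omega
  have htree : (spider n r m).IsTree := spider_isTree hm (by omega)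
  have hcard : (leavesFinset (spider n r m)).card = b := by
    rw [leaves_card hr hm hLm hLr hnn]; omega
  have heig := spider_steklov hr hm hLm hLr hnn
  constructor
  · exact ⟨spider n r m, htree, hcard, heig⟩
  · unfold sigmaMax
    apply le_csSup
    · refine ⟨2*(n:ℝ), ?_⟩
      rintro s ⟨G, hGt, hGc, rfl⟩
      have hle := steklov_le G (leavesFinset G) (by rw [hGc]; omega)
      rwa [Fintype.card_fin] at hle
    · exact ⟨spider n r m, htree, hcard, heig.symm⟩
end

section
/- Let G = (V,E) be a finite connected simple graph with nonempty boundary B ⊆ V such that B is an independent set of G (no edge of G joins two vertices of B). Let d_1 ≤ d_2 ≤ ⋯ ≤ d_{|B|} be the degrees of the boundary vertices listed in increasing order. Then σ_k(G,B) ≤ d_k for every k = 1, 2, …, |B|. -/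
open scoped BigOperators
open Classical

lemma dirichletEnergy_nonneg {V : Type*} [Fintype V] (G : SimpleGraph V) (f : V → ℝ) :
    0 ≤ dirichletEnergy G f := by
  unfold dirichletEnergy
  apply div_nonneg _ (by norm_num)
  refine Finset.sum_nonneg fun x _ => Finset.sum_nonneg fun y _ => ?_
  split <;> positivity

/-- Let `G = (V,E)` be a finite connected simple graph with nonempty
boundary `B ⊆ V` such that `B` is an independent set of `G`. Let `d₁ ≤ d₂ ≤ ⋯ ≤ d_{|B|}`
be the degrees of the boundary vertices listed in increasing order. Then `σ_k(G,B) ≤ d_k`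
for every `k = 1, 2, …, |B|`. -/
theorem stmt14 {V : Type*} [Fintype V] [DecidableEq V] (G : SimpleGraph V)
    [DecidableRel G.Adj] (hconn : G.Connected) (B : Finset V) (hB : B.Nonempty)
    (hind : ∀ x ∈ B, ∀ y ∈ B, ¬ G.Adj x y)
    (k : ℕ) (hk1 : 1 ≤ k) (hk2 : k ≤ B.card) :
    steklovEig G B k ≤
      (((B.val.map fun v => G.degree v).sort (· ≤ ·)).getD (k - 1) 0 : ℝ) := by
  classical
  set n := B.card with hn
  have hn0 : 0 < n := Finset.card_pos.mpr hB
  let e : Fin n ≃ {v // v ∈ B} := B.equivFin.symm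
  let g : Fin n → ℕ := fun i => G.degree (e i : V)
  let σ := Tuple.sort g
  have hmono : Monotone (g ∘ σ) := Tuple.monotone_sort g
  have hmult : (List.ofFn (g ∘ σ) : Multiset ℕ) = B.val.map fun v => G.degree v := by
    have h1 : List.Perm (List.ofFn (g ∘ σ)) (List.ofFn g) := σ.ofFn_comp_perm g
    rw [Multiset.coe_eq_coe.mpr h1, ← Fin.univ_val_map g]
    show Multiset.map _ _ = _
    have h2 : (Finset.univ.val : Multiset (Fin n)).map g
        = ((Finset.univ.val : Multiset (Fin n)).map e).map
          (fun v : {v // v ∈ B} => G.degree (v : V)) := by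
      rw [Multiset.map_map]; rfl
    rw [h2, Multiset.map_univ_val_equiv]
    rw [Finset.univ_eq_attach, Finset.attach_val]
    rw [show (fun v : {v // v ∈ B} => G.degree (v : V))
      = (fun v => G.degree v) ∘ (Subtype.val) from rfl,
      ← Multiset.map_map, Multiset.attach_map_val]
  have hlist : (B.val.map fun v => G.degree v).sort (· ≤ ·) = List.ofFn (g ∘ σ) := by
    apply List.Perm.eq_of_pairwise' (Multiset.pairwise_sort _ _)
      (List.sortedLE_ofFn_iff.mpr hmono).pairwise
    rw [← Multiset.coe_eq_coe, Multiset.sort_eq, hmult]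
  -- the k-th smallest degree
  have hk1n : k - 1 < n := by omega
  let i₀ : Fin n := ⟨k - 1, hk1n⟩
  set d : ℕ := g (σ i₀) with hd
  have hgetD : ((B.val.map fun v => G.degree v).sort (· ≤ ·)).getD (k - 1) 0 = d := by
    rw [hlist, List.getD_eq_getElem _ _ (by simpa using hk1n), List.getElem_ofFn]
    rfl
  rw [hgetD]
  -- the k smallest-degree boundary vertices
  let w : Fin k → V := fun j => (e (σ (Fin.castLE hk2 j)) : V)
  have hwinj : Function.Injective w := by
    intro a b hab
    have := e.injective (Subtype.ext hab)
    have := σ.injective this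
    exact Fin.castLE_injective hk2 this
  have hwB : ∀ j, w j ∈ B := fun j => (e (σ (Fin.castLE hk2 j))).2
  have hwdeg : ∀ j, G.degree (w j) ≤ d := by
    intro j
    have : (g ∘ σ) (Fin.castLE hk2 j) ≤ (g ∘ σ) i₀ := by
      apply hmono
      simp only [Fin.le_def, Fin.coe_castLE, i₀]
      omega
    exact this
  let S : Finset V := Finset.univ.image w
  have hSB : S ⊆ B := by
    intro v hv
    obtain ⟨j, _, rfl⟩ := Finset.mem_image.mp hv
    exact hwB j
  have hdegS : ∀ v ∈ S, G.degree v ≤ d := by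
    intro v hv
    obtain ⟨j, _, rfl⟩ := Finset.mem_image.mp hv
    exact hwdeg j
  -- the test subspace
  let b : Fin k → (V → ℝ) := fun j => Pi.single (w j) 1
  let F : Submodule ℝ (V → ℝ) := Submodule.span ℝ (Set.range b)
  let L := LinearMap.funLeft ℝ ℝ (fun x : {v // v ∈ B} => (x : V))
  let wB : Fin k → {v // v ∈ B} := fun j => ⟨w j, hwB j⟩
  have hwBinj : Function.Injective wB := fun a b h => hwinj (congrArg Subtype.val h)
  have hLb : ∀ j, L (b j) = (Pi.single (wB j) (1 : ℝ) : {v // v ∈ B} → ℝ) := by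
    intro j
    ext x
    simp only [L, b, LinearMap.funLeft_apply]
    rw [Pi.single_apply, Pi.single_apply]
    by_cases h : (x : V) = w j
    · rw [if_pos h, if_pos (Subtype.ext h)]
    · rw [if_neg h, if_neg (fun hc => h (congrArg Subtype.val hc))]
  -- rank
  have hrank : Module.finrank ℝ (F.map L) = k := by
    have : F.map L = Submodule.span ℝ
        (Set.range fun j => (Pi.single (wB j) (1:ℝ) : {v // v ∈ B} → ℝ)) := by
      rw [Submodule.map_span, ← Set.range_comp]
      congr 1
      ext v; constructor
      · rintro ⟨j, rfl⟩; exact ⟨j, (hLb j).symm⟩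
      · rintro ⟨j, rfl⟩; exact ⟨j, hLb j⟩
    rw [this]
    have hli : LinearIndependent ℝ
        (fun j => (Pi.single (wB j) (1:ℝ) : {v // v ∈ B} → ℝ)) := by
      have h1 : LinearIndependent ℝ
          (fun i : {v // v ∈ B} => (Pi.single i (1:ℝ) : {v // v ∈ B} → ℝ)) := by
        have h2 := (Pi.basisFun ℝ {v // v ∈ B}).linearIndependent
        have h3 : ⇑(Pi.basisFun ℝ {v // v ∈ B})
            = fun i => (Pi.single i (1:ℝ) : {v // v ∈ B} → ℝ) := by
          funext i; rw [Pi.basisFun_apply]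
        rwa [h3] at h2
      exact h1.comp wB hwBinj
    rw [finrank_span_eq_card hli, Fintype.card_fin]
  -- support
  have hsupp : ∀ f ∈ F, ∀ x, x ∉ S → f x = 0 := by
    intro f hf x hx
    have hle : F ≤ LinearMap.ker (LinearMap.funLeft ℝ ℝ
        (fun x : {x : V // x ∉ S} => (x : V))) := by
      rw [Submodule.span_le]
      rintro _ ⟨j, rfl⟩
      rw [SetLike.mem_coe, LinearMap.mem_ker]
      ext y
      simp only [LinearMap.funLeft_apply, b, Pi.zero_apply]
      rw [Pi.single_apply, if_neg]
      intro hc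
      exact y.2 (hc ▸ Finset.mem_image_of_mem w (Finset.mem_univ j))
    have := hle hf
    rw [LinearMap.mem_ker] at this
    exact congrFun this ⟨x, hx⟩
  -- energy bound
  have henergy : ∀ f ∈ F, dirichletEnergy G f ≤ (d : ℝ) * ∑ x ∈ B, (f x) ^ 2 := by
    intro f hf
    have h0 := hsupp f hf
    have key : ∀ x y, G.Adj x y → (f x - f y) ^ 2 = f x ^ 2 + f y ^ 2 := by
      intro x y hxy
      have : f x = 0 ∨ f y = 0 := by
        by_cases hx : x ∈ S
        · by_cases hy : y ∈ S
          · exact absurd hxy (hind x (hSB hx) y (hSB hy))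
          · exact Or.inr (h0 y hy)
        · exact Or.inl (h0 x hx)
      rcases this with h | h <;> rw [h] <;> ring
    have hsum_eq : (∑ x : V, ∑ y : V, if G.Adj x y then (f x - f y) ^ 2 else 0)
        = 2 * ∑ x : V, (f x) ^ 2 * (G.degree x : ℝ) := by
      have step1 : ∀ x y : V, (if G.Adj x y then (f x - f y) ^ 2 else 0)
          = (if G.Adj x y then f x ^ 2 else 0) + (if G.Adj x y then f y ^ 2 else 0) := by
        intro x y
        by_cases h : G.Adj x y
        · simp only [if_pos h]; rw [key x y h]
        · simp [h]
      simp_rw [step1, Finset.sum_add_distrib]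
      have inner : ∀ x : V, (∑ y : V, if G.Adj x y then f x ^ 2 else 0)
          = (f x) ^ 2 * (G.degree x : ℝ) := by
        intro x
        rw [← Finset.sum_filter, Finset.sum_const, ← SimpleGraph.neighborFinset_eq_filter,
          SimpleGraph.card_neighborFinset_eq_degree, nsmul_eq_mul, mul_comm]
      have flip : (∑ x : V, ∑ y : V, if G.Adj x y then f y ^ 2 else 0)
          = ∑ x : V, (f x) ^ 2 * (G.degree x : ℝ) := by
        rw [Finset.sum_comm]
        refine Finset.sum_congr rfl fun y _ => ?_
        have hsw : (∑ x : V, if G.Adj x y then f y ^ 2 else 0)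
            = ∑ x : V, if G.Adj y x then f y ^ 2 else 0 := by
          refine Finset.sum_congr rfl fun x _ => ?_
          by_cases h : G.Adj x y
          · rw [if_pos h, if_pos h.symm]
          · rw [if_neg h, if_neg fun hc => h hc.symm]
        rw [hsw]
        exact inner y
      rw [flip]
      rw [Finset.sum_congr rfl fun x _ => inner x]
      ring
    have hdeg_bound : ∑ x : V, (f x) ^ 2 * (G.degree x : ℝ) ≤ (d : ℝ) * ∑ x ∈ B, (f x) ^ 2 := by
      have hS : ∑ x : V, (f x) ^ 2 * (G.degree x : ℝ) = ∑ x ∈ S, (f x) ^ 2 * (G.degree x : ℝ) := by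
        rw [← Finset.sum_subset (Finset.subset_univ S)]
        intro x _ hx
        rw [h0 x hx]; ring
      rw [hS]
      calc ∑ x ∈ S, (f x) ^ 2 * (G.degree x : ℝ)
          ≤ ∑ x ∈ S, (f x) ^ 2 * (d : ℝ) := by
            refine Finset.sum_le_sum fun x hx => ?_
            have := hdegS x hx
            have h2 : (G.degree x : ℝ) ≤ (d : ℝ) := by exact_mod_cast this
            nlinarith [sq_nonneg (f x)]
        _ = (d : ℝ) * ∑ x ∈ S, (f x) ^ 2 := by rw [← Finset.sum_mul]; ring
        _ ≤ (d : ℝ) * ∑ x ∈ B, (f x) ^ 2 := by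
            apply mul_le_mul_of_nonneg_left _ (by positivity)
            exact Finset.sum_le_sum_of_subset_of_nonneg hSB fun x _ _ => sq_nonneg _
    have conv0 : dirichletEnergy G f
        = (∑ x : V, ∑ y : V, if G.Adj x y then (f x - f y) ^ 2 else 0) / 2 := by
      unfold dirichletEnergy
      congr!
    rw [conv0, hsum_eq]
    linarith
  -- conclude
  unfold steklovEig
  apply csInf_le
  · refine ⟨0, fun t ht => ?_⟩
    obtain ⟨F', hF'rank, hF'⟩ := ht
    have hne : F'.map L ≠ ⊥ := by
      intro hbot
      rw [hbot, finrank_bot] at hF'rank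
      omega
    obtain ⟨y, hy, hy0⟩ := Submodule.exists_mem_ne_zero_of_ne_bot hne
    obtain ⟨f, hfF', rfl⟩ := Submodule.mem_map.mp hy
    have : ∃ x : {v // v ∈ B}, f (x : V) ≠ 0 := by
      by_contra hc
      push_neg at hc
      exact hy0 (by ext x; exact hc x)
    obtain ⟨x, hx⟩ := this
    have hpos : 0 < ∑ z ∈ B, (f z) ^ 2 := by
      apply Finset.sum_pos' (fun z _ => sq_nonneg _)
      exact ⟨x, x.2, by positivity⟩
    have h1 := hF' f hfF'
    have h2 := dirichletEnergy_nonneg G f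
    nlinarith
  · exact ⟨F, hrank, henergy⟩
end
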